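/- arXiv:1007.3218 — 6 statements merged into one kernel-verified Lean document; each statement's English description precedes it below -/
import Mathlib

section
/- Let A be a *-algebra, V a complex vector space, X a nonempty set, and K : X × X → S_ℂ(V;A) a positive-definite kernel. Then there exist a complex vector space W, a ℂ-sesquilinear map ⟨·|·⟩ : W × W → A which is positive (i.e. ⟨w|w⟩ ≥ 0 in A for every w ∈ W), and a map D from X into the ℂ-linear maps from V to W, such that K(x,x')(v,v') = ⟨D(x)v | D(x')v'⟩ for all x,x' ∈ X and v,v' ∈ V. -/
/-- An element of a *-algebra is positive if it is a finite sum of elements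
of the form `star a * a`. -/
def AlgPos {A : Type} [NonUnitalNonAssocSemiring A] [Star A] (a : A) : Prop :=
  ∃ (k : ℕ) (f : Fin k → A), a = ∑ i, star (f i) * f i

/-- A ℂ-sesquilinear map `V × V → A`, conjugate-linear in the first argument and
linear in the second. -/
structure IsSesq {V A : Type} [AddCommGroup V] [Module ℂ V] [AddCommGroup A] [Module ℂ A]
    (s : V → V → A) : Prop where
  add_left : ∀ u v w, s (u + v) w = s u w + s v w
  add_right : ∀ u v w, s u (v + w) = s u v + s u w
  smul_left : ∀ (c : ℂ) (v w : V), s (c • v) w = (starRingEnd ℂ) c • s v w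
  smul_right : ∀ (c : ℂ) (v w : V), s v (c • w) = c • s v w

/-- A positive-definite kernel: all the matrices `(K (x i) (x j) (v i) (v j))_{i,j}`
are positive elements of `M_n(A)`. -/
def KernelPosDef {X V A : Type} [AddCommGroup V] [Module ℂ V]
    [NonUnitalNonAssocSemiring A] [Star A]
    (K : X → X → V → V → A) : Prop :=
  ∀ (n : ℕ) (x : Fin n → X) (v : Fin n → V),
    AlgPos (Matrix.of fun i j => K (x i) (x j) (v i) (v j))

/-- A bundled complex vector space. -/
structure CVec : Type 1 where
  W : Type
  [grp : AddCommGroup W]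
  [modC : Module ℂ W]

attribute [instance] CVec.grp CVec.modC

lemma algPos_of_fintype_sum {A : Type} [NonUnitalNonAssocSemiring A] [Star A]
    {ι : Type} [Fintype ι] (g : ι → A) : AlgPos (∑ i, star (g i) * g i) := by
  refine ⟨Fintype.card ι, g ∘ (Fintype.equivFin ι).symm, ?_⟩
  exact (Equiv.sum_comp (Fintype.equivFin ι).symm (fun i => star (g i) * g i)).symm

lemma sum_swap3 {M : Type} [AddCommMonoid M] {α β γ : Type} [Fintype α] [Fintype β] [Fintype γ]
    (f : α → β → γ → M) :
    ∑ a, ∑ b, ∑ c, f a b c = ∑ c, ∑ a, ∑ b, f a b c := by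
  calc ∑ a, ∑ b, ∑ c, f a b c
      = ∑ a, ∑ c, ∑ b, f a b c :=
        Finset.sum_congr rfl fun a _ => Finset.sum_comm
    _ = ∑ c, ∑ a, ∑ b, f a b c := Finset.sum_comm

lemma algPos_sum_entries {A : Type} [NonUnitalRing A] [StarRing A]
    {n : ℕ} (M : Matrix (Fin n) (Fin n) A) (h : AlgPos M) :
    AlgPos (∑ i, ∑ j, M i j) := by
  obtain ⟨p, N, hN⟩ := h
  have key : ∑ i, ∑ j, M i j
      = ∑ mk : Fin p × Fin n, star (∑ j, N mk.1 mk.2 j) * (∑ j, N mk.1 mk.2 j) := by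
    subst hN
    rw [Fintype.sum_prod_type]
    simp only [Matrix.sum_apply, Matrix.mul_apply, Matrix.star_apply]
    calc ∑ i : Fin n, ∑ j : Fin n, ∑ m : Fin p, ∑ k : Fin n,
          star (N m k i) * N m k j
        = ∑ m : Fin p, ∑ i : Fin n, ∑ j : Fin n, ∑ k : Fin n,
          star (N m k i) * N m k j := by
          exact sum_swap3 _
      _ = ∑ m : Fin p, ∑ k : Fin n,
            star (∑ i, N m k i) * (∑ j, N m k j) := by
          refine Finset.sum_congr rfl fun m _ => ?_
          calc ∑ i : Fin n, ∑ j : Fin n, ∑ k : Fin n, star (N m k i) * N m k j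
              = ∑ i : Fin n, ∑ k : Fin n, star (N m k i) * (∑ j, N m k j) := by
                refine Finset.sum_congr rfl fun i _ => ?_
                rw [Finset.sum_comm]
                exact Finset.sum_congr rfl fun k _ => (Finset.mul_sum _ _ _).symm
            _ = ∑ k : Fin n, star (∑ i, N m k i) * (∑ j, N m k j) := by
                rw [Finset.sum_comm]
                refine Finset.sum_congr rfl fun k _ => ?_
                rw [← Finset.sum_mul, ← star_sum]
  rw [key]
  exact algPos_of_fintype_sum _

/-- Kolmogorov decomposition for positive-definite kernels with values in spaces of
sesquilinear maps with values in a *-algebra. -/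
theorem statement0 (A V X : Type)
    [NonUnitalRing A] [Module ℂ A] [StarRing A] [StarModule ℂ A]
    [SMulCommClass ℂ A A] [IsScalarTower ℂ A A]
    [AddCommGroup V] [Module ℂ V] [Nonempty X]
    (K : X → X → V → V → A) (hsesq : ∀ x x', IsSesq (K x x'))
    (hpos : KernelPosDef K) :
    ∃ (Wb : CVec) (inn : Wb.W → Wb.W → A) (D : X → V →ₗ[ℂ] Wb.W),
      IsSesq inn ∧ (∀ w, AlgPos (inn w w)) ∧
      ∀ x x' v v', K x x' v v' = inn (D x v) (D x' v') := by
  classical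
  -- zero lemmas for K
  have hzl : ∀ x y w, K x y 0 w = 0 := by
    intro x y w
    have := (hsesq x y).smul_left 0 0 w
    simpa using this
  have hzr : ∀ x y v, K x y v 0 = 0 := by
    intro x y v
    have := (hsesq x y).smul_right 0 v 0
    simpa using this
  have hg0 : ∀ x (g : X →₀ V), (g.sum fun y w => K x y 0 w) = 0 := by
    intro x g; simp only [hzl, Finsupp.sum, Finset.sum_const_zero]
  refine ⟨⟨X →₀ V⟩, fun f g => f.sum fun x v => g.sum fun y w => K x y v w,
    fun x => Finsupp.lsingle x, ?_, ?_, ?_⟩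
  · constructor
    · intro f f' g
      rw [Finsupp.sum_add_index (fun x _ => hg0 x g)
        (fun x _ v v' => by
          rw [← Finsupp.sum_add]
          exact Finsupp.sum_congr fun y _ => (hsesq x y).add_left v v' (g y))]
    · intro f g g'
      rw [← Finsupp.sum_add]
      refine Finsupp.sum_congr fun x _ => ?_
      rw [Finsupp.sum_add_index (fun y _ => hzr x y (f x))
        (fun y _ w w' => (hsesq x y).add_right (f x) w w')]
    · intro c f g
      rw [Finsupp.sum_smul_index' (fun x => hg0 x g), Finsupp.smul_sum]
      refine Finsupp.sum_congr fun x _ => ?_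
      rw [Finsupp.smul_sum]
      exact Finsupp.sum_congr fun y _ => (hsesq x y).smul_left c (f x) (g y)
    · intro c f g
      rw [Finsupp.smul_sum]
      refine Finsupp.sum_congr fun x _ => ?_
      rw [Finsupp.sum_smul_index' (fun y => hzr x y (f x)), Finsupp.smul_sum]
      exact Finsupp.sum_congr fun y _ => (hsesq x y).smul_right c (f x) (g y)
  · intro f
    show AlgPos (f.sum fun x v => f.sum fun y w => K x y v w)
    set s := f.support with hs
    set n := s.card with hn
    set e : ↥s ≃ Fin n := s.equivFin with he
    have key : (f.sum fun x v => f.sum fun y w => K x y v w)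
        = ∑ i : Fin n, ∑ j : Fin n,
            K ((e.symm i : X)) ((e.symm j : X)) (f (e.symm i)) (f (e.symm j)) := by
      rw [Finsupp.sum]
      rw [← Finset.sum_coe_sort s]
      rw [← Equiv.sum_comp e.symm]
      refine Finset.sum_congr rfl fun i _ => ?_
      rw [Finsupp.sum, ← Finset.sum_coe_sort s, ← Equiv.sum_comp e.symm]
    rw [key]
    exact algPos_sum_entries _ (hpos n (fun i => (e.symm i : X)) (fun i => f (e.symm i)))
  · intro x x' v v'
    simp only [Finsupp.lsingle_apply]
    rw [Finsupp.sum_single_index (hg0 x _)]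
    exact (Finsupp.sum_single_index (h := fun y w => K x y v w) (hzr x x' v)).symm
end

section
/- Let A be a C*-algebra, V a right A-module, X a nonempty set, and K : X × X → S_A(V) a positive-definite A-kernel. Then there exist a Hilbert C*-module M over A and a map D : X → Lin_A(V,M) such that (i) K(x,x')(v,v') = ⟨D(x)v | D(x')v'⟩ for all x,x' ∈ X and v,v' ∈ V, and (ii) the ℂ-linear span of ⋃_{x∈X} D(x)V is dense in M. -/
/-- A right module structure (over an algebra `A`) on a complex vector space. -/
structure IsRightModule (A : Type) {V : Type} [NonUnitalRing A] [Module ℂ A]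
    [AddCommGroup V] [Module ℂ V] (sm : V → A → V) : Prop where
  add_sm : ∀ v w a, sm (v + w) a = sm v a + sm w a
  sm_add : ∀ v a b, sm v (a + b) = sm v a + sm v b
  sm_mul : ∀ v a b, sm v (a * b) = sm (sm v a) b
  smul_sm : ∀ (c : ℂ) v a, c • sm v a = sm (c • v) a
  sm_smul : ∀ (c : ℂ) v a, c • sm v a = sm v (c • a)

/-- An `A`-sesquilinear map on a right `A`-module `V`. -/
structure IsASesq {A V : Type} [NonUnitalRing A] [Module ℂ A] [StarRing A]
    [AddCommGroup V] [Module ℂ V] (sm : V → A → V) (s : V → V → A) : Prop where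
  sesq : IsSesq s
  sm_left : ∀ v v' a, s (sm v a) v' = star a * s v v'
  sm_right : ∀ v v' a, s v (sm v' a) = s v v' * a

variable (A : Type) [NonUnitalCStarAlgebra A] [PartialOrder A] [StarOrderedRing A]

/-- A bundled Hilbert C*-module over the C*-algebra `A`: a right `A`-module with an
`A`-valued inner product, complete in the norm `m ↦ ‖⟨m|m⟩‖^(1/2)` (completeness is
expressed via Cauchy sequences, with `‖⟨d|d⟩‖ < ε` equivalent to `‖⟨d|d⟩‖^(1/2) < ε^(1/2)`). -/
structure HilbertCStarModule : Type 1 where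
  M : Type
  [grp : AddCommGroup M]
  [modC : Module ℂ M]
  sm : M → A → M
  rightModule : IsRightModule A sm
  inner : M → M → A
  inner_nonneg : ∀ m, 0 ≤ inner m m
  inner_definite : ∀ m, inner m m = 0 → m = 0
  inner_add_right : ∀ m m' m'', inner m (m' + m'') = inner m m' + inner m m''
  inner_smul_right : ∀ (c : ℂ) m m', inner m (c • m') = c • inner m m'
  inner_sm_right : ∀ m m' a, inner m (sm m' a) = inner m m' * a
  inner_conj : ∀ m m', inner m m' = star (inner m' m)
  complete : ∀ u : ℕ → M,
    (∀ ε : ℝ, 0 < ε → ∃ N, ∀ j ≥ N, ∀ k ≥ N, ‖inner (u j - u k) (u j - u k)‖ < ε) →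
    ∃ m, ∀ ε : ℝ, 0 < ε → ∃ N, ∀ k ≥ N, ‖inner (u k - m) (u k - m)‖ < ε

attribute [instance] HilbertCStarModule.grp HilbertCStarModule.modC

variable {A}

/-- Density of a subset of a Hilbert C*-module with respect to the norm
`m ↦ ‖⟨m|m⟩‖^(1/2)`. -/
def DenseIn (H : HilbertCStarModule A) (S : Set H.M) : Prop :=
  ∀ m : H.M, ∀ ε : ℝ, 0 < ε → ∃ w ∈ S, ‖H.inner (m - w) (m - w)‖ < ε

/-- `f : V → M` is ℂ-linear and `A`-linear, i.e. `f ∈ Lin_A(V,M)`. -/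
structure IsLinAMap {V M : Type} [AddCommGroup V] [Module ℂ V] [AddCommGroup M] [Module ℂ M]
    (smV : V → A → V) (smM : M → A → M) (f : V → M) : Prop where
  map_add : ∀ v w, f (v + w) = f v + f w
  map_smul : ∀ (c : ℂ) v, f (c • v) = c • f v
  map_sm : ∀ v a, f (smV v a) = smM (f v) a


section KolmogorovAux

open UniformSpace

namespace KolAux

set_option linter.unusedSectionVars false

variable {W : Type}

theorem sesq_zero_left [AddCommGroup W] [Module ℂ W] {B : W → W → A} (hs : IsSesq B) (w : W) :
    B 0 w = 0 := by
  have h : B 0 w = B 0 w + B 0 w := by simpa using (hs.add_left 0 0 w).symm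
  exact (left_eq_add.mp h)

theorem sesq_zero_right [AddCommGroup W] [Module ℂ W] {B : W → W → A} (hs : IsSesq B) (w : W) :
    B w 0 = 0 := by
  have h : B w 0 = B w 0 + B w 0 := by simpa using (hs.add_right w 0 0).symm
  exact (left_eq_add.mp h)

theorem sesq_sub_left [AddCommGroup W] [Module ℂ W] {B : W → W → A} (hs : IsSesq B) (u v w : W) :
    B (u - v) w = B u w - B v w := by
  have h : B (u - v) w + B v w = B u w := by
    rw [← hs.add_left, sub_add_cancel]
  exact eq_sub_of_add_eq h

theorem sesq_sub_right [AddCommGroup W] [Module ℂ W] {B : W → W → A} (hs : IsSesq B) (u v w : W) :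
    B u (v - w) = B u v - B u w := by
  have h : B u (v - w) + B u w = B u v := by
    rw [← hs.add_right, sub_add_cancel]
  exact eq_sub_of_add_eq h

theorem rm_zero_sm [AddCommGroup W] [Module ℂ W] {sm : W → A → W} (hW : IsRightModule A sm)
    (a : A) : sm 0 a = 0 := by
  have h : sm 0 a = sm 0 a + sm 0 a := by simpa using (hW.add_sm 0 0 a).symm
  exact (left_eq_add.mp h)

theorem rm_sub_sm [AddCommGroup W] [Module ℂ W] {sm : W → A → W} (hW : IsRightModule A sm)
    (u v : W) (a : A) : sm (u - v) a = sm u a - sm v a := by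
  have h : sm (u - v) a + sm v a = sm u a := by
    rw [← hW.add_sm, sub_add_cancel]
  exact eq_sub_of_add_eq h

/-- Cauchy–Schwarz inequality for a positive-semidefinite `A`-sesquilinear form. -/
theorem cauchy_schwarz [AddCommGroup W] [Module ℂ W]
    {smW : W → A → W} {B : W → W → A} (hs : IsSesq B) (hA : IsASesq smW B)
    (hherm : ∀ f g, star (B f g) = B g f) (hnn : ∀ f, 0 ≤ B f f) (f g : W) :
    ‖B f g‖ ^ 2 ≤ ‖B f f‖ * ‖B g g‖ := by
  set b := B f g with hb
  set c := B f f with hc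
  set d := B g g with hd
  set p := star b * b with hp
  have hpnn : (0 : A) ≤ p := star_mul_self_nonneg b
  have hcsa : IsSelfAdjoint c := hherm f f
  have key : ∀ t : ℝ, 0 ≤ d - t • p - t • p + (t * t) • (star b * c * b) := by
    intro t
    have h0 := hnn (g - smW f ((t : ℂ) • b))
    have e1 : B g (smW f ((t : ℂ) • b)) = t • p := by
      rw [hA.sm_right, ← hherm f g, ← hb, mul_smul_comm, Complex.coe_smul, hp]
    have e2 : B (smW f ((t : ℂ) • b)) g = t • p := by
      rw [hA.sm_left, star_smul, Complex.star_def, Complex.conj_ofReal,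
        smul_mul_assoc, Complex.coe_smul, hp, hb]
    have e3 : B (smW f ((t : ℂ) • b)) (smW f ((t : ℂ) • b)) = (t * t) • (star b * c * b) := by
      rw [hA.sm_left, hA.sm_right, star_smul, Complex.star_def, Complex.conj_ofReal]
      rw [mul_smul_comm, smul_mul_assoc, mul_smul_comm, smul_smul, ← Complex.ofReal_mul,
        Complex.coe_smul, ← mul_assoc]
    have expand : B (g - smW f ((t : ℂ) • b)) (g - smW f ((t : ℂ) • b))
        = d - t • p - t • p + (t * t) • (star b * c * b) := by
      rw [sesq_sub_left hs, sesq_sub_right hs, sesq_sub_right hs, e1, e2, e3, ← hd]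
      abel
    rwa [expand] at h0
  have conj_le : star b * c * b ≤ ‖c‖ • p := CStarAlgebra.star_left_conjugate_le_norm_smul hcsa
  have normp : ‖p‖ = ‖b‖ ^ 2 := by
    rw [hp, CStarRing.norm_star_mul_self, sq]
  rcases eq_or_lt_of_le (norm_nonneg c) with hc0 | hcpos
  · -- `‖c‖ = 0`, hence `c = 0`; then `b = 0`.
    have hceq : c = 0 := norm_eq_zero.mp hc0.symm
    have hb0 : b = 0 := by
      by_contra hbne
      have hppos : 0 < ‖p‖ := by
        rw [normp]
        exact pow_pos (norm_pos_iff.mpr hbne) 2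
      set t : ℝ := (‖d‖ + 1) / (2 * ‖p‖) with ht
      have htpos : 0 < t := by positivity
      have hkey := key t
      have h2 : t • p + t • p ≤ d := by
        have : (0 : A) ≤ d - t • p - t • p := by
          have := key t
          rw [hceq] at this
          simpa using this
        have h' := sub_nonneg.mp this
        calc t • p + t • p ≤ (d - t • p) + t • p := add_le_add_left h' _
          _ = d := by abel
      have hle : ‖t • p + t • p‖ ≤ ‖d‖ :=
        CStarAlgebra.norm_le_norm_of_nonneg_of_le
          (by positivity) h2
      have heq : ‖t • p + t • p‖ = 2 * t * ‖p‖ := by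
        rw [← two_smul ℝ (t • p), smul_smul, norm_smul, Real.norm_of_nonneg (by positivity)]
      rw [heq] at hle
      have harith : 2 * t * ‖p‖ = ‖d‖ + 1 := by
        rw [ht]
        field_simp
      linarith
    rw [hb0, ← hc0]
    simp
  · set r := ‖c‖ with hr
    set t : ℝ := 1 / r with ht
    have h1 : (t * t) • (star b * c * b) ≤ (t * t) • (r • p) :=
      smul_le_smul_of_nonneg_left conj_le (by positivity)
    have h2 : (t * t) • (r • p) = t • p := by
      rw [smul_smul, ht]
      field_simp
    have h3 : (0 : A) ≤ d - t • p := by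
      have := key t
      calc (0 : A) ≤ d - t • p - t • p + (t * t) • (star b * c * b) := this
        _ ≤ d - t • p - t • p + (t * t) • (r • p) := add_le_add_right h1 _
        _ = d - t • p := by rw [h2]; abel
    have h4 : t • p ≤ d := sub_nonneg.mp h3
    have h5 : p ≤ r • d := by
      have := smul_le_smul_of_nonneg_left h4 (le_of_lt hcpos)
      rwa [smul_smul, ht, mul_one_div, div_self (ne_of_gt hcpos), one_smul] at this
    have h6 : ‖p‖ ≤ ‖r • d‖ := CStarAlgebra.norm_le_norm_of_nonneg_of_le hpnn h5
    rw [norm_smul, Real.norm_of_nonneg (le_of_lt hcpos)] at h6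
    rw [← normp]
    exact h6

theorem sum_comm4 {α : Type} [AddCommMonoid α] {ι₁ ι₂ ι₃ ι₄ : Type}
    [Fintype ι₁] [Fintype ι₂] [Fintype ι₃] [Fintype ι₄] (g : ι₁ → ι₂ → ι₃ → ι₄ → α) :
    ∑ a, ∑ b, ∑ c, ∑ d, g a b c d = ∑ c, ∑ d, ∑ a, ∑ b, g a b c d := by
  have h1 : ∑ a, ∑ b, ∑ c, ∑ d, g a b c d = ∑ c, ∑ a, ∑ b, ∑ d, g a b c d :=
    (Finset.sum_congr rfl fun a _ => Finset.sum_comm).trans Finset.sum_comm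
  have h2 : ∀ c, ∑ a, ∑ b, ∑ d, g a b c d = ∑ d, ∑ a, ∑ b, g a b c d := fun c =>
    (Finset.sum_congr rfl fun a _ => Finset.sum_comm).trans Finset.sum_comm
  rw [h1]
  exact Finset.sum_congr rfl fun c _ => h2 c

theorem algPos_sum {n : ℕ} (M : Matrix (Fin n) (Fin n) A) (h : AlgPos M) :
    (0 : A) ≤ ∑ i, ∑ j, M i j := by
  obtain ⟨k, C, hC⟩ := h
  have hM : ∀ i j, M i j = ∑ t, ∑ l, star (C t l i) * C t l j := by
    intro i j
    have h' := congrFun (congrFun hC i) j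
    simpa [Matrix.sum_apply, Matrix.mul_apply, Matrix.star_apply] using h'
  calc (0 : A) ≤ ∑ t, ∑ l, star (∑ i, C t l i) * ∑ j, C t l j :=
        Finset.sum_nonneg fun t _ => Finset.sum_nonneg fun l _ => star_mul_self_nonneg _
    _ = ∑ t, ∑ l, ∑ j, ∑ i, star (C t l i) * C t l j := by
        simp only [star_sum, Finset.sum_mul, Finset.mul_sum]
    _ = ∑ j, ∑ i, ∑ t, ∑ l, star (C t l i) * C t l j := sum_comm4 _
    _ = ∑ i, ∑ j, ∑ t, ∑ l, star (C t l i) * C t l j := Finset.sum_comm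
    _ = ∑ i, ∑ j, M i j := by
        exact Finset.sum_congr rfl fun i _ => Finset.sum_congr rfl fun j _ => (hM i j).symm

theorem kernel_herm {V X : Type} [AddCommGroup V] [Module ℂ V]
    (K : X → X → V → V → A) (hpos : KernelPosDef K) (x y : X) (v w : V) :
    star (K x y v w) = K y x w v := by
  obtain ⟨k, C, hC⟩ := hpos 2 ![x, y] ![v, w]
  have h01 : K x y v w = (∑ i, star (C i) * C i) 0 1 := by
    rw [← hC]
    simp
  have h10 : K y x w v = (∑ i, star (C i) * C i) 1 0 := by
    rw [← hC]
    simp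
  rw [h01, h10]
  simp only [Matrix.sum_apply, Matrix.mul_apply, Matrix.star_apply, star_sum, star_mul, star_star]

section Kernel

variable {V X : Type} [AddCommGroup V] [Module ℂ V]
variable (K : X → X → V → V → A)

/-- The sesquilinear form on `X →₀ V` induced by the kernel `K`. -/
def BK (f g : X →₀ V) : A := ∑ x ∈ f.support, ∑ y ∈ g.support, K x y (f x) (g y)

variable (smV : V → A → V)

/-- The right `A`-module structure on `X →₀ V` induced by the one on `V`. -/
noncomputable def smK (hV : IsRightModule A smV) (f : X →₀ V) (a : A) : X →₀ V :=
  f.mapRange (fun v => smV v a) (rm_zero_sm hV a)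

theorem smK_apply (hV : IsRightModule A smV) (f : X →₀ V) (a : A) (x : X) :
    smK smV hV f a x = smV (f x) a := Finsupp.mapRange_apply

theorem smK_single (hV : IsRightModule A smV) (x : X) (v : V) (a : A) :
    smK smV hV (Finsupp.single x v) a = Finsupp.single x (smV v a) := Finsupp.mapRange_single

variable (hs : ∀ x y, IsSesq (K x y))

include hs

theorem BK_eq_sum (f g : X →₀ V) {s t : Finset X} (hfs : f.support ⊆ s) (hgt : g.support ⊆ t) :
    BK K f g = ∑ x ∈ s, ∑ y ∈ t, K x y (f x) (g y) := by
  refine (Finset.sum_subset hfs fun x _ hx => ?_).trans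
    (Finset.sum_congr rfl fun x _ => Finset.sum_subset hgt fun y _ hy => ?_)
  · rw [Finsupp.notMem_support_iff.mp hx]
    exact Finset.sum_eq_zero fun y _ => sesq_zero_left (hs x y) _
  · rw [Finsupp.notMem_support_iff.mp hy]
    exact sesq_zero_right (hs x y) _

theorem BK_add_left (f f' g : X →₀ V) : BK K (f + f') g = BK K f g + BK K f' g := by
  classical
  rw [BK_eq_sum K hs (f + f') g Finsupp.support_add (subset_refl g.support),
    BK_eq_sum K hs f g Finset.subset_union_left (subset_refl g.support),
    BK_eq_sum K hs f' g Finset.subset_union_right (subset_refl g.support),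
    ← Finset.sum_add_distrib]
  refine Finset.sum_congr rfl fun x _ => ?_
  rw [← Finset.sum_add_distrib]
  refine Finset.sum_congr rfl fun y _ => ?_
  rw [Finsupp.add_apply, (hs x y).add_left]

theorem BK_add_right (f g g' : X →₀ V) : BK K f (g + g') = BK K f g + BK K f g' := by
  classical
  rw [BK_eq_sum K hs f (g + g') (subset_refl f.support) Finsupp.support_add,
    BK_eq_sum K hs f g (subset_refl f.support) Finset.subset_union_left,
    BK_eq_sum K hs f g' (subset_refl f.support) Finset.subset_union_right,
    ← Finset.sum_add_distrib]
  refine Finset.sum_congr rfl fun x _ => ?_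
  rw [← Finset.sum_add_distrib]
  refine Finset.sum_congr rfl fun y _ => ?_
  rw [Finsupp.add_apply, (hs x y).add_right]

theorem BK_smul_left (c : ℂ) (f g : X →₀ V) :
    BK K (c • f) g = (starRingEnd ℂ) c • BK K f g := by
  rw [BK_eq_sum K hs (c • f) g Finsupp.support_smul (subset_refl g.support),
    BK_eq_sum K hs f g (subset_refl f.support) (subset_refl g.support),
    Finset.smul_sum]
  refine Finset.sum_congr rfl fun x _ => ?_
  rw [Finset.smul_sum]
  refine Finset.sum_congr rfl fun y _ => ?_
  rw [Finsupp.smul_apply, (hs x y).smul_left]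

theorem BK_smul_right (c : ℂ) (f g : X →₀ V) : BK K f (c • g) = c • BK K f g := by
  rw [BK_eq_sum K hs f (c • g) (subset_refl f.support) Finsupp.support_smul,
    BK_eq_sum K hs f g (subset_refl f.support) (subset_refl g.support),
    Finset.smul_sum]
  refine Finset.sum_congr rfl fun x _ => ?_
  rw [Finset.smul_sum]
  refine Finset.sum_congr rfl fun y _ => ?_
  rw [Finsupp.smul_apply, (hs x y).smul_right]

theorem BK_single (x x' : X) (v v' : V) :
    BK K (Finsupp.single x v) (Finsupp.single x' v') = K x x' v v' := by
  rw [BK_eq_sum K hs _ _ Finsupp.support_single_subset Finsupp.support_single_subset]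
  simp

theorem BK_sm_left (hV : IsRightModule A smV) (hA : ∀ x y, IsASesq smV (K x y))
    (f g : X →₀ V) (a : A) : BK K (smK smV hV f a) g = star a * BK K f g := by
  rw [BK_eq_sum K hs (smK smV hV f a) g Finsupp.support_mapRange (subset_refl g.support),
    BK_eq_sum K hs f g (subset_refl f.support) (subset_refl g.support),
    Finset.mul_sum]
  refine Finset.sum_congr rfl fun x _ => ?_
  rw [Finset.mul_sum]
  refine Finset.sum_congr rfl fun y _ => ?_
  rw [smK_apply, (hA x y).sm_left]

theorem BK_sm_right (hV : IsRightModule A smV) (hA : ∀ x y, IsASesq smV (K x y))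
    (f g : X →₀ V) (a : A) : BK K f (smK smV hV g a) = BK K f g * a := by
  rw [BK_eq_sum K hs f (smK smV hV g a) (subset_refl f.support) Finsupp.support_mapRange,
    BK_eq_sum K hs f g (subset_refl f.support) (subset_refl g.support),
    Finset.sum_mul]
  refine Finset.sum_congr rfl fun x _ => ?_
  rw [Finset.sum_mul]
  refine Finset.sum_congr rfl fun y _ => ?_
  rw [smK_apply, (hA x y).sm_right]

theorem BK_herm (hpos : KernelPosDef K) (f g : X →₀ V) : star (BK K f g) = BK K g f := by
  unfold BK
  simp only [star_sum]
  rw [Finset.sum_comm]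
  refine Finset.sum_congr rfl fun y _ => Finset.sum_congr rfl fun x _ => ?_
  rw [kernel_herm K hpos]

theorem BK_pos (hpos : KernelPosDef K) (f : X →₀ V) : 0 ≤ BK K f f := by
  classical
  set s := f.support with hsdef
  have conv1 : ∀ G : X → A, ∑ x ∈ s, G x = ∑ i : Fin s.card, G ((s.equivFin.symm i : X)) := by
    intro G
    rw [← Finset.sum_coe_sort s G, ← Equiv.sum_comp s.equivFin.symm (fun a : s => G (a : X))]
  have h1 : BK K f f = ∑ i : Fin s.card, ∑ j : Fin s.card,
      K ((s.equivFin.symm i : X)) ((s.equivFin.symm j : X))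
        (f ((s.equivFin.symm i : X))) (f ((s.equivFin.symm j : X))) := by
    unfold BK
    rw [conv1]
    exact Finset.sum_congr rfl fun i _ => conv1 _
  have h2 := algPos_sum _ (hpos s.card (fun i => ((s.equivFin.symm i : X)))
    (fun i => f ((s.equivFin.symm i : X))))
  rw [h1]
  simpa using h2

end Kernel

section Abstract

open UniformSpace

variable (A) in
/-- The data of a pre-Hilbert C*-module structure on a seminormed space `W`. -/
structure PreHilb (W : Type) [SeminormedAddCommGroup W] [NormedSpace ℂ W] : Type where
  smW : W → A → W
  hW : IsRightModule A smW
  B : W → W → A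
  hs : IsSesq B
  hA : IsASesq smW B
  hherm : ∀ f g, star (B f g) = B g f
  hnn : ∀ f, 0 ≤ B f f
  hnorm : ∀ f, ‖B f f‖ = ‖f‖ ^ 2

variable {W : Type} [SeminormedAddCommGroup W] [NormedSpace ℂ W] (P : PreHilb A W)

theorem PreHilb.bnorm (f g : W) : ‖P.B f g‖ ≤ ‖f‖ * ‖g‖ := by
  have h := cauchy_schwarz P.hs P.hA P.hherm P.hnn f g
  rw [P.hnorm, P.hnorm] at h
  calc ‖P.B f g‖ = Real.sqrt (‖P.B f g‖ ^ 2) := (Real.sqrt_sq (norm_nonneg _)).symm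
    _ ≤ Real.sqrt ((‖f‖ * ‖g‖) ^ 2) := Real.sqrt_le_sqrt (by rw [mul_pow]; exact h)
    _ = ‖f‖ * ‖g‖ := Real.sqrt_sq (by positivity)

theorem PreHilb.smnorm (w : W) (a : A) : ‖P.smW w a‖ ≤ ‖w‖ * ‖a‖ := by
  have h : P.B (P.smW w a) (P.smW w a) = star a * (P.B w w * a) := by
    rw [P.hA.sm_right, P.hA.sm_left, mul_assoc]
  have h2 : ‖P.B (P.smW w a) (P.smW w a)‖ ≤ ‖a‖ * (‖P.B w w‖ * ‖a‖) := by
    rw [h]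
    calc ‖star a * (P.B w w * a)‖ ≤ ‖star a‖ * ‖P.B w w * a‖ := norm_mul_le _ _
      _ ≤ ‖star a‖ * (‖P.B w w‖ * ‖a‖) :=
          mul_le_mul_of_nonneg_left (norm_mul_le _ _) (norm_nonneg _)
      _ = ‖a‖ * (‖P.B w w‖ * ‖a‖) := by rw [norm_star]
  have h3 : ‖P.smW w a‖ ^ 2 ≤ (‖w‖ * ‖a‖) ^ 2 := by
    rw [← P.hnorm]
    calc ‖P.B (P.smW w a) (P.smW w a)‖ ≤ ‖a‖ * (‖P.B w w‖ * ‖a‖) := h2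
      _ = (‖w‖ * ‖a‖) ^ 2 := by rw [P.hnorm]; ring
  calc ‖P.smW w a‖ = Real.sqrt (‖P.smW w a‖ ^ 2) := (Real.sqrt_sq (norm_nonneg _)).symm
    _ ≤ Real.sqrt ((‖w‖ * ‖a‖) ^ 2) := Real.sqrt_le_sqrt h3
    _ = ‖w‖ * ‖a‖ := Real.sqrt_sq (by positivity)

theorem insep_iff (x y : W) : Inseparable x y ↔ ‖x - y‖ = 0 := by
  rw [Metric.inseparable_iff, dist_eq_norm]

/-- The form `B` descends to the separation quotient. -/
noncomputable def BQ : SeparationQuotient W → SeparationQuotient W → A :=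
  SeparationQuotient.lift₂ P.B (by
    intro a b c d hac hbd
    have h1 : ‖a - c‖ = 0 := (insep_iff a c).mp hac
    have h2 : ‖b - d‖ = 0 := (insep_iff b d).mp hbd
    have hdiff : P.B a b - P.B c d = P.B (a - c) b + P.B c (b - d) := by
      rw [sesq_sub_left P.hs, sesq_sub_right P.hs]
      abel
    have hnorm : ‖P.B a b - P.B c d‖ ≤ 0 := by
      rw [hdiff]
      calc ‖P.B (a - c) b + P.B c (b - d)‖ ≤ ‖P.B (a - c) b‖ + ‖P.B c (b - d)‖ :=
            norm_add_le _ _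
        _ ≤ ‖a - c‖ * ‖b‖ + ‖c‖ * ‖b - d‖ := add_le_add (P.bnorm _ _) (P.bnorm _ _)
        _ = 0 := by rw [h1, h2]; ring
    have := le_antisymm hnorm (norm_nonneg _)
    rwa [norm_eq_zero, sub_eq_zero] at this)

@[simp] theorem BQ_mk (a b : W) : BQ P (SeparationQuotient.mk a) (SeparationQuotient.mk b) = P.B a b :=
  SeparationQuotient.lift₂_mk _ a b

/-- The module action descends to the separation quotient. -/
noncomputable def smQ (a : A) : SeparationQuotient W → SeparationQuotient W :=
  SeparationQuotient.lift (fun w => SeparationQuotient.mk (P.smW w a)) (by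
    intro x y hxy
    rw [SeparationQuotient.mk_eq_mk, insep_iff]
    have h1 : ‖x - y‖ = 0 := (insep_iff x y).mp hxy
    have h2 : P.smW x a - P.smW y a = P.smW (x - y) a := (rm_sub_sm P.hW x y a).symm
    rw [h2]
    have := P.smnorm (x - y) a
    rw [h1, zero_mul] at this
    exact le_antisymm this (norm_nonneg _))

@[simp] theorem smQ_mk (a : A) (w : W) :
    smQ P a (SeparationQuotient.mk w) = SeparationQuotient.mk (P.smW w a) :=
  SeparationQuotient.lift_mk _ w

theorem norm_mk_sub (x y : W) :
    dist (SeparationQuotient.mk x) (SeparationQuotient.mk y) = ‖x - y‖ := by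
  rw [dist_eq_norm, ← SeparationQuotient.mk_sub, SeparationQuotient.norm_mk]

theorem smQ_lip (a : A) : LipschitzWith ‖a‖₊ (smQ P a) := by
  apply LipschitzWith.of_dist_le_mul
  intro q r
  obtain ⟨x, rfl⟩ := SeparationQuotient.surjective_mk q
  obtain ⟨y, rfl⟩ := SeparationQuotient.surjective_mk r
  rw [smQ_mk, smQ_mk, norm_mk_sub, norm_mk_sub, ← rm_sub_sm P.hW, coe_nnnorm]
  calc ‖P.smW (x - y) a‖ ≤ ‖x - y‖ * ‖a‖ := P.smnorm _ _
    _ = ‖a‖ * ‖x - y‖ := mul_comm _ _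

theorem smQ_uc (a : A) : UniformContinuous (smQ P a) := (smQ_lip P a).uniformContinuous

-- Q-level lemmas
theorem BQ_add_left (q q' r : SeparationQuotient W) :
    BQ P (q + q') r = BQ P q r + BQ P q' r := by
  obtain ⟨x, rfl⟩ := SeparationQuotient.surjective_mk q
  obtain ⟨y, rfl⟩ := SeparationQuotient.surjective_mk q'
  obtain ⟨z, rfl⟩ := SeparationQuotient.surjective_mk r
  rw [← SeparationQuotient.mk_add, BQ_mk, BQ_mk, BQ_mk, P.hs.add_left]

theorem BQ_add_right (q r r' : SeparationQuotient W) :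
    BQ P q (r + r') = BQ P q r + BQ P q r' := by
  obtain ⟨x, rfl⟩ := SeparationQuotient.surjective_mk q
  obtain ⟨y, rfl⟩ := SeparationQuotient.surjective_mk r
  obtain ⟨z, rfl⟩ := SeparationQuotient.surjective_mk r'
  rw [← SeparationQuotient.mk_add, BQ_mk, BQ_mk, BQ_mk, P.hs.add_right]

theorem BQ_smulc_right (c : ℂ) (q r : SeparationQuotient W) :
    BQ P q (c • r) = c • BQ P q r := by
  obtain ⟨x, rfl⟩ := SeparationQuotient.surjective_mk q
  obtain ⟨y, rfl⟩ := SeparationQuotient.surjective_mk r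
  rw [← SeparationQuotient.mk_smul, BQ_mk, BQ_mk, P.hs.smul_right]

theorem BQ_smulr_right (t : ℝ) (q r : SeparationQuotient W) :
    BQ P q (t • r) = t • BQ P q r := by
  rw [← Complex.coe_smul, show t • r = (t : ℂ) • r from (Complex.coe_smul t r).symm, BQ_smulc_right]

theorem BQ_smulr_left (t : ℝ) (q r : SeparationQuotient W) :
    BQ P (t • q) r = t • BQ P q r := by
  rw [← Complex.coe_smul, show t • q = (t : ℂ) • q from (Complex.coe_smul t q).symm]
  obtain ⟨x, rfl⟩ := SeparationQuotient.surjective_mk q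
  obtain ⟨y, rfl⟩ := SeparationQuotient.surjective_mk r
  rw [← SeparationQuotient.mk_smul, BQ_mk, BQ_mk, P.hs.smul_left, Complex.conj_ofReal]

theorem BQ_herm_Q (q r : SeparationQuotient W) : star (BQ P q r) = BQ P r q := by
  obtain ⟨x, rfl⟩ := SeparationQuotient.surjective_mk q
  obtain ⟨y, rfl⟩ := SeparationQuotient.surjective_mk r
  simp [P.hherm]

theorem BQ_nn (q : SeparationQuotient W) : 0 ≤ BQ P q q := by
  obtain ⟨x, rfl⟩ := SeparationQuotient.surjective_mk q
  simp [P.hnn]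

theorem BQ_norm_le (q r : SeparationQuotient W) : ‖BQ P q r‖ ≤ ‖q‖ * ‖r‖ := by
  obtain ⟨x, rfl⟩ := SeparationQuotient.surjective_mk q
  obtain ⟨y, rfl⟩ := SeparationQuotient.surjective_mk r
  rw [BQ_mk, SeparationQuotient.norm_mk, SeparationQuotient.norm_mk]
  exact P.bnorm x y

theorem BQ_self_norm (q : SeparationQuotient W) : ‖BQ P q q‖ = ‖q‖ ^ 2 := by
  obtain ⟨x, rfl⟩ := SeparationQuotient.surjective_mk q
  rw [BQ_mk, SeparationQuotient.norm_mk, P.hnorm]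

theorem BQ_smQ_right (q r : SeparationQuotient W) (a : A) :
    BQ P q (smQ P a r) = BQ P q r * a := by
  obtain ⟨x, rfl⟩ := SeparationQuotient.surjective_mk q
  obtain ⟨y, rfl⟩ := SeparationQuotient.surjective_mk r
  rw [smQ_mk, BQ_mk, BQ_mk, P.hA.sm_right]

theorem smQ_add (a : A) (q r : SeparationQuotient W) :
    smQ P a (q + r) = smQ P a q + smQ P a r := by
  obtain ⟨x, rfl⟩ := SeparationQuotient.surjective_mk q
  obtain ⟨y, rfl⟩ := SeparationQuotient.surjective_mk r
  rw [← SeparationQuotient.mk_add, smQ_mk, smQ_mk, smQ_mk, ← SeparationQuotient.mk_add,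
    P.hW.add_sm]

theorem smQ_addA (a b : A) (q : SeparationQuotient W) :
    smQ P (a + b) q = smQ P a q + smQ P b q := by
  obtain ⟨x, rfl⟩ := SeparationQuotient.surjective_mk q
  rw [smQ_mk, smQ_mk, smQ_mk, ← SeparationQuotient.mk_add, P.hW.sm_add]

theorem smQ_mul (a b : A) (q : SeparationQuotient W) :
    smQ P (a * b) q = smQ P b (smQ P a q) := by
  obtain ⟨x, rfl⟩ := SeparationQuotient.surjective_mk q
  rw [smQ_mk, smQ_mk, smQ_mk, P.hW.sm_mul]

theorem smQ_smulc (c : ℂ) (a : A) (q : SeparationQuotient W) :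
    c • smQ P a q = smQ P a (c • q) := by
  obtain ⟨x, rfl⟩ := SeparationQuotient.surjective_mk q
  rw [smQ_mk, ← SeparationQuotient.mk_smul, ← SeparationQuotient.mk_smul, smQ_mk, P.hW.smul_sm]

theorem smQ_smulA (c : ℂ) (a : A) (q : SeparationQuotient W) :
    c • smQ P a q = smQ P (c • a) q := by
  obtain ⟨x, rfl⟩ := SeparationQuotient.surjective_mk q
  rw [smQ_mk, smQ_mk, ← SeparationQuotient.mk_smul, P.hW.sm_smul]

/-- `BQ` as a continuous ℝ-bilinear map on the quotient. -/
noncomputable def TQ : SeparationQuotient W →L[ℝ] SeparationQuotient W →L[ℝ] A :=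
  LinearMap.mkContinuous₂
    { toFun := fun q =>
        { toFun := BQ P q
          map_add' := fun x y => BQ_add_right P q x y
          map_smul' := fun t x => BQ_smulr_right P t q x }
      map_add' := fun q q' => LinearMap.ext fun x => BQ_add_left P q q' x
      map_smul' := fun t q => LinearMap.ext fun x => BQ_smulr_left P t q x }
    1 (fun q r => by rw [one_mul]; exact BQ_norm_le P q r)

@[simp] theorem TQ_apply (q r : SeparationQuotient W) : TQ P q r = BQ P q r := rfl

theorem toComplL_dense :
    DenseRange ⇑(Completion.toComplL (𝕜 := ℝ) (E := SeparationQuotient W)) := by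
  rw [Completion.coe_toComplL]
  exact Completion.denseRange_coe

theorem toComplL_ui :
    IsUniformInducing ⇑(Completion.toComplL (𝕜 := ℝ) (E := SeparationQuotient W)) := by
  rw [Completion.coe_toComplL]
  exact Completion.isUniformInducing_coe _

/-- Extension of `TQ` in the first variable. -/
noncomputable def T1 : Completion (SeparationQuotient W) →L[ℝ] (SeparationQuotient W →L[ℝ] A) :=
  (TQ P).extend Completion.toComplL

theorem T1_coe (q : SeparationQuotient W) : T1 P (↑q) = TQ P q := by
  have h := ContinuousLinearMap.extend_eq (TQ P) toComplL_dense toComplL_ui q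
  exact h

/-- Extension of a continuous functional to the completion. -/
noncomputable def ext1 (f : SeparationQuotient W →L[ℝ] A) :
    Completion (SeparationQuotient W) →L[ℝ] A :=
  f.extend Completion.toComplL

theorem ext1_coe (f : SeparationQuotient W →L[ℝ] A) (q : SeparationQuotient W) :
    ext1 f (↑q) = f q := by
  have h := ContinuousLinearMap.extend_eq f toComplL_dense toComplL_ui q
  exact h

theorem ext1_add (f g : SeparationQuotient W →L[ℝ] A) : ext1 (f + g) = ext1 f + ext1 g :=
  ContinuousLinearMap.extend_unique (f + g) toComplL_dense toComplL_ui
    (ext1 f + ext1 g) (by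
      ext q
      simp [ContinuousLinearMap.comp_apply, Completion.coe_toComplL, ext1_coe])

theorem ext1_smul (t : ℝ) (f : SeparationQuotient W →L[ℝ] A) : ext1 (t • f) = t • ext1 f :=
  ContinuousLinearMap.extend_unique (t • f) toComplL_dense toComplL_ui
    (t • ext1 f) (by
      ext q
      simp [ContinuousLinearMap.comp_apply, Completion.coe_toComplL, ext1_coe])

theorem ext1_norm (f : SeparationQuotient W →L[ℝ] A) (m : Completion (SeparationQuotient W)) :
    ‖ext1 f m‖ ≤ ‖f‖ * ‖m‖ := by
  induction m using Completion.induction_on with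
  | hp => exact isClosed_le (ext1 f).continuous.norm (continuous_const.mul continuous_norm)
  | ih q =>
    rw [ext1_coe, Completion.norm_coe]
    exact f.le_opNorm q

/-- The inner product on the completion, as a continuous ℝ-bilinear map. -/
noncomputable def TT : Completion (SeparationQuotient W) →L[ℝ]
    Completion (SeparationQuotient W) →L[ℝ] A :=
  LinearMap.mkContinuous
    { toFun := fun m => ext1 (T1 P m)
      map_add' := fun m n => by
        show ext1 (T1 P (m + n)) = ext1 (T1 P m) + ext1 (T1 P n)
        rw [map_add, ext1_add]
      map_smul' := fun t m => by
        show ext1 (T1 P (t • m)) = t • ext1 (T1 P m)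
        rw [map_smul, ext1_smul] }
    ‖T1 P‖ (fun m => ContinuousLinearMap.opNorm_le_bound _ (by positivity) fun x =>
      calc ‖ext1 (T1 P m) x‖ ≤ ‖T1 P m‖ * ‖x‖ := ext1_norm _ _
        _ ≤ ‖T1 P‖ * ‖m‖ * ‖x‖ :=
            mul_le_mul_of_nonneg_right ((T1 P).le_opNorm m) (norm_nonneg x))

theorem TT_coe (q r : SeparationQuotient W) : TT P (↑q) (↑r) = BQ P q r := by
  simp only [TT, LinearMap.mkContinuous_apply, LinearMap.coe_mk, AddHom.coe_mk]
  rw [T1_coe, ext1_coe, TQ_apply]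

set_option maxHeartbeats 1000000 in
/-- The main abstract construction: completion of the separation quotient of a
pre-Hilbert C*-module. -/
theorem construct :
    ∃ (H : HilbertCStarModule A) (ι : W → H.M),
      IsLinAMap P.smW H.sm ι ∧ (∀ w w', P.B w w' = H.inner (ι w) (ι w')) ∧
      (∀ m : H.M, ∀ ε : ℝ, 0 < ε → ∃ w : W, ‖H.inner (m - ι w) (m - ι w)‖ < ε) := by
  classical
  have jc : Continuous fun p : Completion (SeparationQuotient W) ×
      Completion (SeparationQuotient W) => TT P p.1 p.2 := (TT P).continuous₂
  have jcd : Continuous fun m : Completion (SeparationQuotient W) => TT P m m := by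
    fun_prop
  have csm : ∀ a : A, Continuous fun m : Completion (SeparationQuotient W) =>
      Completion.map (smQ P a) m := fun a => Completion.continuous_map
  have smM_coe' : ∀ (a : A) (q : SeparationQuotient W),
      Completion.map (smQ P a) (↑q) = ↑(smQ P a q) := fun a q =>
    Completion.map_coe (smQ_uc P a) q
  have key : ∀ m : Completion (SeparationQuotient W), ‖TT P m m‖ = ‖m‖ ^ 2 := by
    intro m
    induction m using Completion.induction_on with
    | hp => exact isClosed_eq jcd.norm (continuous_norm.pow 2)
    | ih q => rw [TT_coe, BQ_self_norm, Completion.norm_coe]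
  have hadd_sm : ∀ (m n : Completion (SeparationQuotient W)) (a : A),
      Completion.map (smQ P a) (m + n)
        = Completion.map (smQ P a) m + Completion.map (smQ P a) n := by
    intro m n a
    induction m, n using Completion.induction_on₂ with
    | hp =>
      exact isClosed_eq ((csm a).comp continuous_add)
        (((csm a).comp continuous_fst).add ((csm a).comp continuous_snd))
    | ih x y =>
      rw [← Completion.coe_add, smM_coe', smM_coe', smM_coe', ← Completion.coe_add, smQ_add]
  have hsm_add : ∀ (m : Completion (SeparationQuotient W)) (a b : A),
      Completion.map (smQ P (a + b)) m
        = Completion.map (smQ P a) m + Completion.map (smQ P b) m := by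
    intro m a b
    induction m using Completion.induction_on with
    | hp => exact isClosed_eq (csm (a + b)) ((csm a).add (csm b))
    | ih x => rw [smM_coe', smM_coe', smM_coe', ← Completion.coe_add, smQ_addA]
  have hsm_mul : ∀ (m : Completion (SeparationQuotient W)) (a b : A),
      Completion.map (smQ P (a * b)) m = Completion.map (smQ P b) (Completion.map (smQ P a) m) := by
    intro m a b
    induction m using Completion.induction_on with
    | hp => exact isClosed_eq (csm (a * b)) ((csm b).comp (csm a))
    | ih x => rw [smM_coe', smM_coe', smM_coe', smQ_mul]
  have hsmul_sm : ∀ (c : ℂ) (m : Completion (SeparationQuotient W)) (a : A),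
      c • Completion.map (smQ P a) m = Completion.map (smQ P a) (c • m) := by
    intro c m a
    induction m using Completion.induction_on with
    | hp => exact isClosed_eq ((csm a).const_smul c) ((csm a).comp (continuous_const_smul c))
    | ih x =>
      rw [smM_coe', ← Completion.coe_smul, ← Completion.coe_smul, smM_coe', smQ_smulc]
  have hsm_smul : ∀ (c : ℂ) (m : Completion (SeparationQuotient W)) (a : A),
      c • Completion.map (smQ P a) m = Completion.map (smQ P (c • a)) m := by
    intro c m a
    induction m using Completion.induction_on with
    | hp => exact isClosed_eq ((csm a).const_smul c) (csm (c • a))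
    | ih x => rw [smM_coe', ← Completion.coe_smul, smM_coe', smQ_smulA]
  have hnonneg : ∀ m : Completion (SeparationQuotient W), 0 ≤ TT P m m := by
    intro m
    induction m using Completion.induction_on with
    | hp => exact CStarAlgebra.isClosed_nonneg.preimage jcd
    | ih q => rw [TT_coe]; exact BQ_nn P q
  have hsmulc : ∀ (c : ℂ) (m x : Completion (SeparationQuotient W)),
      TT P m (c • x) = c • TT P m x := by
    intro c m x
    induction m, x using Completion.induction_on₂ with
    | hp =>
      exact isClosed_eq
        (jc.comp (continuous_fst.prodMk ((continuous_const_smul c).comp continuous_snd)))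
        (jc.const_smul c)
    | ih a b => rw [← Completion.coe_smul, TT_coe, TT_coe, BQ_smulc_right]
  have hsmr : ∀ (m x : Completion (SeparationQuotient W)) (a : A),
      TT P m (Completion.map (smQ P a) x) = TT P m x * a := by
    intro m x a
    induction m, x using Completion.induction_on₂ with
    | hp =>
      exact isClosed_eq
        (jc.comp (continuous_fst.prodMk ((csm a).comp continuous_snd)))
        (jc.mul continuous_const)
    | ih q r => rw [smM_coe', TT_coe, TT_coe, BQ_smQ_right]
  have hconj : ∀ m x : Completion (SeparationQuotient W), TT P m x = star (TT P x m) := by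
    intro m x
    induction m, x using Completion.induction_on₂ with
    | hp => exact isClosed_eq jc (jc.comp (continuous_snd.prodMk continuous_fst)).star
    | ih q r =>
      rw [TT_coe, TT_coe]
      exact (BQ_herm_Q P r q).symm
  refine ⟨{ M := Completion (SeparationQuotient W)
            sm := fun m a => Completion.map (smQ P a) m
            rightModule := ⟨fun m n a => hadd_sm m n a, fun m a b => hsm_add m a b,
              fun m a b => hsm_mul m a b, fun c m a => hsmul_sm c m a,
              fun c m a => hsm_smul c m a⟩
            inner := fun m m' => TT P m m'
            inner_nonneg := hnonneg
            inner_definite := ?_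
            inner_add_right := fun m x y => map_add (TT P m) x y
            inner_smul_right := fun c m x => hsmulc c m x
            inner_sm_right := fun m x a => hsmr m x a
            inner_conj := fun m x => hconj m x
            complete := ?_ },
    fun w => ↑(SeparationQuotient.mk w), ⟨?_, ?_, ?_⟩, ?_, ?_⟩
  · -- definite
    intro m h
    have h' : TT P m m = 0 := h
    have h2 := key m
    rw [h', norm_zero] at h2
    exact norm_eq_zero.mp ((pow_eq_zero_iff two_ne_zero).mp h2.symm)
  · -- complete
    intro u hu
    have hc : CauchySeq u := by
      rw [Metric.cauchySeq_iff]
      intro ε hε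
      obtain ⟨N, hN⟩ := hu (ε ^ 2) (by positivity)
      refine ⟨N, fun j hj k hk => ?_⟩
      have h1 : ‖TT P (u j - u k) (u j - u k)‖ < ε ^ 2 := hN j hj k hk
      rw [key] at h1
      rw [dist_eq_norm]
      exact lt_of_pow_lt_pow_left₀ 2 (le_of_lt hε) h1
    obtain ⟨m, hm⟩ := cauchySeq_tendsto_of_complete hc
    refine ⟨m, fun ε hε => ?_⟩
    rw [Metric.tendsto_atTop] at hm
    obtain ⟨N, hN⟩ := hm (Real.sqrt ε) (Real.sqrt_pos.mpr hε)
    refine ⟨N, fun k hk => ?_⟩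
    have h1 := hN k hk
    rw [dist_eq_norm] at h1
    show ‖TT P (u k - m) (u k - m)‖ < ε
    rw [key]
    calc ‖u k - m‖ ^ 2 < Real.sqrt ε ^ 2 :=
          pow_lt_pow_left₀ h1 (norm_nonneg _) two_ne_zero
      _ = ε := Real.sq_sqrt (le_of_lt hε)
  · -- map_add
    intro v w
    show (↑(SeparationQuotient.mk (v + w)) : Completion (SeparationQuotient W)) = _
    rw [SeparationQuotient.mk_add, Completion.coe_add]
  · -- map_smul
    intro c v
    show (↑(SeparationQuotient.mk (c • v)) : Completion (SeparationQuotient W)) = _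
    rw [SeparationQuotient.mk_smul, Completion.coe_smul]
  · -- map_sm
    intro v a
    show (↑(SeparationQuotient.mk (P.smW v a)) : Completion (SeparationQuotient W))
      = Completion.map (smQ P a) ↑(SeparationQuotient.mk v)
    rw [smM_coe', smQ_mk]
  · -- inner identity
    intro w w'
    show P.B w w' = TT P _ _
    rw [TT_coe, BQ_mk]
  · -- density
    intro m ε hε
    have hd := Completion.denseRange_coe (α := SeparationQuotient W)
    rw [Metric.denseRange_iff] at hd
    obtain ⟨q, hq⟩ := hd m (Real.sqrt ε) (Real.sqrt_pos.mpr hε)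
    obtain ⟨w, rfl⟩ := SeparationQuotient.surjective_mk q
    refine ⟨w, ?_⟩
    show ‖TT P _ _‖ < ε
    rw [key]
    rw [dist_eq_norm] at hq
    calc ‖m - ↑(SeparationQuotient.mk w)‖ ^ 2 < Real.sqrt ε ^ 2 :=
          pow_lt_pow_left₀ hq (norm_nonneg _) two_ne_zero
      _ = ε := Real.sq_sqrt (le_of_lt hε)

end Abstract

end KolAux

end KolmogorovAux

/-- Existence of a minimal Kolmogorov decomposition for a positive-definite `A`-kernel
with values in the `A`-sesquilinear maps on a right `A`-module `V`. -/
theorem statement1 (V X : Type) [AddCommGroup V] [Module ℂ V] [Nonempty X]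
    (smV : V → A → V) (hV : IsRightModule A smV)
    (K : X → X → V → V → A) (hsesq : ∀ x x', IsASesq smV (K x x'))
    (hpos : KernelPosDef K) :
    ∃ (H : HilbertCStarModule A) (D : X → V → H.M),
      (∀ x, IsLinAMap smV H.sm (D x)) ∧
      (∀ x x' v v', K x x' v v' = H.inner (D x v) (D x' v')) ∧
      DenseIn H (Submodule.span ℂ (⋃ x : X, Set.range (D x)) : Submodule ℂ H.M) := by
  classical
  have hsK : ∀ x y, IsSesq (K x y) := fun x y => (hsesq x y).sesq
  have hherm' : ∀ f g : X →₀ V, star (KolAux.BK K f g) = KolAux.BK K g f :=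
    fun f g => KolAux.BK_herm K hsK hpos f g
  have hpos' : ∀ f : X →₀ V, 0 ≤ KolAux.BK K f f := fun f => KolAux.BK_pos K hsK hpos f
  have hsW : IsSesq (KolAux.BK K) :=
    ⟨fun u v w => KolAux.BK_add_left K hsK u v w,
     fun u v w => KolAux.BK_add_right K hsK u v w,
     fun c v w => KolAux.BK_smul_left K hsK c v w,
     fun c v w => KolAux.BK_smul_right K hsK c v w⟩
  have hWright : IsRightModule A (KolAux.smK (X := X) smV hV) := by
    refine ⟨?_, ?_, ?_, ?_, ?_⟩
    · intro v w a
      ext x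
      simp only [KolAux.smK_apply, Finsupp.add_apply]
      rw [hV.add_sm]
    · intro v a b
      ext x
      simp only [KolAux.smK_apply, Finsupp.add_apply]
      rw [hV.sm_add]
    · intro v a b
      ext x
      simp only [KolAux.smK_apply]
      rw [hV.sm_mul]
    · intro c v a
      ext x
      simp only [KolAux.smK_apply, Finsupp.smul_apply]
      rw [hV.smul_sm]
    · intro c v a
      ext x
      simp only [KolAux.smK_apply, Finsupp.smul_apply]
      rw [hV.sm_smul]
  have hAW : IsASesq (KolAux.smK (X := X) smV hV) (KolAux.BK K) :=
    ⟨hsW, fun f g a => KolAux.BK_sm_left K smV hsK hV hsesq f g a,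
      fun f g a => KolAux.BK_sm_right K smV hsK hV hsesq f g a⟩
  have hCS : ∀ f g : X →₀ V,
      ‖KolAux.BK K f g‖ ^ 2 ≤ ‖KolAux.BK K f f‖ * ‖KolAux.BK K g g‖ :=
    fun f g => KolAux.cauchy_schwarz hsW hAW hherm' hpos' f g
  have hCS' : ∀ f g : X →₀ V,
      ‖KolAux.BK K f g‖ ≤ Real.sqrt ‖KolAux.BK K f f‖ * Real.sqrt ‖KolAux.BK K g g‖ := by
    intro f g
    calc ‖KolAux.BK K f g‖ = Real.sqrt (‖KolAux.BK K f g‖ ^ 2) :=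
          (Real.sqrt_sq (norm_nonneg _)).symm
      _ ≤ Real.sqrt (‖KolAux.BK K f f‖ * ‖KolAux.BK K g g‖) := Real.sqrt_le_sqrt (hCS f g)
      _ = Real.sqrt ‖KolAux.BK K f f‖ * Real.sqrt ‖KolAux.BK K g g‖ :=
          Real.sqrt_mul (norm_nonneg _) _
  letI instSN : SeminormedAddCommGroup (X →₀ V) := AddGroupSeminorm.toSeminormedAddCommGroup
    { toFun := fun f => Real.sqrt ‖KolAux.BK K f f‖
      map_zero' := by
        have h0 : KolAux.BK K (0 : X →₀ V) 0 = 0 := by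
          simp [KolAux.BK]
        show Real.sqrt ‖KolAux.BK K (0 : X →₀ V) 0‖ = 0
        rw [h0, norm_zero, Real.sqrt_zero]
      add_le' := by
        intro f g
        show Real.sqrt ‖KolAux.BK K (f + g) (f + g)‖
          ≤ Real.sqrt ‖KolAux.BK K f f‖ + Real.sqrt ‖KolAux.BK K g g‖
        have hexp : KolAux.BK K (f + g) (f + g)
            = KolAux.BK K f f + (KolAux.BK K f g + KolAux.BK K g f) + KolAux.BK K g g := by
          rw [KolAux.BK_add_left K hsK, KolAux.BK_add_right K hsK, KolAux.BK_add_right K hsK]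
          abel
        have t2 : ‖KolAux.BK K f g + KolAux.BK K g f‖
            ≤ 2 * (Real.sqrt ‖KolAux.BK K f f‖ * Real.sqrt ‖KolAux.BK K g g‖) := by
          calc ‖KolAux.BK K f g + KolAux.BK K g f‖
              ≤ ‖KolAux.BK K f g‖ + ‖KolAux.BK K g f‖ := norm_add_le _ _
            _ = ‖KolAux.BK K f g‖ + ‖KolAux.BK K f g‖ := by
                rw [← hherm' f g, norm_star]
            _ ≤ 2 * (Real.sqrt ‖KolAux.BK K f f‖ * Real.sqrt ‖KolAux.BK K g g‖) := by
                have := hCS' f g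
                linarith
        have hb : ‖KolAux.BK K (f + g) (f + g)‖
            ≤ (Real.sqrt ‖KolAux.BK K f f‖ + Real.sqrt ‖KolAux.BK K g g‖) ^ 2 := by
          rw [hexp]
          have t1 := norm_add₃_le (E := A) (a := KolAux.BK K f f)
            (b := KolAux.BK K f g + KolAux.BK K g f) (c := KolAux.BK K g g)
          have hx : Real.sqrt ‖KolAux.BK K f f‖ ^ 2 = ‖KolAux.BK K f f‖ :=
            Real.sq_sqrt (norm_nonneg _)
          have hy : Real.sqrt ‖KolAux.BK K g g‖ ^ 2 = ‖KolAux.BK K g g‖ :=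
            Real.sq_sqrt (norm_nonneg _)
          nlinarith [t1, t2]
        calc Real.sqrt ‖KolAux.BK K (f + g) (f + g)‖
            ≤ Real.sqrt ((Real.sqrt ‖KolAux.BK K f f‖ + Real.sqrt ‖KolAux.BK K g g‖) ^ 2) :=
              Real.sqrt_le_sqrt hb
          _ = Real.sqrt ‖KolAux.BK K f f‖ + Real.sqrt ‖KolAux.BK K g g‖ :=
              Real.sqrt_sq (by positivity)
      neg' := by
        intro f
        have : KolAux.BK K (-f) (-f) = KolAux.BK K f f := by
          have hneg : (-f : X →₀ V) = (-1 : ℂ) • f := by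
            rw [neg_one_smul]
          rw [hneg, KolAux.BK_smul_left K hsK, KolAux.BK_smul_right K hsK, smul_smul]
          simp
        show Real.sqrt ‖KolAux.BK K (-f) (-f)‖ = Real.sqrt ‖KolAux.BK K f f‖
        rw [this] }
  letI instNS : NormedSpace ℂ (X →₀ V) :=
    { toModule := inferInstance
      norm_smul_le := by
        intro c f
        have h1 : KolAux.BK K (c • f) (c • f)
            = ((‖c‖ ^ 2 : ℝ) : ℂ) • KolAux.BK K f f := by
          rw [KolAux.BK_smul_left K hsK, KolAux.BK_smul_right K hsK, smul_smul, mul_comm,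
            Complex.mul_conj, Complex.normSq_eq_norm_sq]
        have h2 : ‖KolAux.BK K (c • f) (c • f)‖ = ‖c‖ ^ 2 * ‖KolAux.BK K f f‖ := by
          rw [h1, Complex.coe_smul, norm_smul, Real.norm_of_nonneg (by positivity)]
        show Real.sqrt ‖KolAux.BK K (c • f) (c • f)‖
            ≤ ‖c‖ * Real.sqrt ‖KolAux.BK K f f‖
        rw [h2, Real.sqrt_mul (by positivity), Real.sqrt_sq (by positivity)] }
  set P : KolAux.PreHilb A (X →₀ V) :=
    { smW := KolAux.smK (X := X) smV hV
      hW := hWright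
      B := KolAux.BK K
      hs := hsW
      hA := hAW
      hherm := hherm'
      hnn := hpos'
      hnorm := by
        intro f
        show ‖KolAux.BK K f f‖ = Real.sqrt ‖KolAux.BK K f f‖ ^ 2
        rw [Real.sq_sqrt (norm_nonneg _)] } with hP
  obtain ⟨H, ι, hlin, hinner, hdense⟩ := KolAux.construct P
  refine ⟨H, fun x v => ι (Finsupp.single x v), ?_, ?_, ?_⟩
  · intro x
    refine ⟨?_, ?_, ?_⟩
    · intro v w
      show ι (Finsupp.single x (v + w)) = ι (Finsupp.single x v) + ι (Finsupp.single x w)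
      rw [Finsupp.single_add, hlin.map_add]
    · intro c v
      show ι (Finsupp.single x (c • v)) = c • ι (Finsupp.single x v)
      rw [← Finsupp.smul_single, hlin.map_smul]
    · intro v a
      show ι (Finsupp.single x (smV v a)) = H.sm (ι (Finsupp.single x v)) a
      have h1 : Finsupp.single x (smV v a) = KolAux.smK (X := X) smV hV (Finsupp.single x v) a :=
        (KolAux.smK_single smV hV x v a).symm
      rw [h1]
      exact hlin.map_sm _ _
  · intro x x' v v'
    rw [← hinner]
    exact (KolAux.BK_single K hsK x x' v v').symm
  · intro m ε hε
    obtain ⟨w, hw⟩ := hdense m ε hε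
    have hspan : ∀ f : X →₀ V, ι f ∈ (Submodule.span ℂ
        (⋃ x : X, Set.range fun v => ι (Finsupp.single x v)) : Submodule ℂ H.M) := by
      intro f
      induction f using Finsupp.induction with
      | zero =>
        have h0 : ι 0 = 0 := by
          have h' := hlin.map_add 0 0
          rw [add_zero] at h'
          exact (left_eq_add.mp h').symm ▸ rfl
        rw [h0]
        exact Submodule.zero_mem _
      | single_add x v f _ _ ih =>
        rw [hlin.map_add]
        refine Submodule.add_mem _ (Submodule.subset_span ?_) ih
        exact Set.mem_iUnion.mpr ⟨x, Set.mem_range_self v⟩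
    exact ⟨ι w, hspan w, hw⟩
end

section
/- Let A be a C*-algebra, V a right A-module, X a nonempty set, and K : X × X → S_A(V) a positive-definite A-kernel. Suppose (M,D) and (M',D') are two minimal Kolmogorov decompositions for K, i.e. M and M' are Hilbert C*-modules over A, D : X → Lin_A(V,M) and D' : X → Lin_A(V,M') satisfy K(x,x')(v,v') = ⟨D(x)v | D(x')v'⟩ and K(x,x')(v,v') = ⟨D'(x)v | D'(x')v'⟩ for all x,x' ∈ X, v,v' ∈ V, and the ℂ-linear spans of ⋃_{x∈X} D(x)V and of ⋃_{x∈X} D'(x)V are dense in M and in M' respectively. Then there exists a unitary U : M → M' such that U(D(x)v) = D'(x)v for all x ∈ X and v ∈ V. -/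
variable (A : Type) [NonUnitalCStarAlgebra A] [PartialOrder A] [StarOrderedRing A]

variable {A}

namespace HilbertCStarModule
variable (H : HilbertCStarModule A)

lemma inner_zero_right' (m : H.M) : H.inner m 0 = 0 := by
  have h := H.inner_add_right m 0 0
  rw [add_zero] at h
  exact (left_eq_add.mp h)

lemma inner_zero_left' (m : H.M) : H.inner 0 m = 0 := by
  rw [H.inner_conj, H.inner_zero_right', star_zero]

lemma inner_add_left' (m n p : H.M) :
    H.inner (m + n) p = H.inner m p + H.inner n p := by
  rw [H.inner_conj, H.inner_add_right, star_add, ← H.inner_conj, ← H.inner_conj]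

lemma inner_smul_left' (c : ℂ) (m n : H.M) :
    H.inner (c • m) n = (starRingEnd ℂ) c • H.inner m n := by
  rw [H.inner_conj, H.inner_smul_right, star_smul, ← H.inner_conj, starRingEnd_apply]

lemma inner_neg_right' (m n : H.M) : H.inner m (-n) = -H.inner m n := by
  rw [← neg_one_smul ℂ n, H.inner_smul_right, neg_one_smul]

lemma inner_neg_left' (m n : H.M) : H.inner (-m) n = -H.inner m n := by
  rw [H.inner_conj, H.inner_neg_right', star_neg, ← H.inner_conj]

lemma inner_sub_right' (m n p : H.M) :
    H.inner m (n - p) = H.inner m n - H.inner m p := by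
  rw [sub_eq_add_neg, H.inner_add_right, H.inner_neg_right', sub_eq_add_neg]

lemma inner_sub_left' (m n p : H.M) :
    H.inner (m - n) p = H.inner m p - H.inner n p := by
  rw [sub_eq_add_neg, H.inner_add_left', H.inner_neg_left', sub_eq_add_neg]

lemma inner_sm_left' (m n : H.M) (a : A) :
    H.inner (H.sm m a) n = star a * H.inner m n := by
  rw [H.inner_conj, H.inner_sm_right, star_mul, ← H.inner_conj]

/-- The Hilbert C*-module norm. -/
noncomputable def nr (m : H.M) : ℝ := Real.sqrt ‖H.inner m m‖

lemma nr_nonneg (m : H.M) : 0 ≤ H.nr m := Real.sqrt_nonneg _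

lemma nr_sq (m : H.M) : H.nr m ^ 2 = ‖H.inner m m‖ := Real.sq_sqrt (norm_nonneg _)

lemma nr_zero : H.nr 0 = 0 := by simp [nr, H.inner_zero_right']

lemma nr_eq_zero (m : H.M) (h : H.nr m = 0) : m = 0 := by
  apply H.inner_definite
  have : ‖H.inner m m‖ = 0 := by
    have := H.nr_sq m
    rw [h] at this
    linarith [this.symm]
  exact norm_eq_zero.mp this

lemma nr_neg (m : H.M) : H.nr (-m) = H.nr m := by
  unfold nr
  rw [H.inner_neg_left', H.inner_neg_right', neg_neg]

lemma nr_sub_comm (m n : H.M) : H.nr (m - n) = H.nr (n - m) := by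
  rw [← H.nr_neg, neg_sub]

lemma nr_smul (c : ℂ) (m : H.M) : H.nr (c • m) = ‖c‖ * H.nr m := by
  unfold nr
  rw [H.inner_smul_left', H.inner_smul_right, smul_smul, norm_smul]
  rw [Real.sqrt_mul (norm_nonneg _)]
  congr 1
  rw [norm_mul, Complex.norm_conj]
  exact Real.sqrt_mul_self (norm_nonneg c)

end HilbertCStarModule

namespace HilbertCStarModule
variable (H : HilbertCStarModule A)

lemma inner_self_selfAdjoint (m : H.M) : IsSelfAdjoint (H.inner m m) :=
  IsSelfAdjoint.of_nonneg (H.inner_nonneg m)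

lemma coe_smul_eq (t : ℝ) (a : A) : ((t:ℂ) • a : A) = t • a := by
  rw [Complex.coe_smul]

lemma inner_mul_swap_le (x y : H.M) :
    H.inner y x * H.inner x y ≤ H.nr x ^ 2 • H.inner y y := by
  rcases eq_or_ne x 0 with h | h
  · simp only [h, H.inner_zero_right', H.inner_zero_left', zero_mul, nr_zero]
    have : (0:ℝ) ^ 2 • H.inner y y = 0 • H.inner y y := by norm_num
    rw [this, zero_smul]
  · have hx : 0 < H.nr x := by
      rcases lt_or_eq_of_le (H.nr_nonneg x) with h' | h'
      · exact h'
      · exact absurd (H.nr_eq_zero x h'.symm) h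
    set t : ℝ := H.nr x ^ 2 with ht
    have h₁ : ∀ (a : A),
        (0 : A) ≤ t • (star a * a) - t • (H.inner y x * a)
                  - t • (star a * H.inner x y)
                  + t • (t • H.inner y y) := fun a => by
      have key := H.inner_nonneg (H.sm x a - (t:ℂ) • y)
      have e1 : H.inner (H.sm x a - (t:ℂ) • y) (H.sm x a - (t:ℂ) • y)
          = star a * (H.inner x x * a) - t • (H.inner y x * a)
            - t • (star a * H.inner x y) + t • (t • H.inner y y) := by
        simp only [H.inner_sub_left', H.inner_sub_right', H.inner_sm_left', H.inner_sm_right,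
          H.inner_smul_left', H.inner_smul_right, Complex.conj_ofReal, smul_smul,
          mul_smul_comm, smul_mul_assoc]
        simp only [← Complex.ofReal_mul, coe_smul_eq]
        abel
      have e2 : star a * (H.inner x x * a) ≤ t • (star a * a) := by
        have h3 := CStarAlgebra.star_left_conjugate_le_norm_smul (a := a) (b := H.inner x x)
          (H.inner_self_selfAdjoint x)
        rw [mul_assoc] at h3
        rwa [ht, H.nr_sq]
      calc (0:A) ≤ H.inner (H.sm x a - (t:ℂ) • y) (H.sm x a - (t:ℂ) • y)
            + (t • (star a * a) - star a * (H.inner x x * a)) :=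
              add_nonneg key (sub_nonneg.mpr e2)
        _ = t • (star a * a) - t • (H.inner y x * a)
            - t • (star a * H.inner x y) + t • (t • H.inner y y) := by
              rw [e1]; abel
    have h₂ := h₁ (H.inner x y)
    have hyx : star (H.inner x y) = H.inner y x := (H.inner_conj y x).symm
    rw [hyx] at h₂
    have h₃ : t • (H.inner y x * H.inner x y) ≤ t • (t • H.inner y y) := by
      have h4 : (0:A) ≤ - (t • (H.inner y x * H.inner x y)) + t • (t • H.inner y y) := by
        calc (0:A) ≤ t • (H.inner y x * H.inner x y) - t • (H.inner y x * H.inner x y)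
            - t • (H.inner y x * H.inner x y) + t • (t • H.inner y y) := h₂
          _ = - (t • (H.inner y x * H.inner x y)) + t • (t • H.inner y y) := by abel
      have := add_le_add_right h4 (t • (H.inner y x * H.inner x y))
      simpa using this
    have htpos : 0 < t := by positivity
    exact (smul_le_smul_iff_of_pos_left htpos).mp h₃

end HilbertCStarModule

namespace HilbertCStarModule
variable (H : HilbertCStarModule A)

lemma norm_inner_le (x y : H.M) : ‖H.inner x y‖ ≤ H.nr x * H.nr y := by
  have key : ‖H.inner x y‖ ^ 2 ≤ (H.nr x * H.nr y) ^ 2 := by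
    calc ‖H.inner x y‖ ^ 2 = ‖H.inner y x * H.inner x y‖ := by
          rw [show H.inner y x = star (H.inner x y) from H.inner_conj y x]
          rw [CStarRing.norm_star_mul_self, pow_two]
      _ ≤ ‖H.nr x ^ 2 • H.inner y y‖ := by
          refine CStarAlgebra.norm_le_norm_of_nonneg_of_le ?_ (H.inner_mul_swap_le x y)
          rw [show H.inner y x = star (H.inner x y) from H.inner_conj y x]
          exact star_mul_self_nonneg _
      _ = H.nr x ^ 2 * ‖H.inner y y‖ := by
          rw [norm_smul, Real.norm_of_nonneg (by positivity)]
      _ = H.nr x ^ 2 * H.nr y ^ 2 := by rw [H.nr_sq y]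
      _ = (H.nr x * H.nr y) ^ 2 := by ring
  have h2 : 0 ≤ H.nr x * H.nr y := mul_nonneg (H.nr_nonneg x) (H.nr_nonneg y)
  nlinarith [norm_nonneg (H.inner x y)]

lemma nr_add_le (x y : H.M) : H.nr (x + y) ≤ H.nr x + H.nr y := by
  have key : H.nr (x + y) ^ 2 ≤ (H.nr x + H.nr y) ^ 2 := by
    have e1 : H.inner (x + y) (x + y)
        = H.inner x x + H.inner x y + H.inner y x + H.inner y y := by
      rw [H.inner_add_left', H.inner_add_right, H.inner_add_right]
      abel
    have hyx : ‖H.inner y x‖ = ‖H.inner x y‖ := by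
      rw [show H.inner y x = star (H.inner x y) from H.inner_conj y x, norm_star]
    calc H.nr (x + y) ^ 2 = ‖H.inner (x + y) (x + y)‖ := H.nr_sq _
      _ ≤ ‖H.inner x x‖ + ‖H.inner x y‖ + ‖H.inner y x‖ + ‖H.inner y y‖ := by
          rw [e1]
          calc ‖H.inner x x + H.inner x y + H.inner y x + H.inner y y‖
              ≤ ‖H.inner x x + H.inner x y + H.inner y x‖ + ‖H.inner y y‖ := norm_add_le _ _
            _ ≤ ‖H.inner x x + H.inner x y‖ + ‖H.inner y x‖ + ‖H.inner y y‖ := by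
                have := norm_add_le (H.inner x x + H.inner x y) (H.inner y x)
                linarith
            _ ≤ ‖H.inner x x‖ + ‖H.inner x y‖ + ‖H.inner y x‖ + ‖H.inner y y‖ := by
                have := norm_add_le (H.inner x x) (H.inner x y)
                linarith
      _ ≤ H.nr x ^ 2 + H.nr x * H.nr y + H.nr x * H.nr y + H.nr y ^ 2 := by
          have h1 := H.norm_inner_le x y
          have h2 := H.nr_sq x
          have h3 := H.nr_sq y
          rw [hyx]
          linarith [H.norm_inner_le x y]
      _ = (H.nr x + H.nr y) ^ 2 := by ring
  nlinarith [H.nr_nonneg (x + y), H.nr_nonneg x, H.nr_nonneg y]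

lemma nr_sub_le (x y z : H.M) : H.nr (x - z) ≤ H.nr (x - y) + H.nr (y - z) := by
  have : x - z = (x - y) + (y - z) := by abel
  rw [this]
  exact H.nr_add_le _ _

lemma nr_sm_le (m : H.M) (a : A) : H.nr (H.sm m a) ≤ ‖a‖ * H.nr m := by
  have e1 : H.inner (H.sm m a) (H.sm m a) = star a * (H.inner m m * a) := by
    rw [H.inner_sm_left', H.inner_sm_right]
  have key : ‖H.inner (H.sm m a) (H.sm m a)‖ ≤ ‖a‖ ^ 2 * ‖H.inner m m‖ := by
    rw [e1]
    calc ‖star a * (H.inner m m * a)‖ ≤ ‖star a‖ * ‖H.inner m m * a‖ := norm_mul_le _ _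
      _ ≤ ‖star a‖ * (‖H.inner m m‖ * ‖a‖) := by
          have := norm_mul_le (H.inner m m) a
          have h0 : (0:ℝ) ≤ ‖star a‖ := norm_nonneg _
          nlinarith
      _ = ‖a‖ ^ 2 * ‖H.inner m m‖ := by rw [norm_star]; ring
  have : H.nr (H.sm m a) ^ 2 ≤ (‖a‖ * H.nr m) ^ 2 := by
    rw [H.nr_sq]
    calc ‖H.inner (H.sm m a) (H.sm m a)‖ ≤ ‖a‖ ^ 2 * ‖H.inner m m‖ := key
      _ = ‖a‖ ^ 2 * H.nr m ^ 2 := by rw [H.nr_sq]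
      _ = (‖a‖ * H.nr m) ^ 2 := by ring
  nlinarith [H.nr_nonneg (H.sm m a), mul_nonneg (norm_nonneg a) (H.nr_nonneg m)]

end HilbertCStarModule


namespace HilbertCStarModule
variable {A : Type} [NonUnitalCStarAlgebra A] [PartialOrder A] [StarOrderedRing A]
variable (H : HilbertCStarModule A)

lemma sm_zero' (a : A) : H.sm 0 a = 0 := by
  have h := H.rightModule.add_sm 0 0 a
  rw [add_zero] at h
  exact (left_eq_add.mp h)

lemma sm_neg' (m : H.M) (a : A) : H.sm (-m) a = - H.sm m a := by
  have h := H.rightModule.smul_sm (-1) m a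
  rw [neg_one_smul, neg_one_smul] at h
  exact h.symm

lemma sm_sub' (m n : H.M) (a : A) : H.sm (m - n) a = H.sm m a - H.sm n a := by
  rw [sub_eq_add_neg, H.rightModule.add_sm, H.sm_neg', sub_eq_add_neg]

end HilbertCStarModule

/-- Key completeness lemma: given a "graph" set `R` whose two coordinates are isometric
on differences, any point approximable by first coordinates of `R` has a partner
approximable by the corresponding second coordinates. -/
lemma exists_pair {A : Type} [NonUnitalCStarAlgebra A] [PartialOrder A] [StarOrderedRing A]
    (H H' : HilbertCStarModule A) (R : Set (H.M × H'.M))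
    (hdiff : ∀ p ∈ R, ∀ q ∈ R, H'.nr (p.2 - q.2) = H.nr (p.1 - q.1))
    (m : H.M) (happ : ∀ ε : ℝ, 0 < ε → ∃ p ∈ R, H.nr (m - p.1) < ε) :
    ∃ m' : H'.M, ∀ ε : ℝ, 0 < ε → ∃ p ∈ R, H.nr (m - p.1) < ε ∧ H'.nr (m' - p.2) < ε := by
  classical
  have hseq : ∀ n : ℕ, ∃ p ∈ R, H.nr (m - p.1) < 1 / (n + 1) := fun n =>
    happ _ (by positivity)
  choose p hpR hp using hseq
  have hcauchy : ∀ ε : ℝ, 0 < ε → ∃ N, ∀ j ≥ N, ∀ k ≥ N,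
      ‖H'.inner ((p j).2 - (p k).2) ((p j).2 - (p k).2)‖ < ε := by
    intro ε hε
    obtain ⟨N, hN⟩ := exists_nat_one_div_lt (show (0:ℝ) < Real.sqrt ε / 2 by positivity)
    refine ⟨N, fun j hj k hk => ?_⟩
    have hjk : H'.nr ((p j).2 - (p k).2) < Real.sqrt ε := by
      rw [hdiff _ (hpR j) _ (hpR k)]
      have t1 : H.nr ((p j).1 - (p k).1) ≤ H.nr ((p j).1 - m) + H.nr (m - (p k).1) :=
        H.nr_sub_le _ _ _
      have t2 : H.nr ((p j).1 - m) < 1 / (j + 1) := by rw [H.nr_sub_comm]; exact hp j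
      have t3 : H.nr (m - (p k).1) < 1 / (k + 1) := hp k
      have t4 : (1:ℝ) / (j + 1) ≤ 1 / (N + 1) := by
        apply one_div_le_one_div_of_le (by positivity)
        have : (N:ℝ) ≤ (j:ℝ) := by exact_mod_cast hj
        linarith
      have t5 : (1:ℝ) / (k + 1) ≤ 1 / (N + 1) := by
        apply one_div_le_one_div_of_le (by positivity)
        have : (N:ℝ) ≤ (k:ℝ) := by exact_mod_cast hk
        linarith
      linarith
    have hsq := H'.nr_sq ((p j).2 - (p k).2)
    nlinarith [H'.nr_nonneg ((p j).2 - (p k).2), Real.sq_sqrt hε.le, Real.sqrt_nonneg ε]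
  obtain ⟨m', hm'⟩ := H'.complete _ hcauchy
  refine ⟨m', fun ε hε => ?_⟩
  obtain ⟨N₁, hN₁⟩ := hm' (ε ^ 2) (by positivity)
  obtain ⟨N₂, hN₂⟩ := exists_nat_one_div_lt hε
  set k := max N₁ N₂ with hk
  refine ⟨p k, hpR k, ?_, ?_⟩
  · have t1 := hp k
    have t4 : (1:ℝ) / (k + 1) ≤ 1 / (N₂ + 1) := by
      apply one_div_le_one_div_of_le (by positivity)
      have : (N₂:ℝ) ≤ (k:ℝ) := by exact_mod_cast le_max_right N₁ N₂
      linarith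
    linarith
  · have h := hN₁ k (le_max_left _ _)
    have hrw : H'.nr (m' - (p k).2) = H'.nr ((p k).2 - m') := H'.nr_sub_comm _ _
    have hsq := H'.nr_sq ((p k).2 - m')
    rw [hrw]
    nlinarith [H'.nr_nonneg ((p k).2 - m')]

/-- A unitary map between Hilbert C*-modules over `A`: a bijective, ℂ-linear and
`A`-linear map preserving inner products. -/
structure IsUnitary (H H' : HilbertCStarModule A) (U : H.M → H'.M) : Prop where
  bijective : Function.Bijective U
  linA : IsLinAMap H.sm H'.sm U
  inner_map : ∀ m m'', H'.inner (U m) (U m'') = H.inner m m''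

/-- Uniqueness (up to a unitary) of minimal Kolmogorov decompositions for a
positive-definite `A`-kernel. -/
theorem statement2 (V X : Type) [AddCommGroup V] [Module ℂ V] [Nonempty X]
    (smV : V → A → V) (hV : IsRightModule A smV)
    (K : X → X → V → V → A) (hsesq : ∀ x x', IsASesq smV (K x x'))
    (hpos : KernelPosDef K)
    (H H' : HilbertCStarModule A) (D : X → V → H.M) (D' : X → V → H'.M)
    (hD : ∀ x, IsLinAMap smV H.sm (D x)) (hD' : ∀ x, IsLinAMap smV H'.sm (D' x))
    (hKD : ∀ x x' v v', K x x' v v' = H.inner (D x v) (D x' v'))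
    (hKD' : ∀ x x' v v', K x x' v v' = H'.inner (D' x v) (D' x' v'))
    (hdense : DenseIn H (Submodule.span ℂ (⋃ x : X, Set.range (D x)) : Submodule ℂ H.M))
    (hdense' : DenseIn H' (Submodule.span ℂ (⋃ x : X, Set.range (D' x)) : Submodule ℂ H'.M)) :
    ∃ U : H.M → H'.M, IsUnitary H H' U ∧ ∀ x v, U (D x v) = D' x v := by
  classical
  set gens : Set (H.M × H'.M) := {p | ∃ x v, p = (D x v, D' x v)} with hgens
  set R : Submodule ℂ (H.M × H'.M) := Submodule.span ℂ gens with hR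
  -- inner products agree on R
  have hiso : ∀ p ∈ R, ∀ q ∈ R, H'.inner p.2 q.2 = H.inner p.1 q.1 := by
    intro p hp
    refine Submodule.span_induction
      (p := fun p _ => ∀ q ∈ R, H'.inner p.2 q.2 = H.inner p.1 q.1) ?_ ?_ ?_ ?_ hp
    · rintro _ ⟨x, v, rfl⟩ q hq
      refine Submodule.span_induction
        (p := fun q _ => H'.inner (D x v, D' x v).2 q.2 = H.inner (D x v, D' x v).1 q.1)
        ?_ ?_ ?_ ?_ hq
      · rintro _ ⟨x', v', rfl⟩
        show H'.inner (D' x v) (D' x' v') = H.inner (D x v) (D x' v')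
        rw [← hKD', ← hKD]
      · show H'.inner (D' x v) 0 = H.inner (D x v) 0
        rw [H.inner_zero_right', H'.inner_zero_right']
      · intro a b _ _ iha ihb
        show H'.inner _ (a.2 + b.2) = H.inner _ (a.1 + b.1)
        rw [H.inner_add_right, H'.inner_add_right, iha, ihb]
      · intro c a _ iha
        show H'.inner _ (c • a.2) = H.inner _ (c • a.1)
        rw [H.inner_smul_right, H'.inner_smul_right, iha]
    · intro q hq
      show H'.inner 0 q.2 = H.inner 0 q.1
      rw [H.inner_zero_left', H'.inner_zero_left']
    · intro a b _ _ iha ihb q hq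
      show H'.inner (a.2 + b.2) q.2 = H.inner (a.1 + b.1) q.1
      rw [H.inner_add_left', H'.inner_add_left', iha q hq, ihb q hq]
    · intro c a _ iha q hq
      show H'.inner (c • a.2) q.2 = H.inner (c • a.1) q.1
      rw [H.inner_smul_left', H'.inner_smul_left', iha q hq]
  -- the two coordinate isometry on differences
  have hdiff : ∀ p ∈ R, ∀ q ∈ R, H'.nr (p.2 - q.2) = H.nr (p.1 - q.1) := by
    intro p hp q hq
    have hpq : p - q ∈ R := sub_mem hp hq
    have h := hiso _ hpq _ hpq
    unfold HilbertCStarModule.nr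
    rw [show (p - q).1 = p.1 - q.1 from rfl, show (p - q).2 = p.2 - q.2 from rfl] at h
    rw [h]
  have hdiff' : ∀ p ∈ Prod.swap '' (R : Set (H.M × H'.M)), ∀ q ∈ Prod.swap '' (R : Set (H.M × H'.M)),
      H.nr (p.2 - q.2) = H'.nr (p.1 - q.1) := by
    rintro _ ⟨p, hp, rfl⟩ _ ⟨q, hq, rfl⟩
    exact (hdiff p hp q hq).symm
  -- every element of the span of the D x v pairs with something in R
  have hfst : ∀ w ∈ Submodule.span ℂ (⋃ x : X, Set.range (D x)), ∃ w', (w, w') ∈ R := by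
    intro w hw
    refine Submodule.span_induction (p := fun w _ => ∃ w', (w, w') ∈ R) ?_ ?_ ?_ ?_ hw
    · intro w hw
      rw [Set.mem_iUnion] at hw
      obtain ⟨x, v, rfl⟩ := hw
      exact ⟨D' x v, Submodule.subset_span ⟨x, v, rfl⟩⟩
    · exact ⟨0, zero_mem R⟩
    · rintro a b _ _ ⟨a', ha⟩ ⟨b', hb⟩
      exact ⟨a' + b', add_mem ha hb⟩
    · rintro c a _ ⟨a', ha⟩
      exact ⟨c • a', Submodule.smul_mem R c ha⟩
  have hsnd : ∀ w' ∈ Submodule.span ℂ (⋃ x : X, Set.range (D' x)), ∃ w, (w, w') ∈ R := by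
    intro w' hw'
    refine Submodule.span_induction (p := fun w' _ => ∃ w, (w, w') ∈ R) ?_ ?_ ?_ ?_ hw'
    · intro w hw
      rw [Set.mem_iUnion] at hw
      obtain ⟨x, v, rfl⟩ := hw
      exact ⟨D x v, Submodule.subset_span ⟨x, v, rfl⟩⟩
    · exact ⟨0, zero_mem R⟩
    · rintro a b _ _ ⟨a', ha⟩ ⟨b', hb⟩
      exact ⟨a' + b', add_mem ha hb⟩
    · rintro c a _ ⟨a', ha⟩
      exact ⟨c • a', Submodule.smul_mem R c ha⟩
  -- R is closed under the A-action
  have hsmR : ∀ a : A, ∀ p ∈ R, (H.sm p.1 a, H'.sm p.2 a) ∈ R := by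
    intro a p hp
    refine Submodule.span_induction (p := fun p _ => (H.sm p.1 a, H'.sm p.2 a) ∈ R) ?_ ?_ ?_ ?_ hp
    · rintro _ ⟨x, v, rfl⟩
      have e1 : H.sm (D x v) a = D x (smV v a) := ((hD x).map_sm v a).symm
      have e2 : H'.sm (D' x v) a = D' x (smV v a) := ((hD' x).map_sm v a).symm
      show (H.sm (D x v) a, H'.sm (D' x v) a) ∈ R
      rw [e1, e2]
      exact Submodule.subset_span ⟨x, smV v a, rfl⟩
    · show (H.sm 0 a, H'.sm 0 a) ∈ R
      rw [H.sm_zero', H'.sm_zero']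
      exact zero_mem R
    · intro b c _ _ ihb ihc
      show (H.sm (b.1 + c.1) a, H'.sm (b.2 + c.2) a) ∈ R
      rw [H.rightModule.add_sm, H'.rightModule.add_sm]
      exact add_mem ihb ihc
    · intro c b _ ihb
      show (H.sm (c • b.1) a, H'.sm (c • b.2) a) ∈ R
      rw [← H.rightModule.smul_sm, ← H'.rightModule.smul_sm]
      exact Submodule.smul_mem R c ihb
  -- the graph relation
  set G : H.M → H'.M → Prop := fun m m' => ∀ ε : ℝ, 0 < ε →
    ∃ p ∈ (R : Set (H.M × H'.M)), H.nr (m - p.1) < ε ∧ H'.nr (m' - p.2) < ε with hG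
  have happrox : ∀ m : H.M, ∀ ε : ℝ, 0 < ε → ∃ p ∈ (R : Set (H.M × H'.M)), H.nr (m - p.1) < ε := by
    intro m ε hε
    obtain ⟨w, hw, hwlt⟩ := hdense m (ε ^ 2) (by positivity)
    obtain ⟨w', hww'⟩ := hfst w hw
    refine ⟨(w, w'), hww', ?_⟩
    show H.nr (m - w) < ε
    have hsq := H.nr_sq (m - w)
    nlinarith [H.nr_nonneg (m - w)]
  have happrox' : ∀ m' : H'.M, ∀ ε : ℝ, 0 < ε →
      ∃ p ∈ Prod.swap '' (R : Set (H.M × H'.M)), H'.nr (m' - p.1) < ε := by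
    intro m' ε hε
    obtain ⟨w, hw, hwlt⟩ := hdense' m' (ε ^ 2) (by positivity)
    obtain ⟨w', hww'⟩ := hsnd w hw
    refine ⟨(w, w'), ⟨(w', w), hww', rfl⟩, ?_⟩
    show H'.nr (m' - w) < ε
    have hsq := H'.nr_sq (m' - w)
    nlinarith [H'.nr_nonneg (m' - w)]
  have hGex : ∀ m : H.M, ∃ m', G m m' := fun m =>
    exists_pair H H' (R : Set (H.M × H'.M)) hdiff m (happrox m)
  have hGex' : ∀ m' : H'.M, ∃ m, G m m' := by
    intro m'
    obtain ⟨m, hm⟩ := exists_pair H' H (Prod.swap '' (R : Set (H.M × H'.M))) hdiff' m' (happrox' m')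
    refine ⟨m, fun ε hε => ?_⟩
    obtain ⟨p, hpmem, h1, h2⟩ := hm ε hε
    obtain ⟨q, hq, rfl⟩ := hpmem
    exact ⟨q, hq, h2, h1⟩
  have hGuniq : ∀ (m : H.M) (m' m'' : H'.M), G m m' → G m m'' → m' = m'' := by
    intro m m' m'' h1 h2
    have key : ∀ ε : ℝ, 0 < ε → H'.nr (m' - m'') < 4 * ε := by
      intro ε hε
      obtain ⟨p, hpR, hp1, hp2⟩ := h1 ε hε
      obtain ⟨q, hqR, hq1, hq2⟩ := h2 ε hε
      have hpq : H'.nr (p.2 - q.2) = H.nr (p.1 - q.1) := hdiff p hpR q hqR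
      have t1 : H.nr (p.1 - q.1) ≤ H.nr (p.1 - m) + H.nr (m - q.1) := H.nr_sub_le _ _ _
      have t2 : H.nr (p.1 - m) = H.nr (m - p.1) := H.nr_sub_comm _ _
      have t3 : H'.nr (m' - m'') ≤ H'.nr (m' - p.2) + H'.nr (p.2 - m'') := H'.nr_sub_le _ _ _
      have t4 : H'.nr (p.2 - m'') ≤ H'.nr (p.2 - q.2) + H'.nr (q.2 - m'') := H'.nr_sub_le _ _ _
      have t5 : H'.nr (q.2 - m'') = H'.nr (m'' - q.2) := H'.nr_sub_comm _ _
      linarith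
    have hz : H'.nr (m' - m'') = 0 := by
      by_contra hne
      have hpos : 0 < H'.nr (m' - m'') := lt_of_le_of_ne (H'.nr_nonneg _) (Ne.symm hne)
      have := key (H'.nr (m' - m'') / 5) (by positivity)
      linarith
    exact sub_eq_zero.mp (H'.nr_eq_zero _ hz)
  -- G preserves inner products
  have hGinner : ∀ (m n : H.M) (m' n' : H'.M), G m m' → G n n' →
      H'.inner m' n' = H.inner m n := by
    intro m n m' n' h1 h2
    have key : ∀ ε : ℝ, 0 < ε → ‖H'.inner m' n' - H.inner m n‖ < ε := by
      intro ε hε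
      set C : ℝ := H'.nr m' + H'.nr n' + H.nr m + H.nr n + 2 with hC
      have hC2 : (2:ℝ) ≤ C := by
        have := H'.nr_nonneg m'
        have := H'.nr_nonneg n'
        have := H.nr_nonneg m
        have := H.nr_nonneg n
        linarith
      set δ : ℝ := min (ε / (2 * C)) 1 with hδ
      have hδpos : 0 < δ := by
        apply lt_min
        · positivity
        · norm_num
      have hδ1 : δ ≤ 1 := min_le_right _ _
      have hδε : δ * C ≤ ε / 2 := by
        have h1 : δ ≤ ε / (2 * C) := min_le_left _ _
        have hCpos : (0:ℝ) < C := by linarith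
        calc δ * C ≤ (ε / (2 * C)) * C := by
              apply mul_le_mul_of_nonneg_right h1 hCpos.le
          _ = ε / 2 := by field_simp
      obtain ⟨p, hpR, hp1, hp2⟩ := h1 δ hδpos
      obtain ⟨q, hqR, hq1, hq2⟩ := h2 δ hδpos
      have hiso1 : H'.inner p.2 q.2 = H.inner p.1 q.1 := hiso p hpR q hqR
      -- first half estimate
      have e1 : H'.inner m' n' - H'.inner p.2 q.2
          = H'.inner (m' - p.2) n' + H'.inner p.2 (n' - q.2) := by
        rw [H'.inner_sub_left', H'.inner_sub_right']
        abel
      have hb1 : ‖H'.inner (m' - p.2) n'‖ ≤ δ * H'.nr n' := by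
        calc ‖H'.inner (m' - p.2) n'‖ ≤ H'.nr (m' - p.2) * H'.nr n' := H'.norm_inner_le _ _
          _ ≤ δ * H'.nr n' := mul_le_mul_of_nonneg_right hp2.le (H'.nr_nonneg _)
      have hp2' : H'.nr p.2 ≤ H'.nr m' + 1 := by
        have e : p.2 = (p.2 - m') + m' := by abel
        calc H'.nr p.2 = H'.nr ((p.2 - m') + m') := by rw [← e]
          _ ≤ H'.nr (p.2 - m') + H'.nr m' := H'.nr_add_le _ _
          _ ≤ H'.nr m' + 1 := by
              have : H'.nr (p.2 - m') = H'.nr (m' - p.2) := H'.nr_sub_comm _ _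
              linarith
      have hb2 : ‖H'.inner p.2 (n' - q.2)‖ ≤ (H'.nr m' + 1) * δ := by
        calc ‖H'.inner p.2 (n' - q.2)‖ ≤ H'.nr p.2 * H'.nr (n' - q.2) := H'.norm_inner_le _ _
          _ ≤ (H'.nr m' + 1) * δ := by
              apply mul_le_mul hp2' hq2.le (H'.nr_nonneg _)
              have := H'.nr_nonneg m'
              linarith
      have ha1 : ‖H'.inner m' n' - H'.inner p.2 q.2‖ ≤ δ * H'.nr n' + (H'.nr m' + 1) * δ := by
        rw [e1]
        calc ‖H'.inner (m' - p.2) n' + H'.inner p.2 (n' - q.2)‖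
            ≤ ‖H'.inner (m' - p.2) n'‖ + ‖H'.inner p.2 (n' - q.2)‖ := norm_add_le _ _
          _ ≤ δ * H'.nr n' + (H'.nr m' + 1) * δ := add_le_add hb1 hb2
      -- second half estimate
      have e2 : H.inner p.1 q.1 - H.inner m n
          = H.inner (p.1 - m) q.1 + H.inner m (q.1 - n) := by
        rw [H.inner_sub_left', H.inner_sub_right']
        abel
      have hq1' : H.nr q.1 ≤ H.nr n + 1 := by
        have e : q.1 = (q.1 - n) + n := by abel
        calc H.nr q.1 = H.nr ((q.1 - n) + n) := by rw [← e]
          _ ≤ H.nr (q.1 - n) + H.nr n := H.nr_add_le _ _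
          _ ≤ H.nr n + 1 := by
              have : H.nr (q.1 - n) = H.nr (n - q.1) := H.nr_sub_comm _ _
              linarith
      have hb3 : ‖H.inner (p.1 - m) q.1‖ ≤ δ * (H.nr n + 1) := by
        calc ‖H.inner (p.1 - m) q.1‖ ≤ H.nr (p.1 - m) * H.nr q.1 := H.norm_inner_le _ _
          _ ≤ δ * (H.nr n + 1) := by
              apply mul_le_mul _ hq1' (H.nr_nonneg _) hδpos.le
              have : H.nr (p.1 - m) = H.nr (m - p.1) := H.nr_sub_comm _ _
              linarith
      have hb4 : ‖H.inner m (q.1 - n)‖ ≤ H.nr m * δ := by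
        calc ‖H.inner m (q.1 - n)‖ ≤ H.nr m * H.nr (q.1 - n) := H.norm_inner_le _ _
          _ ≤ H.nr m * δ := by
              apply mul_le_mul_of_nonneg_left _ (H.nr_nonneg _)
              have : H.nr (q.1 - n) = H.nr (n - q.1) := H.nr_sub_comm _ _
              linarith
      have ha2 : ‖H.inner p.1 q.1 - H.inner m n‖ ≤ δ * (H.nr n + 1) + H.nr m * δ := by
        rw [e2]
        calc ‖H.inner (p.1 - m) q.1 + H.inner m (q.1 - n)‖
            ≤ ‖H.inner (p.1 - m) q.1‖ + ‖H.inner m (q.1 - n)‖ := norm_add_le _ _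
          _ ≤ δ * (H.nr n + 1) + H.nr m * δ := add_le_add hb3 hb4
      have htot : ‖H'.inner m' n' - H.inner m n‖
          ≤ ‖H'.inner m' n' - H'.inner p.2 q.2‖ + ‖H.inner p.1 q.1 - H.inner m n‖ := by
        have e : H'.inner m' n' - H.inner m n
            = (H'.inner m' n' - H'.inner p.2 q.2) + (H.inner p.1 q.1 - H.inner m n) := by
          rw [hiso1]
          abel
        rw [e]
        exact norm_add_le _ _
      have hfin : δ * H'.nr n' + (H'.nr m' + 1) * δ + (δ * (H.nr n + 1) + H.nr m * δ)
          = δ * C := by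
        rw [hC]
        ring
      calc ‖H'.inner m' n' - H.inner m n‖
          ≤ δ * H'.nr n' + (H'.nr m' + 1) * δ + (δ * (H.nr n + 1) + H.nr m * δ) := by
            linarith
        _ = δ * C := hfin
        _ ≤ ε / 2 := hδε
        _ < ε := by linarith
    by_contra hne
    have hpos : 0 < ‖H'.inner m' n' - H.inner m n‖ := by
      rw [norm_pos_iff, sub_ne_zero]
      exact hne
    have := key _ hpos
    linarith
  -- G is a graph of generators
  have hGgen : ∀ x v, G (D x v) (D' x v) := by
    intro x v ε hε
    refine ⟨(D x v, D' x v), Submodule.subset_span ⟨x, v, rfl⟩, ?_, ?_⟩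
    · show H.nr (D x v - D x v) < ε
      rw [sub_self, H.nr_zero]
      exact hε
    · show H'.nr (D' x v - D' x v) < ε
      rw [sub_self, H'.nr_zero]
      exact hε
  -- closure properties of G
  have hGadd : ∀ m n m' n', G m m' → G n n' → G (m + n) (m' + n') := by
    intro m n m' n' h1 h2 ε hε
    obtain ⟨p, hpR, hp1, hp2⟩ := h1 (ε / 2) (by positivity)
    obtain ⟨q, hqR, hq1, hq2⟩ := h2 (ε / 2) (by positivity)
    refine ⟨p + q, add_mem hpR hqR, ?_, ?_⟩
    · show H.nr (m + n - (p.1 + q.1)) < ε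
      have e : m + n - (p.1 + q.1) = (m - p.1) + (n - q.1) := by abel
      rw [e]
      calc H.nr ((m - p.1) + (n - q.1)) ≤ H.nr (m - p.1) + H.nr (n - q.1) := H.nr_add_le _ _
        _ < ε := by linarith
    · show H'.nr (m' + n' - (p.2 + q.2)) < ε
      have e : m' + n' - (p.2 + q.2) = (m' - p.2) + (n' - q.2) := by abel
      rw [e]
      calc H'.nr ((m' - p.2) + (n' - q.2)) ≤ H'.nr (m' - p.2) + H'.nr (n' - q.2) := H'.nr_add_le _ _
        _ < ε := by linarith
  have hGsmul : ∀ (c : ℂ) m m', G m m' → G (c • m) (c • m') := by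
    intro c m m' h1 ε hε
    have hδpos : (0:ℝ) < ε / (‖c‖ + 1) := by positivity
    obtain ⟨p, hpR, hp1, hp2⟩ := h1 _ hδpos
    refine ⟨c • p, Submodule.smul_mem R c hpR, ?_, ?_⟩
    · show H.nr (c • m - c • p.1) < ε
      have e : c • m - c • p.1 = c • (m - p.1) := by rw [smul_sub]
      rw [e, H.nr_smul]
      have h2 : ‖c‖ * H.nr (m - p.1) ≤ ‖c‖ * (ε / (‖c‖ + 1)) :=
        mul_le_mul_of_nonneg_left hp1.le (norm_nonneg c)
      have h3 : ‖c‖ * (ε / (‖c‖ + 1)) < (‖c‖ + 1) * (ε / (‖c‖ + 1)) := by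
        apply mul_lt_mul_of_pos_right _ hδpos
        linarith
      have h4 : (‖c‖ + 1) * (ε / (‖c‖ + 1)) = ε := by
        field_simp
      linarith
    · show H'.nr (c • m' - c • p.2) < ε
      have e : c • m' - c • p.2 = c • (m' - p.2) := by rw [smul_sub]
      rw [e, H'.nr_smul]
      have h2 : ‖c‖ * H'.nr (m' - p.2) ≤ ‖c‖ * (ε / (‖c‖ + 1)) :=
        mul_le_mul_of_nonneg_left hp2.le (norm_nonneg c)
      have h3 : ‖c‖ * (ε / (‖c‖ + 1)) < (‖c‖ + 1) * (ε / (‖c‖ + 1)) := by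
        apply mul_lt_mul_of_pos_right _ hδpos
        linarith
      have h4 : (‖c‖ + 1) * (ε / (‖c‖ + 1)) = ε := by
        field_simp
      linarith
  have hGsm : ∀ (a : A) m m', G m m' → G (H.sm m a) (H'.sm m' a) := by
    intro a m m' h1 ε hε
    have hδpos : (0:ℝ) < ε / (‖a‖ + 1) := by positivity
    obtain ⟨p, hpR, hp1, hp2⟩ := h1 _ hδpos
    refine ⟨(H.sm p.1 a, H'.sm p.2 a), hsmR a p hpR, ?_, ?_⟩
    · show H.nr (H.sm m a - H.sm p.1 a) < ε
      rw [← H.sm_sub']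
      have h2 : H.nr (H.sm (m - p.1) a) ≤ ‖a‖ * H.nr (m - p.1) := H.nr_sm_le _ _
      have h3 : ‖a‖ * H.nr (m - p.1) ≤ ‖a‖ * (ε / (‖a‖ + 1)) :=
        mul_le_mul_of_nonneg_left hp1.le (norm_nonneg a)
      have h4 : ‖a‖ * (ε / (‖a‖ + 1)) < (‖a‖ + 1) * (ε / (‖a‖ + 1)) := by
        apply mul_lt_mul_of_pos_right _ hδpos
        linarith
      have h5 : (‖a‖ + 1) * (ε / (‖a‖ + 1)) = ε := by field_simp
      linarith
    · show H'.nr (H'.sm m' a - H'.sm p.2 a) < ε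
      rw [← H'.sm_sub']
      have h2 : H'.nr (H'.sm (m' - p.2) a) ≤ ‖a‖ * H'.nr (m' - p.2) := H'.nr_sm_le _ _
      have h3 : ‖a‖ * H'.nr (m' - p.2) ≤ ‖a‖ * (ε / (‖a‖ + 1)) :=
        mul_le_mul_of_nonneg_left hp2.le (norm_nonneg a)
      have h4 : ‖a‖ * (ε / (‖a‖ + 1)) < (‖a‖ + 1) * (ε / (‖a‖ + 1)) := by
        apply mul_lt_mul_of_pos_right _ hδpos
        linarith
      have h5 : (‖a‖ + 1) * (ε / (‖a‖ + 1)) = ε := by field_simp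
      linarith
  -- define U
  set U : H.M → H'.M := fun m => Classical.choose (hGex m) with hU
  have hUspec : ∀ m, G m (U m) := fun m => Classical.choose_spec (hGex m)
  have hUadd : ∀ m n, U (m + n) = U m + U n := fun m n =>
    hGuniq (m + n) _ _ (hUspec (m + n)) (hGadd m n (U m) (U n) (hUspec m) (hUspec n))
  have hUsmul : ∀ (c : ℂ) m, U (c • m) = c • U m := fun c m =>
    hGuniq (c • m) _ _ (hUspec (c • m)) (hGsmul c m (U m) (hUspec m))
  have hUsm : ∀ m a, U (H.sm m a) = H'.sm (U m) a := fun m a =>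
    hGuniq (H.sm m a) _ _ (hUspec (H.sm m a)) (hGsm a m (U m) (hUspec m))
  have hUinner : ∀ m n, H'.inner (U m) (U n) = H.inner m n := fun m n =>
    hGinner m n (U m) (U n) (hUspec m) (hUspec n)
  have hUD : ∀ x v, U (D x v) = D' x v := fun x v =>
    hGuniq (D x v) _ _ (hUspec (D x v)) (hGgen x v)
  have hUinj : Function.Injective U := by
    intro m n hmn
    have e : H.inner (m - n) (m - n) = H'.inner (U m - U n) (U m - U n) := by
      rw [H.inner_sub_left', H.inner_sub_right', H.inner_sub_right',
        H'.inner_sub_left', H'.inner_sub_right', H'.inner_sub_right',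
        hUinner, hUinner, hUinner, hUinner]
    rw [hmn, sub_self, H'.inner_zero_right'] at e
    exact sub_eq_zero.mp (H.inner_definite _ e)
  have hUsurj : Function.Surjective U := by
    intro m'
    obtain ⟨m, hm⟩ := hGex' m'
    exact ⟨m, hGuniq m _ _ (hUspec m) hm⟩
  exact ⟨U, ⟨⟨hUinj, hUsurj⟩, ⟨hUadd, hUsmul, hUsm⟩, hUinner⟩, hUD⟩
end

section
/- Let A be a C*-algebra, V a right A-module, B a unital C*-algebra, and E : B → S_A(V) a completely positive map. Then there exist a Hilbert C*-module M over A, a unital *-homomorphism π : B → L_A(M) (i.e. π(1_B) = id_M), and a map J ∈ Lin_A(V,M) such that (i) E(b)(v,v') = ⟨Jv | π(b)Jv'⟩ for all b ∈ B and v,v' ∈ V, and (ii) the ℂ-linear span of {π(b)Jv : b ∈ B, v ∈ V} is dense in M. -/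
variable (A : Type) [NonUnitalCStarAlgebra A] [PartialOrder A] [StarOrderedRing A]

variable {A}

/-- Complete positivity of a ℂ-linear map `E : B → S_A(V)`: for every positive matrix
`(b_ij) ∈ M_n(B)` and all `v_1,…,v_n ∈ V`, the matrix `(E(b_ij)(v_i,v_j))_{i,j}` is
positive in `M_n(A)`. -/
def CompPos {B V A : Type} [NonUnitalRing B] [StarRing B]
    [AddCommGroup V] [Module ℂ V] [NonUnitalRing A] [StarRing A]
    (E : B → V → V → A) : Prop :=
  ∀ (n : ℕ) (b : Matrix (Fin n) (Fin n) B), AlgPos b →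
    ∀ v : Fin n → V, AlgPos (Matrix.of fun i j => E (b i j) (v i) (v j))

/-- ℂ-linearity of `E : B → S(V;A)`. -/
structure IsLinearSesqValued {B V A : Type} [AddCommGroup B] [Module ℂ B]
    [AddCommGroup V] [Module ℂ V] [AddCommGroup A] [Module ℂ A]
    (E : B → V → V → A) : Prop where
  map_add : ∀ b b' v v', E (b + b') v v' = E b v v' + E b' v v'
  map_smul : ∀ (c : ℂ) b v v', E (c • b) v v' = c • E b v v'

/-- `π b` is adjointable with adjoint `π (star b)`, `π` is ℂ-linear and multiplicative;
this says precisely that `π : B → L_A(M)` is a *-homomorphism into the adjointable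
operators on `M`. -/
structure IsStarHomIntoAdjointables {B : Type} [NonUnitalRing B] [Module ℂ B] [StarRing B]
    (H : HilbertCStarModule A) (π : B → H.M → H.M) : Prop where
  adjoint : ∀ b m m', H.inner (π b m) m' = H.inner m (π (star b) m')
  map_add : ∀ b b' m, π (b + b') m = π b m + π b' m
  map_smul : ∀ (c : ℂ) b m, π (c • b) m = c • π b m
  map_mul : ∀ b b' m, π (b * b') m = π b (π b' m)

noncomputable section
namespace KSGNS
set_option linter.unusedSectionVars false
set_option maxHeartbeats 1000000
set_option synthInstance.maxHeartbeats 400000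

open Finsupp UniformSpace Finset

variable {A B V : Type} [NonUnitalCStarAlgebra A] [PartialOrder A] [StarOrderedRing A]
  [CStarAlgebra B] [AddCommGroup V] [Module ℂ V]

structure Setting (A B V : Type) [NonUnitalCStarAlgebra A] [PartialOrder A]
    [StarOrderedRing A] [CStarAlgebra B] [AddCommGroup V] [Module ℂ V] : Type where
  smV : V → A → V
  E : B → V → V → A
  hV : IsRightModule A smV
  hlin : IsLinearSesqValued E
  hsesq : ∀ b, IsASesq smV (E b)
  hcp : CompPos E

noncomputable instance : PartialOrder B := CStarAlgebra.spectralOrder B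
noncomputable instance : StarOrderedRing B := CStarAlgebra.spectralOrderedRing B

variable (S : Setting A B V)

abbrev W (B V : Type) : Type := (B × V) →₀ ℂ
def kern (p q : B × V) : A := S.E (star p.1 * q.1) p.2 q.2

lemma E_zero (v v' : V) : S.E 0 v v' = 0 := by
  have := S.hlin.map_add 0 0 v v'
  simpa using this.symm

lemma algPos_star_mul {n : ℕ} (g : Fin n → B) :
    AlgPos (Matrix.of fun i j => star (g i) * g j) := by
  classical
  cases n with
  | zero => exact ⟨0, Fin.elim0, Subsingleton.elim _ _⟩
  | succ m =>
    refine ⟨1, ![Matrix.of fun i j => if i = 0 then g j else 0], ?_⟩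
    ext i j
    rw [Fin.sum_univ_one]
    simp only [Matrix.cons_val_zero, Matrix.mul_apply, Matrix.star_apply, Matrix.of_apply]
    rw [Finset.sum_eq_single (0 : Fin (m + 1))]
    · simp
    · intro k _ hk; simp [hk]
    · intro h; exact absurd (Finset.mem_univ _) h

lemma E_herm (b : B) (v v' : V) : star (S.E b v v') = S.E (star b) v' v := by
  suffices key : ∀ (b : B) (v v' : V), star (S.E (star b) v' v) = S.E b v v' by
    rw [← key b v v', star_star]
  intro b v v'
  classical
  set c : Fin 2 → B := ![1, b] with hc
  set vv : Fin 2 → V := ![v, v'] with hvv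
  obtain ⟨k, g, hg⟩ := S.hcp 2 _ (algPos_star_mul c) vv
  set P : Matrix (Fin 2) (Fin 2) A :=
    Matrix.of fun i j => S.E ((Matrix.of fun i j : Fin 2 => star (c i) * c j) i j)
      (vv i) (vv j) with hP
  have hsa : star P = P := by
    rw [hg, star_sum]
    exact Finset.sum_congr rfl fun i _ => by rw [star_mul, star_star]
  have h2 : star (P 1 0) = P 0 1 := by
    rw [← Matrix.star_apply, hsa]
  have e10 : P 1 0 = S.E (star b) v' v := by
    simp [hP, hc, hvv]
  have e01 : P 0 1 = S.E b v v' := by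
    simp [hP, hc, hvv]
  rw [e10, e01] at h2
  exact h2

lemma kern_conj (p q : B × V) : star (kern S p q) = kern S q p := by
  rw [kern, E_herm, star_mul, star_star]; rfl

def ip (f g : W B V) : A :=
  f.sum fun p c => g.sum fun q d => (starRingEnd ℂ c * d) • kern S p q

lemma ip_eq {f g : W B V} {s t : Finset (B × V)} (hs : f.support ⊆ s) (ht : g.support ⊆ t) :
    ip S f g = ∑ p ∈ s, ∑ q ∈ t, (starRingEnd ℂ (f p) * g q) • kern S p q := by
  rw [ip, Finsupp.sum]
  rw [Finset.sum_subset hs (fun p _ hp => by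
    rw [Finsupp.notMem_support_iff.mp hp]
    simp [Finsupp.sum])]
  refine Finset.sum_congr rfl fun p _ => ?_
  rw [Finsupp.sum]
  refine Finset.sum_subset ht (fun q _ hq => by
    rw [Finsupp.notMem_support_iff.mp hq]; simp)

lemma ip_add_left (f f' g : W B V) : ip S (f + f') g = ip S f g + ip S f' g := by
  classical
  rw [ip_eq S (Finsupp.support_add (g₁ := f) (g₂ := f')) (subset_refl g.support),
    ip_eq S (Finset.subset_union_left (s₁ := f.support) (s₂ := f'.support)) (subset_refl _),
    ip_eq S (Finset.subset_union_right (s₁ := f.support) (s₂ := f'.support)) (subset_refl _),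
    ← Finset.sum_add_distrib]
  refine Finset.sum_congr rfl fun p _ => ?_
  rw [← Finset.sum_add_distrib]
  refine Finset.sum_congr rfl fun q _ => ?_
  rw [Finsupp.add_apply, map_add, add_mul, add_smul]

lemma ip_add_right (f g g' : W B V) : ip S f (g + g') = ip S f g + ip S f g' := by
  classical
  rw [ip_eq S (subset_refl f.support) (Finsupp.support_add (g₁ := g) (g₂ := g')),
    ip_eq S (subset_refl f.support) (Finset.subset_union_left (s₁ := g.support) (s₂ := g'.support)),
    ip_eq S (subset_refl f.support)
      (Finset.subset_union_right (s₁ := g.support) (s₂ := g'.support)),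
    ← Finset.sum_add_distrib]
  refine Finset.sum_congr rfl fun p _ => ?_
  rw [← Finset.sum_add_distrib]
  refine Finset.sum_congr rfl fun q _ => ?_
  rw [Finsupp.add_apply, mul_add, add_smul]

lemma ip_zero_left (g : W B V) : ip S 0 g = 0 := by simp [ip, Finsupp.sum]

lemma ip_zero_right (f : W B V) : ip S f 0 = 0 := by simp [ip, Finsupp.sum]

lemma ip_smul_left (c : ℂ) (f g : W B V) :
    ip S (c • f) g = starRingEnd ℂ c • ip S f g := by
  rw [ip_eq S (Finsupp.support_smul (b := c) (g := f)) (subset_refl g.support),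
    ip_eq S (subset_refl f.support) (subset_refl g.support), Finset.smul_sum]
  refine Finset.sum_congr rfl fun p _ => ?_
  rw [Finset.smul_sum]
  refine Finset.sum_congr rfl fun q _ => ?_
  rw [Finsupp.smul_apply, smul_eq_mul, map_mul, mul_assoc, mul_smul]

lemma ip_smul_right (c : ℂ) (f g : W B V) : ip S f (c • g) = c • ip S f g := by
  rw [ip_eq S (subset_refl f.support) (Finsupp.support_smul (b := c) (g := g)),
    ip_eq S (subset_refl f.support) (subset_refl g.support), Finset.smul_sum]
  refine Finset.sum_congr rfl fun p _ => ?_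
  rw [Finset.smul_sum]
  refine Finset.sum_congr rfl fun q _ => ?_
  rw [Finsupp.smul_apply, smul_eq_mul, ← mul_assoc, mul_comm _ c, mul_assoc, mul_smul]

lemma ip_single_single (p q : B × V) (c d : ℂ) :
    ip S (Finsupp.single p c) (Finsupp.single q d) = (starRingEnd ℂ c * d) • kern S p q := by
  classical
  rw [ip_eq S (Finsupp.support_single_subset) (Finsupp.support_single_subset)]
  simp

lemma ip_conj (f g : W B V) : star (ip S f g) = ip S g f := by
  rw [ip_eq S (subset_refl f.support) (subset_refl g.support),
    ip_eq S (subset_refl g.support) (subset_refl f.support), star_sum, Finset.sum_comm]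
  refine Finset.sum_congr rfl fun q _ => ?_
  rw [star_sum]
  refine Finset.sum_congr rfl fun p _ => ?_
  rw [star_smul, kern_conj, star_mul']
  simp only [Complex.star_def, Complex.conj_conj]
  rw [mul_comm]

def ipHomL (g : W B V) : W B V →+ A :=
  AddMonoidHom.mk' (fun f => ip S f g) (fun a b => ip_add_left S a b g)

def ipHomR (f : W B V) : W B V →+ A :=
  AddMonoidHom.mk' (fun g => ip S f g) (fun a b => ip_add_right S f a b)

lemma ip_sub_left (f f' g : W B V) : ip S (f - f') g = ip S f g - ip S f' g :=
  map_sub (ipHomL S g) f f'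

lemma ip_sub_right (f g g' : W B V) : ip S f (g - g') = ip S f g - ip S f g' :=
  map_sub (ipHomR S f) g g'

lemma ip_self_selfAdjoint (f : W B V) : IsSelfAdjoint (ip S f f) := ip_conj S f f

/-- the module action on `W` -/
def smW (a : A) : W B V → W B V := Finsupp.mapDomain fun p => (p.1, S.smV p.2 a)

/-- the `B`-representation on `W` -/
def piW (b : B) : W B V → W B V := Finsupp.mapDomain fun p : B × V => (b * p.1, p.2)

/-- the map `J` into `W` -/
def JW (v : V) : W B V := Finsupp.single ((1 : B), v) 1

lemma ip_mapDomain₂ (h h' : B × V → B × V) (f g : W B V) :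
    ip S (Finsupp.mapDomain h f) (Finsupp.mapDomain h' g)
      = ∑ p ∈ f.support, ∑ q ∈ g.support,
          (starRingEnd ℂ (f p) * g q) • kern S (h p) (h' q) := by
  classical
  rw [Finsupp.mapDomain]
  show (ipHomL S (Finsupp.mapDomain h' g)) (f.sum fun a => Finsupp.single (h a)) = _
  rw [map_finsuppSum (ipHomL S (Finsupp.mapDomain h' g)) f (fun a => Finsupp.single (h a))]
  rw [Finsupp.sum]
  refine Finset.sum_congr rfl fun p _ => ?_
  show ip S (Finsupp.single (h p) (f p)) (Finsupp.mapDomain h' g) = _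
  rw [Finsupp.mapDomain]
  show (ipHomR S (Finsupp.single (h p) (f p))) (g.sum fun a => Finsupp.single (h' a)) = _
  rw [map_finsuppSum (ipHomR S (Finsupp.single (h p) (f p))) g (fun a => Finsupp.single (h' a))]
  rw [Finsupp.sum]
  refine Finset.sum_congr rfl fun q _ => ?_
  show ip S (Finsupp.single (h p) (f p)) (Finsupp.single (h' q) (g q)) = _
  rw [ip_single_single]

lemma ip_mapDomain_left (h : B × V → B × V) (f g : W B V) :
    ip S (Finsupp.mapDomain h f) g
      = ∑ p ∈ f.support, ∑ q ∈ g.support,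
          (starRingEnd ℂ (f p) * g q) • kern S (h p) q := by
  have := ip_mapDomain₂ S h id f g
  rwa [Finsupp.mapDomain_id] at this

lemma ip_mapDomain_right (h : B × V → B × V) (f g : W B V) :
    ip S f (Finsupp.mapDomain h g)
      = ∑ p ∈ f.support, ∑ q ∈ g.support,
          (starRingEnd ℂ (f p) * g q) • kern S p (h q) := by
  have := ip_mapDomain₂ S id h f g
  rwa [Finsupp.mapDomain_id] at this

lemma ip_smW_left (a : A) (f g : W B V) : ip S (smW S a f) g = star a * ip S f g := by
  rw [smW, ip_mapDomain_left, ip_eq S (subset_refl _) (subset_refl _), Finset.mul_sum]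
  refine Finset.sum_congr rfl fun p _ => ?_
  rw [Finset.mul_sum]
  refine Finset.sum_congr rfl fun q _ => ?_
  rw [mul_smul_comm]
  congr 1
  rw [kern, kern]
  exact (S.hsesq _).sm_left _ _ _

lemma ip_smW_right (a : A) (f g : W B V) : ip S f (smW S a g) = ip S f g * a :=
  calc ip S f (smW S a g) = star (ip S (smW S a g) f) := (ip_conj S (smW S a g) f).symm
    _ = star (star a * ip S g f) := by rw [ip_smW_left]
    _ = star (ip S g f) * star (star a) := star_mul _ _
    _ = ip S f g * a := by rw [star_star, ip_conj]

lemma ip_piW_left (b : B) (f g : W B V) : ip S (piW b f) g = ip S f (piW (star b) g) := by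
  rw [piW, piW, ip_mapDomain_left, ip_mapDomain_right]
  refine Finset.sum_congr rfl fun p _ => Finset.sum_congr rfl fun q _ => ?_
  congr 1
  rw [kern, kern, star_mul, mul_assoc]

lemma piW_mul (b b' : B) (f : W B V) : piW (b * b') f = piW b (piW b' f) := by
  rw [piW, piW, piW, ← Finsupp.mapDomain_comp]
  congr 1
  funext p
  simp [Function.comp, mul_assoc]

lemma piW_one (f : W B V) : piW 1 f = f := by
  rw [piW]
  have : (fun p : B × V => ((1:B) * p.1, p.2)) = id := by funext p; simp
  rw [this, Finsupp.mapDomain_id]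

lemma smW_mul (a a' : A) (f : W B V) : smW S (a * a') f = smW S a' (smW S a f) := by
  rw [smW, smW, smW, ← Finsupp.mapDomain_comp]
  congr 1
  funext p
  simp [Function.comp, S.hV.sm_mul]

lemma smW_add_f (a : A) (f f' : W B V) : smW S a (f + f') = smW S a f + smW S a f' :=
  Finsupp.mapDomain_add

lemma smW_smul_f (c : ℂ) (a : A) (f : W B V) : smW S a (c • f) = c • smW S a f :=
  Finsupp.mapDomain_smul c f

lemma piW_add_f (b : B) (f f' : W B V) : piW b (f + f') = piW b f + piW b f' :=
  Finsupp.mapDomain_add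

lemma piW_smul_f (c : ℂ) (b : B) (f : W B V) : piW b (c • f) = c • piW b f :=
  Finsupp.mapDomain_smul c f

lemma JW_sm (a : A) (v : V) : JW (S.smV v a) = smW S a (JW v) := by
  rw [JW, JW, smW, Finsupp.mapDomain_single]

lemma piW_JW (b : B) (v : V) : piW b (JW v) = Finsupp.single (b, v) 1 := by
  rw [JW, piW, Finsupp.mapDomain_single, mul_one]

lemma ip_reproduce (b : B) (v v' : V) :
    ip S (JW v) (piW b (JW v')) = S.E b v v' := by
  rw [piW_JW, JW, ip_single_single, kern]
  simp

/-- single as a `ip`-right factor -/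
lemma ip_single_right (g : W B V) (q : B × V) (d : ℂ) :
    ip S g (Finsupp.single q d)
      = ∑ p ∈ g.support, (starRingEnd ℂ (g p) * d) • kern S p q := by
  classical
  rw [ip_eq S (subset_refl _) (Finsupp.support_single_subset)]
  refine Finset.sum_congr rfl fun p _ => ?_
  rw [Finset.sum_singleton, Finsupp.single_eq_same]

/-- sum of all entries of an algebraically positive matrix is positive -/
lemma algPos_sum_entries {n : ℕ} (M : Matrix (Fin n) (Fin n) A) (h : AlgPos M) :
    0 ≤ ∑ i, ∑ j, M i j := by
  obtain ⟨k, g, rfl⟩ := h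
  have aux : ∀ G : Matrix (Fin n) (Fin n) A, 0 ≤ ∑ i, ∑ j, (star G * G) i j := by
    intro G
    have : ∑ i, ∑ j, (star G * G) i j = ∑ m, star (∑ i, G m i) * (∑ j, G m j) := by
      simp_rw [Matrix.mul_apply, Matrix.star_apply, star_sum, Finset.sum_mul, Finset.mul_sum]
      calc ∑ i : Fin n, ∑ j : Fin n, ∑ m : Fin n, star (G m i) * G m j
          = ∑ i : Fin n, ∑ m : Fin n, ∑ j : Fin n, star (G m i) * G m j :=
            Finset.sum_congr rfl fun i _ => Finset.sum_comm
        _ = ∑ m, ∑ i, ∑ j, star (G m i) * G m j := Finset.sum_comm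
    rw [this]
    exact Finset.sum_nonneg fun m _ => star_mul_self_nonneg _
  have expand : ∑ i, ∑ j, (∑ l, star (g l) * g l) i j
      = ∑ l, ∑ i, ∑ j, (star (g l) * g l) i j := by
    simp_rw [Matrix.sum_apply]
    calc ∑ i : Fin n, ∑ j : Fin n, ∑ l : Fin k, (star (g l) * g l) i j
        = ∑ i : Fin n, ∑ l : Fin k, ∑ j : Fin n, (star (g l) * g l) i j :=
          Finset.sum_congr rfl fun i _ => Finset.sum_comm
      _ = ∑ l, ∑ i, ∑ j, (star (g l) * g l) i j := Finset.sum_comm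
  rw [expand]
  exact Finset.sum_nonneg fun l _ => aux (g l)

lemma E_smul_smul (c d : ℂ) (b b' : B) (v v' : V) :
    S.E (star (c • b) * (d • b')) v v' = (starRingEnd ℂ c * d) • S.E (star b * b') v v' := by
  rw [star_smul, smul_mul_assoc, mul_smul_comm, S.hlin.map_smul, S.hlin.map_smul, smul_smul,
    starRingEnd_apply]

lemma ip_self_nonneg (f : W B V) : 0 ≤ ip S f f := by
  classical
  set n := f.support.card with hn
  set e : Fin n ≃ {x // x ∈ f.support} := f.support.equivFin.symm with he
  set bb : Fin n → B := fun i => f (e i) • ((e i : B × V).1) with hbb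
  set vv : Fin n → V := fun i => ((e i : B × V)).2 with hvv
  have hmat := S.hcp n (Matrix.of fun i j => star (bb i) * bb j) (algPos_star_mul _) vv
  have hsum := algPos_sum_entries _ hmat
  have key : ip S f f
      = ∑ i, ∑ j, S.E ((Matrix.of fun i j => star (bb i) * bb j) i j) (vv i) (vv j) := by
    rw [ip_eq S (subset_refl _) (subset_refl _)]
    rw [← Finset.sum_coe_sort f.support, ← Equiv.sum_comp e]
    refine Finset.sum_congr rfl fun i _ => ?_
    rw [← Finset.sum_coe_sort f.support, ← Equiv.sum_comp e]
    refine Finset.sum_congr rfl fun j _ => ?_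
    rw [Matrix.of_apply, hbb, E_smul_smul]
    rfl
  rw [key]
  exact hsum

lemma ip_cs (x y : W B V) : star (ip S x y) * ip S x y ≤ ‖ip S x x‖ • ip S y y := by
  set a := ip S x y with ha
  set s : A := star a * a with hs
  set r := ‖ip S x x‖ with hr
  have hsnn : (0:A) ≤ s := star_mul_self_nonneg a
  have hZ : star a * (ip S x x * a) ≤ r • s := by
    have := CStarAlgebra.star_left_conjugate_le_norm_smul (a := a) (b := ip S x x)
      (ip_self_selfAdjoint S x)
    rwa [mul_assoc] at this
  have key2 : ∀ t : ℝ, 0 ≤ t → (2*t - t^2*r) • s ≤ ip S y y := by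
    intro t ht
    set u : W B V := ((t:ℂ)) • smW S a x with hu
    have h0 : (0:A) ≤ ip S (u - y) (u - y) := ip_self_nonneg S _
    have e0 : ip S (u - y) (u - y) = (ip S u u - ip S u y) - (ip S y u - ip S y y) := by
      rw [ip_sub_left, ip_sub_right, ip_sub_right]
    have e1 : ip S u u = (t*t) • (star a * (ip S x x * a)) := by
      rw [hu, ip_smul_left, ip_smul_right, ip_smW_left, ip_smW_right, smul_smul,
        Complex.conj_ofReal]
      norm_cast
    have e2 : ip S u y = t • s := by
      rw [hu, ip_smul_left, ip_smW_left, Complex.conj_ofReal, ← ha, ← hs]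
      norm_cast
    have e3 : ip S y u = t • s := by
      have hyx : ip S y x = star a := by rw [ha, ip_conj]
      rw [hu, ip_smul_right, ip_smW_right, hyx, ← hs]
      norm_cast
    rw [e0, e1, e2, e3] at h0
    have h4 : (t*t) • (star a * (ip S x x * a)) - t • s - (t • s - ip S y y)
        ≤ (t*t*r) • s - t • s - (t • s - ip S y y) := by
      have := smul_le_smul_of_nonneg_left hZ (mul_nonneg ht ht)
      rw [smul_smul] at this
      exact sub_le_sub_right (sub_le_sub_right this _) _
    have h5 : (0:A) ≤ (t*t*r) • s - t • s - (t • s - ip S y y) := le_trans h0 h4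
    rw [← sub_nonneg, sub_smul, two_mul, add_smul, pow_two]
    have : ip S y y - (t • s + t • s - (t*t*r) • s)
        = (t*t*r) • s - t • s - (t • s - ip S y y) := by abel
    rw [this]
    exact h5
  by_cases hr0 : r = 0
  · have hs0 : s = 0 := by
      by_contra hne
      have hspos : 0 < ‖s‖ := norm_pos_iff.mpr hne
      set t := (‖ip S y y‖ + 1) / (2 * ‖s‖) with htdef
      have ht : 0 ≤ t := by positivity
      have h3 := key2 t ht
      rw [hr0, mul_zero, sub_zero] at h3
      have h4 : ‖(2*t) • s‖ ≤ ‖ip S y y‖ :=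
        CStarAlgebra.norm_le_norm_of_nonneg_of_le (smul_nonneg (by positivity) hsnn) h3
      rw [norm_smul, Real.norm_of_nonneg (by positivity)] at h4
      rw [htdef] at h4
      have harith : (2 * ((‖ip S y y‖ + 1) / (2 * ‖s‖))) * ‖s‖ = ‖ip S y y‖ + 1 := by
        field_simp
      rw [harith] at h4
      linarith
    rw [hs0, hr0, zero_smul]
  · have hrpos : 0 < r := lt_of_le_of_ne (norm_nonneg _) (Ne.symm hr0)
    have h3 := key2 (1/r) (by positivity)
    have harith : 2*(1/r) - (1/r)^2*r = 1/r := by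
      field_simp
      ring
    rw [harith] at h3
    have h6 := smul_le_smul_of_nonneg_left h3 (le_of_lt hrpos)
    rwa [smul_smul, mul_one_div, div_self (ne_of_gt hrpos), one_smul] at h6

lemma ip_cs_norm (x y : W B V) : ‖ip S x y‖^2 ≤ ‖ip S x x‖ * ‖ip S y y‖ := by
  have h := ip_cs S x y
  have h1 : ‖star (ip S x y) * ip S x y‖ ≤ ‖‖ip S x x‖ • ip S y y‖ :=
    CStarAlgebra.norm_le_norm_of_nonneg_of_le (star_mul_self_nonneg _) h
  rw [CStarRing.norm_star_mul_self, norm_smul, Real.norm_of_nonneg (norm_nonneg _)] at h1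
  rw [pow_two]
  exact h1
lemma kern_pi_add (b b' : B) (p q : B × V) :
    kern S p ((b + b') * q.1, q.2) = kern S p (b * q.1, q.2) + kern S p (b' * q.1, q.2) := by
  simp only [kern, add_mul, mul_add]
  exact S.hlin.map_add _ _ _ _

lemma w_pi_add (b b' : B) (f g : W B V) :
    ip S g (piW (b + b') f) = ip S g (piW b f) + ip S g (piW b' f) := by
  simp only [piW, ip_mapDomain_right, ← Finset.sum_add_distrib]
  refine Finset.sum_congr rfl fun p _ => Finset.sum_congr rfl fun q _ => ?_
  rw [kern_pi_add, smul_add]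

lemma w_pi_smul (c : ℂ) (b : B) (f g : W B V) :
    ip S g (piW (c • b) f) = c • ip S g (piW b f) := by
  simp only [piW, ip_mapDomain_right, Finset.smul_sum]
  refine Finset.sum_congr rfl fun p _ => Finset.sum_congr rfl fun q _ => ?_
  rw [smul_comm]
  congr 1
  simp only [kern, smul_mul_assoc, mul_smul_comm]
  exact S.hlin.map_smul _ _ _ _

lemma w_sm_add (a a' : A) (f g : W B V) :
    ip S g (smW S (a + a') f) = ip S g (smW S a f) + ip S g (smW S a' f) := by
  simp only [smW, ip_mapDomain_right, ← Finset.sum_add_distrib]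
  refine Finset.sum_congr rfl fun p _ => Finset.sum_congr rfl fun q _ => ?_
  rw [← smul_add]
  congr 1
  have h1 := (S.hsesq (star p.1 * q.1)).sm_right p.2 q.2 (a + a')
  have h2 := (S.hsesq (star p.1 * q.1)).sm_right p.2 q.2 a
  have h3 := (S.hsesq (star p.1 * q.1)).sm_right p.2 q.2 a'
  simp only [kern]
  rw [h1, h2, h3, mul_add]

lemma w_sm_csmul (c : ℂ) (a : A) (f g : W B V) :
    ip S g (smW S (c • a) f) = c • ip S g (smW S a f) := by
  simp only [smW, ip_mapDomain_right, Finset.smul_sum]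
  refine Finset.sum_congr rfl fun p _ => Finset.sum_congr rfl fun q _ => ?_
  rw [smul_comm]
  congr 1
  have h1 := (S.hsesq (star p.1 * q.1)).sm_right p.2 q.2 (c • a)
  have h2 := (S.hsesq (star p.1 * q.1)).sm_right p.2 q.2 a
  simp only [kern]
  rw [h1, h2, mul_smul_comm]

lemma w_J_add (v v' : V) (g : W B V) :
    ip S g (JW (v + v')) = ip S g (JW v) + ip S g (JW v') := by
  simp only [JW, ip_single_right, ← Finset.sum_add_distrib]
  refine Finset.sum_congr rfl fun p _ => ?_
  rw [← smul_add]
  congr 1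
  simp only [kern]
  exact (S.hsesq _).sesq.add_right _ _ _

lemma w_J_smul (c : ℂ) (v : V) (g : W B V) :
    ip S g (JW (c • v)) = c • ip S g (JW v) := by
  simp only [JW, ip_single_right, Finset.smul_sum]
  refine Finset.sum_congr rfl fun p _ => ?_
  rw [smul_comm]
  congr 1
  simp only [kern]
  exact (S.hsesq _).sesq.smul_right _ _ _

/-- The null space. -/
def NN : Submodule ℂ (W B V) where
  carrier := {f | ∀ g, ip S g f = 0}
  add_mem' := fun {f f'} hf hf' g => by rw [ip_add_right, hf g, hf' g, add_zero]
  zero_mem' := fun g => ip_zero_right S g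
  smul_mem' := fun c f hf g => by rw [ip_smul_right, hf g, smul_zero]

lemma ip_right_of_mem {f : W B V} (h : f ∈ NN S) (g : W B V) : ip S g f = 0 := h g

lemma ip_left_of_mem {f : W B V} (h : f ∈ NN S) (g : W B V) : ip S f g = 0 := by
  have := ip_conj S g f
  rw [h g, star_zero] at this
  exact this.symm

lemma mem_NN_of_self {f : W B V} (h : ip S f f = 0) : f ∈ NN S := by
  intro g
  have h2 := ip_cs_norm S g f
  rw [h, norm_zero, mul_zero] at h2
  have h3 : ‖ip S g f‖ = 0 := by nlinarith [norm_nonneg (ip S g f)]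
  exact norm_eq_zero.mp h3

/-- The quotient pre-Hilbert module. -/
abbrev Q := (W B V) ⧸ (NN S)

def mkq : W B V → Q S := Submodule.Quotient.mk

lemma mkq_surjective : Function.Surjective (mkq S) := Submodule.Quotient.mk_surjective _

def ipQ : Q S → Q S → A := fun x y =>
  Quotient.liftOn₂' x y (ip S) (by
    intro a₁ a₂ b₁ b₂ h1 h2
    have h1' : a₁ - b₁ ∈ NN S := (Submodule.quotientRel_def _).mp h1
    have h2' : a₂ - b₂ ∈ NN S := (Submodule.quotientRel_def _).mp h2
    have k1 : ip S a₁ a₂ - ip S a₁ b₂ = 0 := by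
      rw [← ip_sub_right]; exact ip_right_of_mem S h2' a₁
    have k2 : ip S a₁ b₂ - ip S b₁ b₂ = 0 := by
      rw [← ip_sub_left]; exact ip_left_of_mem S h1' b₂
    have := sub_eq_zero.mp k1
    rw [this]
    exact sub_eq_zero.mp k2)

@[simp] lemma ipQ_mk (f g : W B V) : ipQ S (mkq S f) (mkq S g) = ip S f g := rfl

lemma mkq_add (f g : W B V) : mkq S (f + g) = mkq S f + mkq S g := rfl
lemma mkq_smul (c : ℂ) (f : W B V) : mkq S (c • f) = c • mkq S f := rfl

def smWL (a : A) : W B V →ₗ[ℂ] W B V := Finsupp.lmapDomain ℂ ℂ (fun p => (p.1, S.smV p.2 a))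

def piWL (b : B) : W B V →ₗ[ℂ] W B V :=
  Finsupp.lmapDomain ℂ ℂ (fun p : B × V => (b * p.1, p.2))

lemma smWL_apply (a : A) (f : W B V) : smWL S a f = smW S a f := rfl
lemma piWL_apply (b : B) (f : W B V) : piWL (B := B) (V := V) b f = piW b f := rfl

def smQ (a : A) : Q S →ₗ[ℂ] Q S :=
  Submodule.mapQ (NN S) (NN S) (smWL S a) (by
    intro f hf
    simp only [Submodule.mem_comap, smWL_apply]
    intro g
    rw [ip_smW_right, ip_right_of_mem S hf, zero_mul])

def piQ (b : B) : Q S →ₗ[ℂ] Q S :=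
  Submodule.mapQ (NN S) (NN S) (piWL b) (by
    intro f hf
    simp only [Submodule.mem_comap, piWL_apply]
    intro g
    have h1 := ip_conj S (piW b f) g
    rw [ip_piW_left, ip_left_of_mem S hf, star_zero] at h1
    exact h1.symm)

lemma smQ_mk (a : A) (f : W B V) : smQ S a (mkq S f) = mkq S (smW S a f) :=
  Submodule.mapQ_apply _ _ _ _

lemma piQ_mk (b : B) (f : W B V) : piQ S b (mkq S f) = mkq S (piW b f) :=
  Submodule.mapQ_apply _ _ _ _

def JQ (v : V) : Q S := mkq S (JW v)

instance : Inner A (Q S) := ⟨ipQ S⟩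

noncomputable instance : Norm (Q S) := ⟨fun x => Real.sqrt ‖ipQ S x x‖⟩

instance : SMul Aᵐᵒᵖ (Q S) := ⟨fun a x => smQ S a.unop x⟩

lemma op_smul_mk (a : A) (f : W B V) :
    (MulOpposite.op a) • (mkq S f) = mkq S (smW S a f) := smQ_mk S a f

def normQ_core : NormedSpace.Core ℂ (Q S) where
  norm_nonneg _ := Real.sqrt_nonneg _
  norm_eq_zero_iff x := by
    constructor
    · intro h
      obtain ⟨f, rfl⟩ := mkq_surjective S x
      have h1 : ‖ip S f f‖ = 0 :=
        le_antisymm (Real.sqrt_eq_zero'.mp h) (norm_nonneg _)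
      exact (Submodule.Quotient.mk_eq_zero _).mpr (mem_NN_of_self S (norm_eq_zero.mp h1))
    · rintro rfl
      show Real.sqrt ‖ipQ S (mkq S 0) (mkq S 0)‖ = 0
      rw [ipQ_mk, ip_zero_right, norm_zero, Real.sqrt_zero]
  norm_smul c x := by
    obtain ⟨f, rfl⟩ := mkq_surjective S x
    show Real.sqrt ‖ipQ S (mkq S (c • f)) (mkq S (c • f))‖
      = ‖c‖ * Real.sqrt ‖ipQ S (mkq S f) (mkq S f)‖
    rw [ipQ_mk, ipQ_mk, ip_smul_left, ip_smul_right, smul_smul, norm_smul, norm_mul,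
      Complex.norm_conj, ← pow_two, Real.sqrt_mul (by positivity), Real.sqrt_sq (norm_nonneg _)]
  norm_triangle x y := by
    obtain ⟨f, rfl⟩ := mkq_surjective S x
    obtain ⟨g, rfl⟩ := mkq_surjective S y
    show Real.sqrt ‖ip S (f + g) (f + g)‖ ≤ Real.sqrt ‖ip S f f‖ + Real.sqrt ‖ip S g g‖
    have ha := Real.sq_sqrt (norm_nonneg (ip S f f))
    have hb := Real.sq_sqrt (norm_nonneg (ip S g g))
    have e : ip S (f + g) (f + g) = (ip S f f + ip S f g) + (ip S g f + ip S g g) := by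
      rw [ip_add_left, ip_add_right, ip_add_right]
    have h1 : ‖ip S (f + g) (f + g)‖ ≤ ‖ip S f f‖ + ‖ip S f g‖ + (‖ip S g f‖ + ‖ip S g g‖) := by
      rw [e]
      exact le_trans (norm_add_le _ _)
        (add_le_add (norm_add_le _ _) (norm_add_le _ _))
    have h2 : ‖ip S f g‖ ≤ Real.sqrt ‖ip S f f‖ * Real.sqrt ‖ip S g g‖ := by
      refine (pow_le_pow_iff_left₀ (norm_nonneg _) (by positivity) (by norm_num : (2:ℕ) ≠ 0)).mp ?_
      rw [mul_pow, ha, hb]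
      exact ip_cs_norm S f g
    have h3 : ‖ip S g f‖ = ‖ip S f g‖ := by rw [← ip_conj, norm_star]
    have hab : 0 ≤ Real.sqrt ‖ip S f f‖ + Real.sqrt ‖ip S g g‖ := by positivity
    rw [← Real.sqrt_sq hab]
    apply Real.sqrt_le_sqrt
    nlinarith [h1, h2, h3, ha, hb]

noncomputable instance : NormedAddCommGroup (Q S) :=
  NormedAddCommGroup.ofCore (normQ_core S)

noncomputable instance : NormedSpace ℂ (Q S) :=
  NormedSpace.ofCore (normQ_core S)
lemma mkq_eq_of (f g : W B V) (h : ∀ w, ip S w f = ip S w g) : mkq S f = mkq S g := by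
  rw [mkq, Submodule.Quotient.eq]
  intro w
  rw [ip_sub_right, h w, sub_self]

lemma ipQ_add_right (x y z : Q S) : ipQ S x (y + z) = ipQ S x y + ipQ S x z := by
  obtain ⟨f, rfl⟩ := mkq_surjective S x
  obtain ⟨g, rfl⟩ := mkq_surjective S y
  obtain ⟨h, rfl⟩ := mkq_surjective S z
  rw [← mkq_add]
  exact ip_add_right S f g h

lemma ipQ_smul_right (c : ℂ) (x y : Q S) : ipQ S x (c • y) = c • ipQ S x y := by
  obtain ⟨f, rfl⟩ := mkq_surjective S x
  obtain ⟨g, rfl⟩ := mkq_surjective S y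
  rw [← mkq_smul]
  exact ip_smul_right S c f g

lemma ipQ_self_nonneg (x : Q S) : 0 ≤ ipQ S x x := by
  obtain ⟨f, rfl⟩ := mkq_surjective S x
  exact ip_self_nonneg S f

lemma normQ_sq (x : Q S) : ‖x‖^2 = ‖ipQ S x x‖ := by
  show Real.sqrt ‖ipQ S x x‖ ^ 2 = _
  exact Real.sq_sqrt (norm_nonneg _)

lemma normQ_inner_le (x y : Q S) : ‖ipQ S x y‖ ≤ ‖x‖ * ‖y‖ := by
  obtain ⟨f, rfl⟩ := mkq_surjective S x
  obtain ⟨g, rfl⟩ := mkq_surjective S y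
  refine (pow_le_pow_iff_left₀ (norm_nonneg _) (by positivity) (by norm_num : (2:ℕ) ≠ 0)).mp ?_
  rw [mul_pow, normQ_sq, normQ_sq, ipQ_mk, ipQ_mk, ipQ_mk]
  exact ip_cs_norm S f g

lemma piQ_add_b (b b' : B) (x : Q S) : piQ S (b + b') x = piQ S b x + piQ S b' x := by
  obtain ⟨f, rfl⟩ := mkq_surjective S x
  rw [piQ_mk, piQ_mk, piQ_mk, ← mkq_add]
  refine mkq_eq_of S _ _ fun w => ?_
  rw [ip_add_right, w_pi_add]

lemma piQ_smul_b (c : ℂ) (b : B) (x : Q S) : piQ S (c • b) x = c • piQ S b x := by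
  obtain ⟨f, rfl⟩ := mkq_surjective S x
  rw [piQ_mk, piQ_mk, ← mkq_smul]
  refine mkq_eq_of S _ _ fun w => ?_
  rw [ip_smul_right, w_pi_smul]

lemma piQ_mul_b (b b' : B) (x : Q S) : piQ S (b * b') x = piQ S b (piQ S b' x) := by
  obtain ⟨f, rfl⟩ := mkq_surjective S x
  rw [piQ_mk, piW_mul, ← piQ_mk, ← piQ_mk]

lemma piQ_one_q (x : Q S) : piQ S 1 x = x := by
  obtain ⟨f, rfl⟩ := mkq_surjective S x
  rw [piQ_mk, piW_one]

lemma piQ_adjoint (b : B) (x y : Q S) : ipQ S (piQ S b x) y = ipQ S x (piQ S (star b) y) := by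
  obtain ⟨f, rfl⟩ := mkq_surjective S x
  obtain ⟨g, rfl⟩ := mkq_surjective S y
  rw [piQ_mk, piQ_mk, ipQ_mk, ipQ_mk, ip_piW_left]

lemma smQ_add_a (a a' : A) (x : Q S) : smQ S (a + a') x = smQ S a x + smQ S a' x := by
  obtain ⟨f, rfl⟩ := mkq_surjective S x
  rw [smQ_mk, smQ_mk, smQ_mk, ← mkq_add]
  refine mkq_eq_of S _ _ fun w => ?_
  rw [ip_add_right, w_sm_add]

lemma smQ_csmul (c : ℂ) (a : A) (x : Q S) : smQ S (c • a) x = c • smQ S a x := by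
  obtain ⟨f, rfl⟩ := mkq_surjective S x
  rw [smQ_mk, smQ_mk, ← mkq_smul]
  refine mkq_eq_of S _ _ fun w => ?_
  rw [ip_smul_right, w_sm_csmul]

lemma smQ_mul (a a' : A) (x : Q S) : smQ S (a * a') x = smQ S a' (smQ S a x) := by
  obtain ⟨f, rfl⟩ := mkq_surjective S x
  rw [smQ_mk, smW_mul, ← smQ_mk, ← smQ_mk]

lemma ipQ_smQ_right (a : A) (x y : Q S) : ipQ S x (smQ S a y) = ipQ S x y * a := by
  obtain ⟨f, rfl⟩ := mkq_surjective S x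
  obtain ⟨g, rfl⟩ := mkq_surjective S y
  rw [smQ_mk, ipQ_mk, ipQ_mk, ip_smW_right]

lemma ipQ_conj (x y : Q S) : star (ipQ S x y) = ipQ S y x := by
  obtain ⟨f, rfl⟩ := mkq_surjective S x
  obtain ⟨g, rfl⟩ := mkq_surjective S y
  exact ip_conj S f g

lemma JQ_add (v v' : V) : JQ S (v + v') = JQ S v + JQ S v' := by
  rw [JQ, JQ, JQ, ← mkq_add]
  refine mkq_eq_of S _ _ fun w => ?_
  rw [ip_add_right, w_J_add]

lemma JQ_smul (c : ℂ) (v : V) : JQ S (c • v) = c • JQ S v := by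
  rw [JQ, JQ, ← mkq_smul]
  refine mkq_eq_of S _ _ fun w => ?_
  rw [ip_smul_right, w_J_smul]

lemma JQ_sm (a : A) (v : V) : JQ S (S.smV v a) = smQ S a (JQ S v) := by
  rw [JQ, JQ, JW_sm, ← smQ_mk]

lemma reproduceQ (b : B) (v v' : V) : ipQ S (JQ S v) (piQ S b (JQ S v')) = S.E b v v' := by
  rw [JQ, JQ, piQ_mk, ipQ_mk, ip_reproduce]

lemma piQ_pos (d : B) (x : Q S) : 0 ≤ ipQ S x (piQ S (star d * d) x) := by
  rw [piQ_mul_b]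
  have h := piQ_adjoint S d x (piQ S d x)
  rw [← h]
  exact ipQ_self_nonneg S _

lemma piQ_mono {c c' : B} (h : c ≤ c') (x : Q S) :
    ipQ S x (piQ S c x) ≤ ipQ S x (piQ S c' x) := by
  have hd : (0:B) ≤ c' - c := sub_nonneg.mpr h
  have hsq : star (CFC.sqrt (c' - c)) * CFC.sqrt (c' - c) = c' - c := by
    rw [(IsSelfAdjoint.of_nonneg (CFC.sqrt_nonneg _)).star_eq]
    exact CFC.sqrt_mul_sqrt_self _ hd
  have hpos := piQ_pos S (CFC.sqrt (c' - c)) x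
  rw [hsq] at hpos
  have hsplit : piQ S c' x = piQ S c x + piQ S (c' - c) x := by
    rw [← piQ_add_b, add_sub_cancel]
  rw [hsplit, ipQ_add_right]
  exact le_add_of_nonneg_right hpos

lemma piQ_bound (b : B) (x : Q S) : ‖piQ S b x‖ ≤ ‖b‖ * ‖x‖ := by
  have h1 : ipQ S (piQ S b x) (piQ S b x) = ipQ S x (piQ S (star b * b) x) := by
    rw [piQ_adjoint, ← piQ_mul_b]
  have h2 : star b * b ≤ algebraMap ℝ B (‖b‖^2) :=
    CStarAlgebra.star_mul_le_algebraMap_norm_sq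
  have h3 := piQ_mono S h2 x
  have h4 : ipQ S x (piQ S (algebraMap ℝ B (‖b‖^2)) x) = (‖b‖^2 : ℝ) • ipQ S x x := by
    rw [Algebra.algebraMap_eq_smul_one]
    have hc : (‖b‖^2 : ℝ) • (1:B) = ((‖b‖^2 : ℝ) : ℂ) • (1:B) := (Complex.coe_smul _ _).symm
    rw [hc, piQ_smul_b, piQ_one_q, ipQ_smul_right, Complex.coe_smul]
  have h5 : ‖piQ S b x‖^2 ≤ (‖b‖ * ‖x‖)^2 := by
    rw [normQ_sq, h1]
    calc ‖ipQ S x (piQ S (star b * b) x)‖ ≤ ‖(‖b‖^2 : ℝ) • ipQ S x x‖ := by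
          refine CStarAlgebra.norm_le_norm_of_nonneg_of_le (piQ_pos S b x) ?_
          rw [← h4]; exact h3
      _ = ‖b‖^2 * ‖ipQ S x x‖ := by
          rw [norm_smul, Real.norm_of_nonneg (by positivity)]
      _ = ‖b‖^2 * ‖x‖^2 := by rw [normQ_sq]
      _ = (‖b‖ * ‖x‖)^2 := by ring
  refine (pow_le_pow_iff_left₀ (norm_nonneg _) (by positivity) (by norm_num)).mp h5

lemma smQ_bound (a : A) (x : Q S) : ‖smQ S a x‖ ≤ ‖a‖ * ‖x‖ := by
  have h1 : ipQ S (smQ S a x) (smQ S a x) = star a * ipQ S x x * a := by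
    obtain ⟨f, rfl⟩ := mkq_surjective S x
    rw [smQ_mk, ipQ_mk, ipQ_mk, ip_smW_left, ip_smW_right, mul_assoc]
  have h2 : star a * ipQ S x x * a ≤ ‖ipQ S x x‖ • (star a * a) :=
    CStarAlgebra.star_left_conjugate_le_norm_smul (by
      rw [IsSelfAdjoint]; exact ipQ_conj S x x)
  have h5 : ‖smQ S a x‖^2 ≤ (‖a‖ * ‖x‖)^2 := by
    rw [normQ_sq, h1]
    calc ‖star a * ipQ S x x * a‖ ≤ ‖‖ipQ S x x‖ • (star a * a)‖ := by
          refine CStarAlgebra.norm_le_norm_of_nonneg_of_le ?_ h2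
          rw [← h1]; exact ipQ_self_nonneg S _
      _ = ‖ipQ S x x‖ * ‖star a * a‖ := by
          rw [norm_smul, Real.norm_of_nonneg (norm_nonneg _)]
      _ = ‖x‖^2 * (‖a‖ * ‖a‖) := by rw [normQ_sq, CStarRing.norm_star_mul_self]
      _ = (‖a‖ * ‖x‖)^2 := by ring
  refine (pow_le_pow_iff_left₀ (norm_nonneg _) (by positivity) (by norm_num)).mp h5
abbrev M := Completion (Q S)

instance : T2Space (M S) := inferInstance

def eQ : Q S →L[ℂ] M S := Completion.toComplL

lemma hdQ : DenseRange ⇑(eQ S) := Completion.denseRange_coe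

lemma huiQ : IsUniformInducing ⇑(eQ S) := Completion.isUniformInducing_coe _

def ext1 (f : Q S →L[ℂ] A) : M S →L[ℂ] A := f.extend (eQ S)

lemma ext1_coe (f : Q S →L[ℂ] A) (x : Q S) : ext1 S f (x : M S) = f x :=
  ContinuousLinearMap.extend_eq f (hdQ S) (huiQ S) x

lemma ext1_unique (f : Q S →L[ℂ] A) (g : M S →L[ℂ] A) (h : ∀ x : Q S, g ↑x = f x) :
    ext1 S f = g :=
  ContinuousLinearMap.extend_unique f (hdQ S) (huiQ S) g (by ext x; exact h x)

lemma ext1_add (f g : Q S →L[ℂ] A) : ext1 S (f + g) = ext1 S f + ext1 S g :=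
  (ext1_unique S (f + g) (ext1 S f + ext1 S g) (fun z => by
    simp [ext1_coe]))

lemma ext1_smul (c : ℂ) (f : Q S →L[ℂ] A) : ext1 S (c • f) = c • ext1 S f :=
  (ext1_unique S (c • f) (c • ext1 S f) (fun z => by simp [ext1_coe]))

def innerQL (x : Q S) : Q S →L[ℂ] A :=
  LinearMap.mkContinuous
    { toFun := fun y => ipQ S x y
      map_add' := ipQ_add_right S x
      map_smul' := fun c y => ipQ_smul_right S c x y }
    ‖x‖ (fun y => normQ_inner_le S x y)

lemma innerQL_add (x y : Q S) : innerQL S (x + y) = innerQL S x + innerQL S y := by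
  ext z
  show ipQ S (x + y) z = ipQ S x z + ipQ S y z
  obtain ⟨f, rfl⟩ := mkq_surjective S x
  obtain ⟨g, rfl⟩ := mkq_surjective S y
  obtain ⟨h, rfl⟩ := mkq_surjective S z
  rw [← mkq_add]
  exact ip_add_left S f g h

lemma innerQL_smul (c : ℂ) (x : Q S) : innerQL S (c • x) = starRingEnd ℂ c • innerQL S x := by
  ext z
  show ipQ S (c • x) z = starRingEnd ℂ c • ipQ S x z
  obtain ⟨f, rfl⟩ := mkq_surjective S x
  obtain ⟨h, rfl⟩ := mkq_surjective S z
  rw [← mkq_smul]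
  exact ip_smul_left S c f h

def innerM1 : Q S →ₗ⋆[ℂ] (M S →L[ℂ] A) where
  toFun x := ext1 S (innerQL S x)
  map_add' x y := by
    show ext1 S (innerQL S (x + y)) = _
    rw [innerQL_add, ext1_add]
  map_smul' c x := by
    show ext1 S (innerQL S (c • x)) = _
    rw [innerQL_smul, ext1_smul]

lemma innerM1_apply_coe (x z : Q S) : innerM1 S x (↑z : M S) = ipQ S x z := by
  show ext1 S (innerQL S x) ↑z = ipQ S x z
  rw [ext1_coe]
  rfl

lemma innerM1_bound (x : Q S) : ‖innerM1 S x‖ ≤ ‖x‖ := by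
  refine ContinuousLinearMap.opNorm_le_bound _ (norm_nonneg x) ?_
  have hcl : IsClosed {y : M S | ‖innerM1 S x y‖ ≤ ‖x‖ * ‖y‖} :=
    isClosed_le ((innerM1 S x).continuous.norm) (continuous_const.mul continuous_norm)
  refine isClosed_property (hdQ S) hcl fun z => ?_
  have h1 : innerM1 S x (eQ S z) = ipQ S x z := innerM1_apply_coe S x z
  rw [h1]
  have h2 : ‖(eQ S) z‖ = ‖z‖ := Completion.norm_coe z
  rw [h2]
  exact normQ_inner_le S x z

def innerM1c : Q S →SL[starRingEnd ℂ] (M S →L[ℂ] A) :=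
  LinearMap.mkContinuous (innerM1 S) 1 (fun x => by simpa using innerM1_bound S x)

lemma innerM1c_apply (x : Q S) : innerM1c S x = innerM1 S x := rfl

def innerM2 : M S →SL[starRingEnd ℂ] (M S →L[ℂ] A) :=
  (innerM1c S).extend (eQ S)

def innerM (x y : M S) : A := innerM2 S x y

lemma innerM_coe (x y : Q S) : innerM S ↑x ↑y = ipQ S x y := by
  rw [innerM]
  have h1 : innerM2 S ↑x = innerM1c S x :=
    ContinuousLinearMap.extend_eq _ (hdQ S) (huiQ S) x
  rw [h1, innerM1c_apply]
  exact innerM1_apply_coe S x y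

lemma continuous_innerM : Continuous (fun p : M S × M S => innerM S p.1 p.2) := by
  have h1 : Continuous fun p : M S × M S => ((innerM2 S p.1 : M S →L[ℂ] A), p.2) :=
    ((innerM2 S).continuous.comp continuous_fst).prodMk continuous_snd
  exact isBoundedBilinearMap_apply.continuous.comp h1

lemma continuous_innerM_left (y : M S) : Continuous (fun x : M S => innerM S x y) :=
  continuous_innerM S |>.comp (Continuous.prodMk continuous_id continuous_const)

lemma continuous_innerM_right (x : M S) : Continuous (fun y : M S => innerM S x y) :=
  (innerM2 S x).continuous

lemma innerM_add_right (x y z : M S) : innerM S x (y + z) = innerM S x y + innerM S x z :=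
  (innerM2 S x).map_add y z

lemma innerM_smul_right (c : ℂ) (x y : M S) : innerM S x (c • y) = c • innerM S x y :=
  (innerM2 S x).map_smul c y

lemma innerM_conj (x y : M S) : innerM S x y = star (innerM S y x) := by
  refine Completion.induction_on₂ x y ?_ ?_
  · exact isClosed_eq (continuous_innerM S)
      (continuous_star.comp ((continuous_innerM S).comp continuous_swap))
  · intro a b
    rw [innerM_coe, innerM_coe, ipQ_conj]

lemma innerM_self_nonneg (x : M S) : 0 ≤ innerM S x x := by
  refine Completion.induction_on x ?_ ?_
  · have : Continuous fun x : M S => innerM S x x :=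
      (continuous_innerM S).comp (Continuous.prodMk continuous_id continuous_id)
    exact IsClosed.preimage this CStarAlgebra.isClosed_nonneg
  · intro a
    rw [innerM_coe]
    exact ipQ_self_nonneg S a

lemma norm_innerM_self (x : M S) : ‖x‖^2 = ‖innerM S x x‖ := by
  refine Completion.induction_on x ?_ ?_
  · refine isClosed_eq (by fun_prop) ?_
    have : Continuous fun x : M S => innerM S x x :=
      (continuous_innerM S).comp (Continuous.prodMk continuous_id continuous_id)
    exact this.norm
  · intro a
    rw [innerM_coe, Completion.norm_coe]
    exact normQ_sq S a

lemma innerM_definite (x : M S) (h : innerM S x x = 0) : x = 0 := by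
  have h1 : ‖x‖^2 = 0 := by rw [norm_innerM_self, h, norm_zero]
  have h2 : ‖x‖ = 0 := by nlinarith [norm_nonneg x]
  exact norm_eq_zero.mp h2

def smM (a : A) : M S → M S := Completion.map (smQ S a)

def piM (b : B) : M S → M S := Completion.map (piQ S b)

def JM (v : V) : M S := ↑(JQ S v)

lemma smQ_uc (a : A) : UniformContinuous (smQ S a) :=
  (AddMonoidHomClass.lipschitz_of_bound (smQ S a).toAddMonoidHom ‖a‖
    (smQ_bound S a)).uniformContinuous

lemma piQ_uc (b : B) : UniformContinuous ⇑(piQ S b) :=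
  (AddMonoidHomClass.lipschitz_of_bound (piQ S b).toAddMonoidHom ‖b‖
    (piQ_bound S b)).uniformContinuous

lemma smM_coe (a : A) (x : Q S) : smM S a ↑x = ↑(smQ S a x) :=
  Completion.map_coe (smQ_uc S a) x

lemma piM_coe (b : B) (x : Q S) : piM S b ↑x = ↑(piQ S b x) :=
  Completion.map_coe (piQ_uc S b) x

lemma smM_continuous (a : A) : Continuous (smM S a) := Completion.continuous_map

lemma piM_continuous (b : B) : Continuous (piM S b) := Completion.continuous_map
lemma innerM_smM_right (a : A) (x y : M S) :
    innerM S x (smM S a y) = innerM S x y * a := by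
  refine Completion.induction_on₂ x y ?_ ?_
  · refine isClosed_eq ?_ ?_
    · exact (continuous_innerM S).comp
        (continuous_fst.prodMk ((smM_continuous S a).comp continuous_snd))
    · exact ((continuous_innerM S).comp (continuous_fst.prodMk continuous_snd)).mul
        continuous_const
  · intro p q
    rw [smM_coe, innerM_coe, innerM_coe, ipQ_smQ_right]

lemma innerM_piM_adjoint (b : B) (x y : M S) :
    innerM S (piM S b x) y = innerM S x (piM S (star b) y) := by
  refine Completion.induction_on₂ x y ?_ ?_
  · refine isClosed_eq ?_ ?_
    · exact (continuous_innerM S).comp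
        (((piM_continuous S b).comp continuous_fst).prodMk continuous_snd)
    · exact (continuous_innerM S).comp
        (continuous_fst.prodMk ((piM_continuous S (star b)).comp continuous_snd))
  · intro p q
    rw [piM_coe, piM_coe, innerM_coe, innerM_coe, piQ_adjoint]

lemma piM_add_b (b b' : B) (m : M S) :
    piM S (b + b') m = piM S b m + piM S b' m := by
  refine Completion.induction_on m ?_ ?_
  · exact isClosed_eq (piM_continuous S _)
      ((piM_continuous S b).add (piM_continuous S b'))
  · intro x
    rw [piM_coe, piM_coe, piM_coe, piQ_add_b, Completion.coe_add]

lemma piM_smul_b (c : ℂ) (b : B) (m : M S) :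
    piM S (c • b) m = c • piM S b m := by
  refine Completion.induction_on m ?_ ?_
  · exact isClosed_eq (piM_continuous S _)
      ((piM_continuous S b).const_smul c)
  · intro x
    rw [piM_coe, piM_coe, piQ_smul_b, Completion.coe_smul]

lemma piM_mul_b (b b' : B) (m : M S) :
    piM S (b * b') m = piM S b (piM S b' m) := by
  refine Completion.induction_on m ?_ ?_
  · exact isClosed_eq (piM_continuous S _)
      ((piM_continuous S b).comp (piM_continuous S b'))
  · intro x
    rw [piM_coe, piM_coe, piM_coe, piQ_mul_b]

lemma piM_one (m : M S) : piM S 1 m = m := by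
  refine Completion.induction_on m ?_ ?_
  · exact isClosed_eq (piM_continuous S _) continuous_id
  · intro x
    rw [piM_coe, piQ_one_q]

lemma smM_add_m (a : A) (m m' : M S) :
    smM S a (m + m') = smM S a m + smM S a m' := by
  refine Completion.induction_on₂ m m' ?_ ?_
  · refine isClosed_eq ((smM_continuous S a).comp continuous_add) ?_
    exact ((smM_continuous S a).comp continuous_fst).add
      ((smM_continuous S a).comp continuous_snd)
  · intro x y
    rw [← Completion.coe_add, smM_coe, smM_coe, smM_coe, map_add, Completion.coe_add]

lemma smM_smul_m (c : ℂ) (a : A) (m : M S) :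
    c • smM S a m = smM S a (c • m) := by
  refine Completion.induction_on m ?_ ?_
  · exact isClosed_eq ((smM_continuous S a).const_smul c)
      ((smM_continuous S a).comp (continuous_const_smul c))
  · intro x
    rw [smM_coe, ← Completion.coe_smul, ← Completion.coe_smul, smM_coe, map_smul]

lemma smM_add_a (a a' : A) (m : M S) :
    smM S (a + a') m = smM S a m + smM S a' m := by
  refine Completion.induction_on m ?_ ?_
  · exact isClosed_eq (smM_continuous S _)
      ((smM_continuous S a).add (smM_continuous S a'))
  · intro x
    rw [smM_coe, smM_coe, smM_coe, smQ_add_a, Completion.coe_add]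

lemma smM_csmul (c : ℂ) (a : A) (m : M S) :
    c • smM S a m = smM S (c • a) m := by
  refine Completion.induction_on m ?_ ?_
  · exact isClosed_eq ((smM_continuous S a).const_smul c) (smM_continuous S _)
  · intro x
    rw [smM_coe, smM_coe, smQ_csmul, Completion.coe_smul]

lemma smM_mul (a a' : A) (m : M S) :
    smM S (a * a') m = smM S a' (smM S a m) := by
  refine Completion.induction_on m ?_ ?_
  · exact isClosed_eq (smM_continuous S _)
      ((smM_continuous S a').comp (smM_continuous S a))
  · intro x
    rw [smM_coe, smM_coe, smM_coe, smQ_mul]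

lemma JM_add (v v' : V) : JM S (v + v') = JM S v + JM S v' := by
  rw [JM, JM, JM, JQ_add, Completion.coe_add]

lemma JM_smul (c : ℂ) (v : V) : JM S (c • v) = c • JM S v := by
  rw [JM, JM, JQ_smul, Completion.coe_smul]

lemma JM_sm (a : A) (v : V) : JM S (S.smV v a) = smM S a (JM S v) := by
  rw [JM, JM, JQ_sm, smM_coe]

lemma reproduceM (b : B) (v v' : V) :
    innerM S (JM S v) (piM S b (JM S v')) = S.E b v v' := by
  rw [JM, JM, piM_coe, innerM_coe, reproduceQ]

lemma coe_mem_span (x : Q S) :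
    (↑x : M S) ∈ Submodule.span ℂ {m : M S | ∃ b v, m = piM S b (JM S v)} := by
  obtain ⟨f, rfl⟩ := mkq_surjective S x
  induction f using Finsupp.induction with
  | zero =>
    have h1 : mkq S 0 = 0 := rfl
    rw [h1, Completion.coe_zero]
    exact Submodule.zero_mem _
  | single_add p c f hp hc ih =>
    rw [mkq_add, Completion.coe_add]
    refine Submodule.add_mem _ ?_ ih
    have h1 : Finsupp.single p c = c • Finsupp.single p (1:ℂ) := by
      rw [Finsupp.smul_single, smul_eq_mul, mul_one]
    rw [h1, mkq_smul, Completion.coe_smul]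
    refine Submodule.smul_mem _ _ (Submodule.subset_span ⟨p.1, p.2, ?_⟩)
    show ((mkq S (Finsupp.single p 1) : Q S) : M S) = piM S p.1 (JM S p.2)
    have h2 : Finsupp.single p (1:ℂ) = piW p.1 (JW p.2) := by
      rw [piW_JW]
    rw [h2, ← piQ_mk, JM, ← piM_coe]
    rfl
lemma completeM (u : ℕ → M S)
    (h : ∀ ε : ℝ, 0 < ε → ∃ N, ∀ j ≥ N, ∀ k ≥ N,
      ‖innerM S (u j - u k) (u j - u k)‖ < ε) :
    ∃ m, ∀ ε : ℝ, 0 < ε → ∃ N, ∀ k ≥ N, ‖innerM S (u k - m) (u k - m)‖ < ε := by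
  have hc : CauchySeq u := by
    refine Metric.cauchySeq_iff.mpr fun ε hε => ?_
    obtain ⟨N, hN⟩ := h (ε^2) (by positivity)
    refine ⟨N, fun j hj k hk => ?_⟩
    have h1 := hN j hj k hk
    rw [← norm_innerM_self] at h1
    have h2 : ‖u j - u k‖ < ε := by nlinarith [norm_nonneg (u j - u k)]
    rwa [dist_eq_norm]
  obtain ⟨m, hm⟩ := cauchySeq_tendsto_of_complete hc
  refine ⟨m, fun ε hε => ?_⟩
  obtain ⟨N, hN⟩ := (Metric.tendsto_atTop.mp hm) (Real.sqrt ε) (Real.sqrt_pos.mpr hε)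
  refine ⟨N, fun k hk => ?_⟩
  have h1 := hN k hk
  rw [dist_eq_norm] at h1
  rw [← norm_innerM_self]
  have h2 : ‖u k - m‖^2 < (Real.sqrt ε)^2 := by
    nlinarith [norm_nonneg (u k - m), Real.sqrt_nonneg ε]
  rwa [Real.sq_sqrt hε.le] at h2

def bigH : HilbertCStarModule A where
  M := M S
  grp := inferInstance
  modC := inferInstance
  sm m a := smM S a m
  rightModule :=
    { add_sm := fun v w a => smM_add_m S a v w
      sm_add := fun v a b => smM_add_a S a b v
      sm_mul := fun v a b => smM_mul S a b v
      smul_sm := fun c v a => smM_smul_m S c a v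
      sm_smul := fun c v a => smM_csmul S c a v }
  inner := innerM S
  inner_nonneg := innerM_self_nonneg S
  inner_definite := innerM_definite S
  inner_add_right := innerM_add_right S
  inner_smul_right := innerM_smul_right S
  inner_sm_right := fun m m' a => innerM_smM_right S a m m'
  inner_conj := fun m m' => innerM_conj S m m'
  complete := completeM S

lemma denseM : ∀ m : M S, ∀ ε : ℝ, 0 < ε →
    ∃ w ∈ (Submodule.span ℂ {m : M S | ∃ b v, m = piM S b (JM S v)} : Submodule ℂ (M S)),
      ‖innerM S (m - w) (m - w)‖ < ε := by
  intro m ε hε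
  have hd : DenseRange ((↑) : Q S → M S) := Completion.denseRange_coe
  obtain ⟨w, ⟨q, rfl⟩, hw⟩ :=
    Metric.mem_closure_iff.mp (hd m) (Real.sqrt ε) (Real.sqrt_pos.mpr hε)
  refine ⟨↑q, coe_mem_span S q, ?_⟩
  rw [← norm_innerM_self S (m - ↑q)]
  rw [dist_eq_norm] at hw
  have h2 : ‖m - (↑q : M S)‖^2 < (Real.sqrt ε)^2 := by
    nlinarith [norm_nonneg (m - (↑q : M S)), Real.sqrt_nonneg ε]
  rwa [Real.sq_sqrt hε.le] at h2
end KSGNS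
end
/-- The generalized KSGNS construction (Theorem 4.3 of the paper): every completely
positive map `E : B → S_A(V)`, with `B` a unital C*-algebra, has a minimal dilation
`(M, π, J)`. -/
theorem statement4 (B V : Type) [CStarAlgebra B]
    [AddCommGroup V] [Module ℂ V]
    (smV : V → A → V) (hV : IsRightModule A smV)
    (E : B → V → V → A) (hlin : IsLinearSesqValued E)
    (hsesq : ∀ b, IsASesq smV (E b)) (hcp : CompPos E) :
    ∃ (H : HilbertCStarModule A) (π : B → H.M → H.M) (J : V → H.M),
      IsStarHomIntoAdjointables H π ∧
      (∀ m, π 1 m = m) ∧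
      IsLinAMap smV H.sm J ∧
      (∀ b v v', E b v v' = H.inner (J v) (π b (J v'))) ∧
      DenseIn H (Submodule.span ℂ {m : H.M | ∃ b v, m = π b (J v)} : Submodule ℂ H.M) := by
  classical
  set S : KSGNS.Setting A B V := ⟨smV, E, hV, hlin, hsesq, hcp⟩ with hS
  refine ⟨KSGNS.bigH S, fun b m => KSGNS.piM S b m, fun v => KSGNS.JM S v,
    ⟨fun b m m' => KSGNS.innerM_piM_adjoint S b m m',
     fun b b' m => KSGNS.piM_add_b S b b' m,
     fun c b m => KSGNS.piM_smul_b S c b m,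
     fun b b' m => KSGNS.piM_mul_b S b b' m⟩,
    fun m => KSGNS.piM_one S m,
    ⟨fun v v' => KSGNS.JM_add S v v',
     fun c v => KSGNS.JM_smul S c v,
     fun v a => KSGNS.JM_sm S a v⟩,
    fun b v v' => (KSGNS.reproduceM S b v v').symm,
    KSGNS.denseM S⟩
end

section
/- Let A be a C*-algebra, V a right A-module, B a unital C*-algebra, and E : B → S_A(V) a completely positive map. Suppose (M,π,J) and (M',π',J') are two minimal dilations for E, i.e. M and M' are Hilbert C*-modules over A, π : B → L_A(M) and π' : B → L_A(M') are unital *-homomorphisms, J ∈ Lin_A(V,M) and J' ∈ Lin_A(V,M'), such that E(b)(v,v') = ⟨Jv | π(b)Jv'⟩ and E(b)(v,v') = ⟨J'v | π'(b)J'v'⟩ for all b ∈ B, v,v' ∈ V, and the ℂ-linear spans of {π(b)Jv : b ∈ B, v ∈ V} and of {π'(b)J'v : b ∈ B, v ∈ V} are dense in M and in M' respectively. Then there exists a unitary U : M → M' such that π'(b)∘U = U∘π(b) for all b ∈ B and J' = U∘J. -/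
variable (A : Type) [NonUnitalCStarAlgebra A] [PartialOrder A] [StarOrderedRing A]

variable {A}

noncomputable section Aux

open scoped ComplexOrder

namespace HCSM

variable {A : Type} [NonUnitalCStarAlgebra A] [PartialOrder A] [StarOrderedRing A]
variable (H : HilbertCStarModule A)

noncomputable instance instSMulOp : SMul Aᵐᵒᵖ H.M := ⟨fun a m => H.sm m a.unop⟩

noncomputable instance instNorm : Norm H.M := ⟨fun m => Real.sqrt ‖H.inner m m‖⟩

lemma inner_zero_right (m : H.M) : H.inner m 0 = 0 := by
  have h := H.inner_add_right m 0 0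
  rw [add_zero] at h
  exact (left_eq_add.mp h)

lemma inner_zero_left (m : H.M) : H.inner 0 m = 0 := by
  rw [H.inner_conj, inner_zero_right, star_zero]

noncomputable instance instCStarModule : CStarModule Aᵐᵒᵖ H.M where
  inner x y := MulOpposite.op (H.inner x y)
  inner_add_right {x y z} := by rw [H.inner_add_right, MulOpposite.op_add]
  inner_self_nonneg {x} := H.inner_nonneg x
  inner_self {x} := ⟨fun h => H.inner_definite x (MulOpposite.op_eq_zero_iff _ |>.mp h),
    fun h => by subst h; rw [inner_zero_right H 0, MulOpposite.op_zero]⟩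
  inner_op_smul_right {a x y} := by
    show MulOpposite.op (H.inner x (H.sm y a.unop)) = _
    rw [H.inner_sm_right, MulOpposite.op_mul, MulOpposite.op_unop]
  inner_smul_right_complex {z x y} := by
    show MulOpposite.op (H.inner x (z • y)) = _
    rw [H.inner_smul_right, MulOpposite.op_smul]
  star_inner x y := by
    show star (MulOpposite.op (H.inner x y)) = MulOpposite.op (H.inner y x)
    rw [← MulOpposite.op_star, ← H.inner_conj]
  norm_eq_sqrt_norm_inner_self x := rfl

lemma inner_eq (x y : H.M) : H.inner x y = (inner Aᵐᵒᵖ x y).unop := rfl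

noncomputable instance instNormedAddCommGroup : NormedAddCommGroup H.M :=
  NormedAddCommGroup.ofCore (CStarModule.normedSpaceCore Aᵐᵒᵖ)

noncomputable instance instNormedSpace : NormedSpace ℂ H.M :=
  NormedSpace.ofCore (CStarModule.normedSpaceCore Aᵐᵒᵖ)

lemma norm_def (m : H.M) : ‖m‖ = Real.sqrt ‖H.inner m m‖ := rfl

lemma norm_lt_iff (m : H.M) {ε : ℝ} (hε : 0 < ε) : ‖m‖ < ε ↔ ‖H.inner m m‖ < ε ^ 2 := by
  rw [norm_def]
  exact Real.sqrt_lt' hε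

instance instCompleteSpace : CompleteSpace H.M := by
  apply Metric.complete_of_cauchySeq_tendsto
  intro u hu
  have hc : ∀ ε : ℝ, 0 < ε → ∃ N, ∀ j ≥ N, ∀ k ≥ N,
      ‖H.inner (u j - u k) (u j - u k)‖ < ε := by
    intro ε hε
    obtain ⟨N, hN⟩ := Metric.cauchySeq_iff.mp hu (Real.sqrt ε) (Real.sqrt_pos.mpr hε)
    refine ⟨N, fun j hj k hk => ?_⟩
    have h := hN j hj k hk
    rw [dist_eq_norm] at h
    have h2 := (norm_lt_iff H _ (Real.sqrt_pos.mpr hε)).mp h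
    rwa [Real.sq_sqrt hε.le] at h2
  obtain ⟨m, hm⟩ := H.complete u hc
  refine ⟨m, Metric.tendsto_atTop.mpr fun ε hε => ?_⟩
  obtain ⟨N, hN⟩ := hm (ε ^ 2) (by positivity)
  exact ⟨N, fun k hk => by
    rw [dist_eq_norm]
    exact (norm_lt_iff H _ hε).mpr (hN k hk)⟩

/-- If `⟨y, x⟩ = ⟨z, x⟩` for all `x`, then `y = z`. -/
lemma ext_inner (y z : H.M) (h : ∀ x, H.inner y x = H.inner z x) : y = z := by
  have h2 : ∀ x, H.inner (y - z) x = 0 := by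
    intro x
    rw [inner_eq, CStarModule.inner_sub_left, MulOpposite.unop_sub, ← inner_eq, ← inner_eq,
      h x, sub_self]
  have := h2 (y - z)
  have := H.inner_definite _ this
  exact sub_eq_zero.mp this


section Ops

lemma inner_sm_left (m m' : H.M) (a : A) :
    H.inner (H.sm m a) m' = star a * H.inner m m' := by
  rw [H.inner_conj, H.inner_sm_right, star_mul, ← H.inner_conj]

lemma inner_add_left' (m m' x : H.M) :
    H.inner (m + m') x = H.inner m x + H.inner m' x := by
  rw [H.inner_conj, H.inner_add_right, star_add, ← H.inner_conj, ← H.inner_conj]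

lemma inner_smul_left' (c : ℂ) (m x : H.M) :
    H.inner (c • m) x = star c • H.inner m x := by
  rw [H.inner_conj, H.inner_smul_right, star_smul, ← H.inner_conj]

lemma inner_neg_right' (m y : H.M) : H.inner m (-y) = -H.inner m y := by
  have h := H.inner_add_right m y (-y)
  rw [add_neg_cancel, inner_zero_right] at h
  exact eq_neg_of_add_eq_zero_right h.symm

lemma inner_sub_right' (m x y : H.M) : H.inner m (x - y) = H.inner m x - H.inner m y := by
  rw [sub_eq_add_neg, H.inner_add_right, inner_neg_right', ← sub_eq_add_neg]

lemma sm_bound (a : A) (m : H.M) : ‖H.sm m a‖ ≤ ‖a‖ * ‖m‖ := by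
  have h1 : H.inner (H.sm m a) (H.sm m a) = star a * (H.inner m m * a) := by
    rw [inner_sm_left, H.inner_sm_right]
  have h2 : ‖H.inner (H.sm m a) (H.sm m a)‖ ≤ ‖a‖ * ‖a‖ * ‖H.inner m m‖ := by
    rw [h1]
    calc ‖star a * (H.inner m m * a)‖ ≤ ‖star a‖ * ‖H.inner m m * a‖ := norm_mul_le _ _
      _ ≤ ‖star a‖ * (‖H.inner m m‖ * ‖a‖) := by
          gcongr
          exact norm_mul_le _ _
      _ = ‖a‖ * ‖a‖ * ‖H.inner m m‖ := by rw [norm_star]; ring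
  rw [norm_def, norm_def]
  refine (Real.sqrt_le_sqrt h2).trans (le_of_eq ?_)
  rw [Real.sqrt_mul (by positivity), Real.sqrt_mul_self (norm_nonneg a)]

/-- The map `m ↦ m · a` as a continuous linear map. -/
noncomputable def smCLM (a : A) : H.M →L[ℂ] H.M :=
  LinearMap.mkContinuous
    { toFun := fun m => H.sm m a
      map_add' := fun m m' => H.rightModule.add_sm m m' a
      map_smul' := fun c m => (H.rightModule.smul_sm c m a).symm }
    ‖a‖ (sm_bound H a)

@[simp] lemma smCLM_apply (a : A) (m : H.M) : smCLM H a m = H.sm m a := rfl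

variable {B : Type} [CStarAlgebra B] {π : B → H.M → H.M}

lemma pi_add (hπ : IsStarHomIntoAdjointables H π) (b : B) (m m' : H.M) :
    π b (m + m') = π b m + π b m' := by
  apply ext_inner H
  intro x
  rw [hπ.adjoint, inner_add_left', ← hπ.adjoint, ← hπ.adjoint, inner_add_left']

lemma pi_smul (hπ : IsStarHomIntoAdjointables H π) (b : B) (c : ℂ) (m : H.M) :
    π b (c • m) = c • π b m := by
  apply ext_inner H
  intro x
  rw [hπ.adjoint, inner_smul_left', ← hπ.adjoint, inner_smul_left']

lemma pi_sm (hπ : IsStarHomIntoAdjointables H π) (b : B) (m : H.M) (a : A) :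
    π b (H.sm m a) = H.sm (π b m) a := by
  apply ext_inner H
  intro x
  rw [hπ.adjoint, inner_sm_left, inner_sm_left, hπ.adjoint]

lemma pi_bound (hπ : IsStarHomIntoAdjointables H π) (hπ1 : ∀ m, π 1 m = m) (b : B) (m : H.M) :
    ‖π b m‖ ≤ ‖b‖ * ‖m‖ := by
  letI : PartialOrder B := CStarAlgebra.spectralOrder B
  letI : StarOrderedRing B := CStarAlgebra.spectralOrderedRing B
  have hsa : IsSelfAdjoint (star b * b) := IsSelfAdjoint.star_mul_self b
  have h1 : star b * b ≤ algebraMap ℝ B ‖star b * b‖ :=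
    IsSelfAdjoint.le_algebraMap_norm_self hsa
  set r : ℝ := ‖star b * b‖ with hr
  have hx : (0 : B) ≤ algebraMap ℝ B r - star b * b := sub_nonneg.mpr h1
  set c : B := CFC.sqrt (algebraMap ℝ B r - star b * b) with hc
  have hcc : star c * c = algebraMap ℝ B r - star b * b := by
    have h2 : c * c = algebraMap ℝ B r - star b * b := CFC.sqrt_mul_sqrt_self _ hx
    have h3 : star c = c := (IsSelfAdjoint.of_nonneg (CFC.sqrt_nonneg _)).star_eq
    rw [h3, h2]
  have halg : algebraMap ℝ B r = (r : ℂ) • (1 : B) := by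
    rw [IsScalarTower.algebraMap_apply ℝ ℂ B, Algebra.algebraMap_eq_smul_one, Complex.coe_algebraMap]
  have e1 : H.inner (π b m) (π b m) = H.inner m (π (star b * b) m) := by
    rw [hπ.adjoint, ← hπ.map_mul]
  have h5 : π (star b * b) m = (r : ℂ) • m - π (star c * c) m := by
    have h4 : π (star b * b) m + π (star c * c) m = (r : ℂ) • m := by
      rw [← hπ.map_add, hcc, add_sub_cancel, halg, hπ.map_smul, hπ1]
    rw [eq_sub_iff_add_eq, h4]
  have e3 : H.inner m (π (star b * b) m)
      = (r : ℂ) • H.inner m m - H.inner (π c m) (π c m) := by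
    rw [h5]
    have : H.inner m (π (star c * c) m) = H.inner (π c m) (π c m) := by
      rw [hπ.adjoint, ← hπ.map_mul]
    rw [inner_sub_right', H.inner_smul_right, this]
  have hkey : H.inner (π b m) (π b m) ≤ r • H.inner m m := by
    rw [e1, e3]
    have hcoe : (r : ℂ) • H.inner m m = r • H.inner m m := Complex.coe_smul r _
    rw [hcoe]
    exact sub_le_self _ (H.inner_nonneg _)
  have hr0 : 0 ≤ r := norm_nonneg _
  have hnorm : ‖H.inner (π b m) (π b m)‖ ≤ r * ‖H.inner m m‖ := by
    calc ‖H.inner (π b m) (π b m)‖ ≤ ‖r • H.inner m m‖ :=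
          CStarAlgebra.norm_le_norm_of_nonneg_of_le (H.inner_nonneg _) hkey
      _ = |r| * ‖H.inner m m‖ := by rw [norm_smul, Real.norm_eq_abs]
      _ = r * ‖H.inner m m‖ := by rw [abs_of_nonneg hr0]
  rw [norm_def, norm_def]
  refine (Real.sqrt_le_sqrt hnorm).trans (le_of_eq ?_)
  rw [hr, CStarRing.norm_star_mul_self, Real.sqrt_mul (by positivity),
    Real.sqrt_mul_self (norm_nonneg b)]

/-- `π b` as a continuous linear map. -/
noncomputable def piCLM (hπ : IsStarHomIntoAdjointables H π) (hπ1 : ∀ m, π 1 m = m) (b : B) :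
    H.M →L[ℂ] H.M :=
  LinearMap.mkContinuous
    { toFun := π b
      map_add' := pi_add H hπ b
      map_smul' := fun c m => pi_smul H hπ b c m }
    ‖b‖ (pi_bound H hπ hπ1 b)

@[simp] lemma piCLM_apply (hπ : IsStarHomIntoAdjointables H π) (hπ1 : ∀ m, π 1 m = m) (b : B)
    (m : H.M) : piCLM H hπ hπ1 b m = π b m := rfl

lemma dense_of_denseIn (S : Set H.M) (h : DenseIn H S) : Dense S := by
  intro m
  rw [Metric.mem_closure_iff]
  intro ε hε
  obtain ⟨w, hw, hlt⟩ := h m (ε ^ 2) (by positivity)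
  exact ⟨w, hw, by rw [dist_eq_norm]; exact (norm_lt_iff H _ hε).mpr hlt⟩

end Ops

end HCSM

end Aux

open HCSM

/-- Uniqueness (up to a unitary) of minimal dilations of a completely positive map
`E : B → S_A(V)` for a unital C*-algebra `B`. -/
theorem statement5 (B V : Type) [CStarAlgebra B]
    [AddCommGroup V] [Module ℂ V]
    (smV : V → A → V) (hV : IsRightModule A smV)
    (E : B → V → V → A) (hlin : IsLinearSesqValued E)
    (hsesq : ∀ b, IsASesq smV (E b)) (hcp : CompPos E)
    (H H' : HilbertCStarModule A)
    (π : B → H.M → H.M) (π' : B → H'.M → H'.M) (J : V → H.M) (J' : V → H'.M)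
    (hπ : IsStarHomIntoAdjointables H π) (hπ' : IsStarHomIntoAdjointables H' π')
    (hπ1 : ∀ m, π 1 m = m) (hπ'1 : ∀ m, π' 1 m = m)
    (hJ : IsLinAMap smV H.sm J) (hJ' : IsLinAMap smV H'.sm J')
    (hE : ∀ b v v', E b v v' = H.inner (J v) (π b (J v')))
    (hE' : ∀ b v v', E b v v' = H'.inner (J' v) (π' b (J' v')))
    (hdense : DenseIn H (Submodule.span ℂ {m : H.M | ∃ b v, m = π b (J v)} : Submodule ℂ H.M))
    (hdense' :
      DenseIn H' (Submodule.span ℂ {m : H'.M | ∃ b v, m = π' b (J' v)} : Submodule ℂ H'.M)) :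
    ∃ U : H.M → H'.M, IsUnitary H H' U ∧
      (∀ b m, π' b (U m) = U (π b m)) ∧
      (∀ v, J' v = U (J v)) := by
  classical
  set S : Set H.M := {m : H.M | ∃ b v, m = π b (J v)} with hS
  set S' : Set H'.M := {m : H'.M | ∃ b v, m = π' b (J' v)} with hS'
  set g : B × V → H.M := fun p => π p.1 (J p.2) with hg
  set g' : B × V → H'.M := fun p => π' p.1 (J' p.2) with hg'
  have key_gen : ∀ p q : B × V, H.inner (g p) (g q) = H'.inner (g' p) (g' q) := by
    intro p q
    have h1 : H.inner (g p) (g q) = E (star p.1 * q.1) p.2 q.2 := by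
      rw [hE, hπ.map_mul, ← hπ.adjoint]
    have h2 : H'.inner (g' p) (g' q) = E (star p.1 * q.1) p.2 q.2 := by
      rw [hE', hπ'.map_mul, ← hπ'.adjoint]
    rw [h1, h2]
  set L : ((B × V) →₀ ℂ) →ₗ[ℂ] H.M := Finsupp.linearCombination ℂ g with hL
  set L' : ((B × V) →₀ ℂ) →ₗ[ℂ] H'.M := Finsupp.linearCombination ℂ g' with hL'
  have hLsingle : ∀ p : B × V, L (Finsupp.single p 1) = g p := by
    intro p
    rw [hL, Finsupp.linearCombination_single, one_smul]
  have hL'single : ∀ p : B × V, L' (Finsupp.single p 1) = g' p := by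
    intro p
    rw [hL', Finsupp.linearCombination_single, one_smul]
  have key : ∀ x y : (B × V) →₀ ℂ, H.inner (L x) (L y) = H'.inner (L' x) (L' y) := by
    intro x y
    induction x using Finsupp.induction_linear with
    | zero => rw [map_zero, map_zero, HCSM.inner_zero_left H, HCSM.inner_zero_left H']
    | add f f2 hf hf2 =>
        rw [map_add, map_add, inner_add_left', inner_add_left', hf, hf2]
    | single p c =>
        induction y using Finsupp.induction_linear with
        | zero => rw [map_zero, map_zero, HCSM.inner_zero_right H, HCSM.inner_zero_right H']
        | add f f2 hf hf2 =>
            rw [map_add, map_add, H.inner_add_right, H'.inner_add_right, hf, hf2]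
        | single q d =>
            rw [hL, hL', Finsupp.linearCombination_single, Finsupp.linearCombination_single,
              Finsupp.linearCombination_single, Finsupp.linearCombination_single,
              inner_smul_left', inner_smul_left', H.inner_smul_right, H'.inner_smul_right,
              key_gen p q]
  set R : Submodule ℂ H.M := LinearMap.range L with hR
  have hrange : Set.range g = S := by
    ext m
    constructor
    · rintro ⟨⟨b, v⟩, rfl⟩; exact ⟨b, v, rfl⟩
    · rintro ⟨b, v, h⟩; exact ⟨(b, v), h.symm⟩
  have hRspan : R = Submodule.span ℂ S := by
    rw [hR, hL, Finsupp.range_linearCombination, hrange]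
  have hDense : Dense (R : Set H.M) := by
    rw [hRspan]
    exact dense_of_denseIn H _ hdense
  have hker : LinearMap.ker L ≤ LinearMap.ker L' := by
    intro x hx
    rw [LinearMap.mem_ker] at hx ⊢
    refine H'.inner_definite _ ?_
    rw [← key, hx, HCSM.inner_zero_left H]
  set T0 : R →ₗ[ℂ] H'.M :=
    (Submodule.liftQ (LinearMap.ker L) L' hker).comp
      ((LinearMap.quotKerEquivRange L).symm : R →ₗ[ℂ] ((B × V) →₀ ℂ) ⧸ LinearMap.ker L)
    with hT0def
  have hT0 : ∀ x : (B × V) →₀ ℂ, T0 ⟨L x, LinearMap.mem_range_self L x⟩ = L' x := by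
    intro x
    have h1 : (LinearMap.quotKerEquivRange L).symm ⟨L x, LinearMap.mem_range_self L x⟩
        = Submodule.Quotient.mk x := by
      rw [LinearEquiv.symm_apply_eq]
      exact Subtype.ext (LinearMap.quotKerEquivRange_apply_mk L x).symm
    rw [hT0def]
    simp only [LinearMap.coe_comp, LinearEquiv.coe_coe, Function.comp_apply, h1,
      Submodule.liftQ_apply]
  have hT0' : ∀ w : R, ∃ x, L x = (w : H.M) ∧ T0 w = L' x := by
    rintro ⟨w, hw⟩
    obtain ⟨x, rfl⟩ := hw
    exact ⟨x, rfl, hT0 x⟩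
  have hT0inner : ∀ w w2 : R, H'.inner (T0 w) (T0 w2) = H.inner (w : H.M) (w2 : H.M) := by
    intro w w2
    obtain ⟨x, hx, hx2⟩ := hT0' w
    obtain ⟨y, hy, hy2⟩ := hT0' w2
    rw [hx2, hy2, ← key, hx, hy]
  have hT0norm : ∀ w : R, ‖T0 w‖ = ‖w‖ := by
    intro w
    rw [norm_def, hT0inner, show ‖w‖ = ‖(w : H.M)‖ from rfl, norm_def]
  set T0c : R →L[ℂ] H'.M := LinearMap.mkContinuous T0 1
    (fun w => by rw [hT0norm, one_mul]) with hT0c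
  have hT0capp : ∀ w : R, T0c w = T0 w := fun w => rfl
  set e : R →L[ℂ] H.M := R.subtypeL with he
  have heiso : Isometry (e : R → H.M) := isometry_subtype_coe
  have hed : DenseRange (e : R → H.M) := by
    have hre : Set.range (e : R → H.M) = (R : Set H.M) := Subtype.range_coe
    rw [DenseRange, hre]
    exact hDense
  set U : H.M →L[ℂ] H'.M := T0c.extend e with hUdef
  have hUe : ∀ w : R, U (w : H.M) = T0 w := by
    intro w
    have h1 := ContinuousLinearMap.extend_eq T0c hed heiso.isUniformInducing w
    rw [hUdef]
    exact h1
  have hUgen : ∀ (b : B) (v : V), U (π b (J v)) = π' b (J' v) := by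
    intro b v
    have hmem : π b (J v) ∈ R := ⟨Finsupp.single (b, v) 1, hLsingle (b, v)⟩
    have h1 : U (π b (J v)) = T0 ⟨π b (J v), hmem⟩ := hUe ⟨π b (J v), hmem⟩
    have h2 : T0 ⟨π b (J v), hmem⟩ = L' (Finsupp.single (b, v) 1) := by
      have h3 := hT0 (Finsupp.single (b, v) 1)
      have h4 : (⟨π b (J v), hmem⟩ : R)
          = ⟨L (Finsupp.single (b, v) 1), LinearMap.mem_range_self L _⟩ :=
        Subtype.ext (hLsingle (b, v)).symm
      rw [h4, h3]
    rw [h1, h2, hL'single]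
  have hUinner : ∀ m m2 : H.M, H'.inner (U m) (U m2) = H.inner m m2 := by
    have hcont1 : Continuous fun p : H.M × H.M => H'.inner (U p.1) (U p.2) := by
      have hc : Continuous fun p : H'.M × H'.M => H'.inner p.1 p.2 :=
        MulOpposite.continuous_unop.comp (CStarModule.continuous_inner (A := Aᵐᵒᵖ))
      exact hc.comp ((U.continuous.comp continuous_fst).prodMk
        (U.continuous.comp continuous_snd))
    have hcont2 : Continuous fun p : H.M × H.M => H.inner p.1 p.2 :=
      MulOpposite.continuous_unop.comp (CStarModule.continuous_inner (A := Aᵐᵒᵖ))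
    have heqon : Set.EqOn (fun p : H.M × H.M => H'.inner (U p.1) (U p.2))
        (fun p : H.M × H.M => H.inner p.1 p.2) ((R : Set H.M) ×ˢ (R : Set H.M)) := by
      rintro ⟨m, m2⟩ ⟨hm, hm2⟩
      show H'.inner (U m) (U m2) = H.inner m m2
      rw [hUe ⟨m, hm⟩, hUe ⟨m2, hm2⟩, hT0inner]
    have hfg := Continuous.ext_on (hDense.prod hDense) hcont1 hcont2 heqon
    intro m m2
    exact congrFun hfg (m, m2)
  have hUnorm : ∀ m, ‖U m‖ = ‖m‖ := by
    intro m
    rw [norm_def, norm_def, hUinner]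
  have hUiso : Isometry (U : H.M → H'.M) := AddMonoidHomClass.isometry_of_norm U hUnorm
  have hinj : Function.Injective (U : H.M → H'.M) := hUiso.injective
  have hDense' : Dense ((Submodule.span ℂ S' : Submodule ℂ H'.M) : Set H'.M) :=
    dense_of_denseIn H' _ hdense'
  have hsurj : Function.Surjective (U : H.M → H'.M) := by
    have hclosed : IsClosed (Set.range (U : H.M → H'.M)) :=
      hUiso.isClosedEmbedding.isClosed_range
    have hsub : ((Submodule.span ℂ S' : Submodule ℂ H'.M) : Set H'.M)
        ⊆ Set.range (U : H.M → H'.M) := by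
      have h1 : S' ⊆ Set.range (U : H.M → H'.M) := by
        rintro m ⟨b, v, rfl⟩
        exact ⟨π b (J v), hUgen b v⟩
      have h2 : Submodule.span ℂ S' ≤ LinearMap.range (U : H.M →ₗ[ℂ] H'.M) := by
        apply Submodule.span_le.mpr
        intro m hm
        obtain ⟨x, hx⟩ := h1 hm
        exact ⟨x, hx⟩
      intro m hm
      obtain ⟨x, hx⟩ := h2 hm
      exact ⟨x, hx⟩
    intro m'
    have h3 : m' ∈ closure ((Submodule.span ℂ S' : Submodule ℂ H'.M) : Set H'.M) := hDense' m'
    have h4 : m' ∈ closure (Set.range (U : H.M → H'.M)) := closure_mono hsub h3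
    rwa [hclosed.closure_eq] at h4
  have hDenseSpan : Dense ((Submodule.span ℂ S : Submodule ℂ H.M) : Set H.M) := by
    rw [← hRspan]; exact hDense
  have hint : ∀ b m, π' b (U m) = U (π b m) := by
    intro b m
    have hfg : (piCLM H' hπ' hπ'1 b).comp U = U.comp (piCLM H hπ hπ1 b) := by
      refine ContinuousLinearMap.ext_on hDenseSpan ?_
      rintro m0 ⟨c, v, rfl⟩
      show π' b (U (π c (J v))) = U (π b (π c (J v)))
      rw [hUgen c v, ← hπ'.map_mul, ← hπ.map_mul, hUgen (b * c) v]
    have := ContinuousLinearMap.ext_iff.mp hfg m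
    simpa using this
  have hsm : ∀ m a, U (H.sm m a) = H'.sm (U m) a := by
    intro m a
    have hfg : U.comp (smCLM H a) = (smCLM H' a).comp U := by
      refine ContinuousLinearMap.ext_on hDenseSpan ?_
      rintro m0 ⟨c, v, rfl⟩
      show U (H.sm (π c (J v)) a) = H'.sm (U (π c (J v))) a
      rw [← pi_sm H hπ, ← hJ.map_sm, hUgen, hJ'.map_sm, pi_sm H' hπ', hUgen]
    have := ContinuousLinearMap.ext_iff.mp hfg m
    simpa using this
  refine ⟨U, ⟨⟨hinj, hsurj⟩, ⟨fun v w => map_add U v w, fun c v => map_smul U c v, hsm⟩,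
    hUinner⟩, hint, fun v => ?_⟩
  rw [← hπ'1 (J' v), ← hUgen 1 v, hπ1]
end

section
/- Let A and B be *-algebras, V a complex vector space, and E : B → S_ℂ(V;A) a ℂ-linear map. Then E is completely positive if and only if the map Ẽ : B × B → S_ℂ(V;A) defined by Ẽ(b,b') = E(b*b') is a positive-definite kernel on the set B. -/
lemma algPos_zero {A : Type} [NonUnitalNonAssocSemiring A] [Star A] : AlgPos (0 : A) :=
  ⟨0, ![], by simp⟩

lemma algPos_add {A : Type} [NonUnitalNonAssocSemiring A] [Star A] {a b : A}
    (ha : AlgPos a) (hb : AlgPos b) : AlgPos (a + b) := by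
  obtain ⟨k, f, rfl⟩ := ha
  obtain ⟨k', f', rfl⟩ := hb
  exact ⟨k + k', Fin.append f f', by simp [Fin.sum_univ_add]⟩

lemma algPos_sum {A : Type} [NonUnitalNonAssocSemiring A] [Star A] {ι : Type}
    (s : Finset ι) (g : ι → A) (h : ∀ i ∈ s, AlgPos (g i)) : AlgPos (∑ i ∈ s, g i) := by
  classical
  induction s using Finset.induction with
  | empty => simpa using algPos_zero
  | insert _ _ hns ih =>
    rw [Finset.sum_insert hns]
    exact algPos_add (h _ (Finset.mem_insert_self _ _))
      (ih fun i hi => h i (Finset.mem_insert_of_mem hi))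

/-- A ℂ-linear map `E : B → S_ℂ(V;A)` between *-algebras is completely positive if and
only if the kernel `Ẽ(b,b') = E(b* b')` on `B × B` is positive definite. -/
theorem statement12 (A B V : Type)
    [NonUnitalRing A] [Module ℂ A] [StarRing A] [StarModule ℂ A]
    [SMulCommClass ℂ A A] [IsScalarTower ℂ A A]
    [NonUnitalRing B] [Module ℂ B] [StarRing B] [StarModule ℂ B]
    [SMulCommClass ℂ B B] [IsScalarTower ℂ B B]
    [AddCommGroup V] [Module ℂ V]
    (E : B → V → V → A) (hlin : IsLinearSesqValued E)
    (hsesq : ∀ b, IsSesq (E b)) :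
    CompPos E ↔ KernelPosDef (fun b b' : B => E (star b * b')) := by
  constructor
  · intro hcp n x v
    have hb : AlgPos (Matrix.of fun i j => star (x i) * x j) := by
      refine ⟨1, ![Matrix.of fun i j => if (i : ℕ) = 0 then x j else 0], ?_⟩
      ext i j
      have hn : 0 < n := i.pos
      simp only [Fin.sum_univ_one, Matrix.cons_val_zero, Matrix.mul_apply,
        Matrix.star_apply, Matrix.of_apply]
      have : ∀ l : Fin n,
          star (if (l : ℕ) = 0 then x i else 0) * (if (l : ℕ) = 0 then x j else 0)
          = if l = (⟨0, hn⟩ : Fin n) then star (x i) * x j else 0 := by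
        intro l
        by_cases h : (l : ℕ) = 0 <;> simp [h, Fin.ext_iff]
      simp [this]
    exact hcp n _ hb v
  · intro hk n b hb v
    obtain ⟨k, f, rfl⟩ := hb
    have hE0 : ∀ v v', E 0 v v' = 0 := by
      intro v v'
      have := hlin.map_smul 0 0 v v'
      simpa using this
    have hEsum : ∀ {ι : Type} (s : Finset ι) (g : ι → B) (v v' : V),
        E (∑ m ∈ s, g m) v v' = ∑ m ∈ s, E (g m) v v' := by
      classical
      intro ι s g v v'
      induction s using Finset.induction with
      | empty => simpa using hE0 v v'
      | insert _ _ hns ih => rw [Finset.sum_insert hns, hlin.map_add, ih, Finset.sum_insert hns]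
    have key : (Matrix.of fun i j => E ((∑ m, star (f m) * f m) i j) (v i) (v j))
        = ∑ m : Fin k, ∑ l : Fin n,
            (Matrix.of fun i j => E (star (f m l i) * f m l j) (v i) (v j)) := by
      ext i j
      simp only [Matrix.of_apply, Matrix.sum_apply, Matrix.mul_apply, Matrix.star_apply]
      rw [hEsum]
      refine Finset.sum_congr rfl fun m _ => ?_
      rw [hEsum]
    rw [key]
    refine algPos_sum _ _ fun m _ => algPos_sum _ _ fun l _ => ?_
    exact hk n (fun i => f m l i) v
end
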